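/- arXiv:math/9807026 — 6 statements merged into one kernel-verified Lean document; each statement's English description precedes it below -/
import Mathlib

section
/- Let A, B be real n×n matrices satisfying: (c1) A is entrywise nonnegative, (c2) B_{ij} ≤ A_{ij} for all i ≠ j, and (c3) there exists an entrywise positive vector u with (B−A)u entrywise positive. Set μ = ρ((B−A)⁻¹A) and ρ(A,B) = μ/(1+μ). Then ρ(A,B) ∈ [0,1), ρ(A,B) is an eigenvalue of the pencil (A,B), and every real eigenvalue λ of (A,B) with λ ∈ [0,1) satisfies λ ≤ ρ(A,B). -/
open Matrix

/-- Spectral radius of a real matrix: supremum of the absolute values of its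
complex eigenvalues. -/
noncomputable def specRad {m : Type*} [Fintype m] [DecidableEq m] (M : Matrix m m ℝ) : ℝ :=
  sSup ((fun z : ℂ => ‖z‖) '' spectrum ℂ (M.map (algebraMap ℝ ℂ)))

/-- Principal submatrix of `A` with rows and columns indexed by `J`. -/
def subm {n : ℕ} (A : Matrix (Fin n) (Fin n) ℝ) (J : Finset (Fin n)) :
    Matrix {i // i ∈ J} {i // i ∈ J} ℝ :=
  A.submatrix Subtype.val Subtype.val

/-- `X` is an M-matrix: `X = q•I − P` with `P ≥ 0` and `q ≥ ρ(P)`. -/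
def IsMMatrix {m : Type*} [Fintype m] [DecidableEq m] (X : Matrix m m ℝ) : Prop :=
  ∃ q : ℝ, ∃ P : Matrix m m ℝ, (∀ i j, 0 ≤ P i j) ∧ X = q • 1 - P ∧ specRad P ≤ q

/-- `X` is a nonsingular M-matrix: `X = q•I − P` with `P ≥ 0` and `q > ρ(P)`. -/
def IsNonsingMMatrix {m : Type*} [Fintype m] [DecidableEq m] (X : Matrix m m ℝ) : Prop :=
  ∃ q : ℝ, ∃ P : Matrix m m ℝ, (∀ i j, 0 ≤ P i j) ∧ X = q • 1 - P ∧ specRad P < q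

namespace PFaux

variable {n : ℕ}

lemma mulVec_apply' {R : Type*} [NonUnitalNonAssocSemiring R]
    (M : Matrix (Fin n) (Fin n) R) (v : Fin n → R) (i : Fin n) :
    (M *ᵥ v) i = ∑ j, M i j * v j := rfl

/-- Collatz–Wielandt set of a matrix. -/
def cwSet (M : Matrix (Fin n) (Fin n) ℝ) : Set ℝ :=
  {t | ∃ x ∈ stdSimplex ℝ (Fin n), ∀ i, t * x i ≤ M.mulVec x i}

lemma simplex_exists_pos {x : Fin n → ℝ} (hx : x ∈ stdSimplex ℝ (Fin n)) : ∃ j, 0 < x j := by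
  by_contra h
  push_neg at h
  have hs : ∑ i, x i ≤ 0 := Finset.sum_nonpos fun i _ => h i
  rw [hx.2] at hs; linarith

lemma simplex_ne_zero {x : Fin n → ℝ} (hx : x ∈ stdSimplex ℝ (Fin n)) : x ≠ 0 := by
  obtain ⟨j, hj⟩ := simplex_exists_pos hx
  intro h
  rw [h] at hj
  simp at hj

lemma mem_cwSet (M : Matrix (Fin n) (Fin n) ℝ) {t : ℝ} {w : Fin n → ℝ}
    (hw0 : ∀ i, 0 ≤ w i) (hwne : w ≠ 0) (h : ∀ i, t * w i ≤ M.mulVec w i) :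
    t ∈ cwSet M := by
  have hspos : 0 < ∑ i, w i := by
    rcases Function.ne_iff.mp hwne with ⟨j, hj⟩
    have hwj : 0 < w j := lt_of_le_of_ne (hw0 j) (by simpa [eq_comm] using hj)
    exact Finset.sum_pos' (fun i _ => hw0 i) ⟨j, Finset.mem_univ j, hwj⟩
  set s := ∑ i, w i with hs
  refine ⟨s⁻¹ • w, ⟨fun i => by simpa using mul_nonneg (inv_nonneg.2 hspos.le) (hw0 i), ?_⟩, fun i => ?_⟩
  · simp only [Pi.smul_apply, smul_eq_mul, ← Finset.mul_sum, ← hs]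
    exact inv_mul_cancel₀ hspos.ne'
  · rw [mulVec_smul]
    simp only [Pi.smul_apply, smul_eq_mul]
    have := mul_le_mul_of_nonneg_left (h i) (inv_nonneg.mpr hspos.le)
    nlinarith [this]

lemma zero_mem_cwSet (hn : 0 < n) (M : Matrix (Fin n) (Fin n) ℝ) (hM : ∀ i j, 0 ≤ M i j) :
    (0:ℝ) ∈ cwSet M := by
  refine ⟨Pi.single ⟨0, hn⟩ 1, single_mem_stdSimplex ℝ _, fun i => ?_⟩
  rw [zero_mul, mulVec_apply']
  refine Finset.sum_nonneg fun j _ => mul_nonneg (hM i j) ?_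
  rcases eq_or_ne j (⟨0, hn⟩ : Fin n) with h | h <;> simp [Pi.single_apply, h]

lemma cwSet_le_bound {M : Matrix (Fin n) (Fin n) ℝ} (hM : ∀ i j, 0 ≤ M i j)
    {t : ℝ} (ht : t ∈ cwSet M) : t ≤ ∑ i, ∑ j, M i j := by
  obtain ⟨x, hx, hineq⟩ := ht
  obtain ⟨j0, hj0⟩ := simplex_exists_pos hx
  obtain ⟨i, -, hmax⟩ := Finset.exists_max_image Finset.univ x ⟨j0, Finset.mem_univ _⟩
  have hxi : 0 < x i := lt_of_lt_of_le hj0 (hmax j0 (Finset.mem_univ _))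
  have h1 : t * x i ≤ (∑ k, ∑ j, M k j) * x i := by
    refine le_trans (hineq i) ?_
    rw [mulVec_apply']
    calc ∑ j, M i j * x j ≤ ∑ j, M i j * x i :=
          Finset.sum_le_sum fun j _ => mul_le_mul_of_nonneg_left (hmax j (Finset.mem_univ _)) (hM i j)
      _ = (∑ j, M i j) * x i := by rw [Finset.sum_mul]
      _ ≤ (∑ k, ∑ j, M k j) * x i := by
          refine mul_le_mul_of_nonneg_right ?_ hxi.le
          exact Finset.single_le_sum (f := fun k => ∑ j, M k j)
            (fun k _ => Finset.sum_nonneg fun j _ => hM k j) (Finset.mem_univ i)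
  exact le_of_mul_le_mul_right h1 hxi

lemma cwSet_mono {M M' : Matrix (Fin n) (Fin n) ℝ} (h : ∀ i j, M i j ≤ M' i j) :
    cwSet M ⊆ cwSet M' := by
  rintro t ⟨x, hx, hineq⟩
  refine ⟨x, hx, fun i => le_trans (hineq i) ?_⟩
  rw [mulVec_apply', mulVec_apply']
  exact Finset.sum_le_sum fun j _ => mul_le_mul_of_nonneg_right (h i j) (hx.1 j)



open Filter Topology

lemma csSup_cwSet_attained (hn : 0 < n) (M : Matrix (Fin n) (Fin n) ℝ)
    (hM : ∀ i j, 0 ≤ M i j) :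
    ∃ x ∈ stdSimplex ℝ (Fin n), ∀ i, sSup (cwSet M) * x i ≤ M.mulVec x i := by
  set r := sSup (cwSet M) with hr
  have hne : (cwSet M).Nonempty := ⟨0, zero_mem_cwSet hn M hM⟩
  have hbdd : BddAbove (cwSet M) := ⟨_, fun t ht => cwSet_le_bound hM ht⟩
  have hseq : ∀ k : ℕ, ∃ t ∈ cwSet M, r - 1/((k:ℝ)+1) < t := by
    intro k
    refine exists_lt_of_lt_csSup hne ?_
    have : 0 < 1/((k:ℝ)+1) := by positivity
    linarith
  choose t ht htr using hseq
  choose x hxS hxineq using fun k => ht k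
  obtain ⟨y, hyS, φ, hφ, hconv⟩ := (isCompact_stdSimplex ℝ (Fin n)).tendsto_subseq hxS
  refine ⟨y, hyS, fun i => ?_⟩
  have hconvcoord : ∀ j, Tendsto (fun k => x (φ k) j) atTop (𝓝 (y j)) := fun j =>
    ((continuous_apply j).tendsto y).comp hconv
  have htt : Tendsto (fun k => t (φ k)) atTop (𝓝 r) := by
    have h1 : Tendsto (fun k : ℕ => r - 1/((k:ℝ)+1)) atTop (𝓝 r) := by
      have := tendsto_one_div_add_atTop_nhds_zero_nat (𝕜 := ℝ)
      have h2 := tendsto_const_nhds (x := r) (f := atTop (α := ℕ)) |>.sub this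
      simpa using h2
    refine tendsto_of_tendsto_of_tendsto_of_le_of_le h1 tendsto_const_nhds ?_ ?_
    · intro k
      have hk : (k:ℝ) + 1 ≤ (φ k : ℝ) + 1 := by
        have := hφ.le_apply (x := k)
        exact_mod_cast Nat.succ_le_succ this
      have : 1/((φ k : ℝ)+1) ≤ 1/((k:ℝ)+1) := by
        apply one_div_le_one_div_of_le (by positivity) hk
      have := (htr (φ k)).le
      dsimp only
      linarith
    · intro k
      exact le_csSup hbdd (⟨x (φ k), hxS (φ k), hxineq (φ k)⟩)
  have h1 : Tendsto (fun k => t (φ k) * x (φ k) i) atTop (𝓝 (r * y i)) :=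
    htt.mul (hconvcoord i)
  have h2 : Tendsto (fun k => M.mulVec (x (φ k)) i) atTop (𝓝 (M.mulVec y i)) := by
    simp only [mulVec_apply']
    exact tendsto_finset_sum _ fun j _ => tendsto_const_nhds.mul (hconvcoord j)
  exact le_of_tendsto_of_tendsto' h1 h2 fun k => hxineq (φ k) i

lemma mulVec_pos {P : Matrix (Fin n) (Fin n) ℝ} (hP : ∀ i j, 0 < P i j)
    {w : Fin n → ℝ} (hw0 : ∀ i, 0 ≤ w i) (hwne : w ≠ 0) (i : Fin n) :
    0 < P.mulVec w i := by
  rcases Function.ne_iff.mp hwne with ⟨j, hj⟩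
  have hwj : 0 < w j := lt_of_le_of_ne (hw0 j) (by simpa [eq_comm] using hj)
  rw [mulVec_apply']
  exact Finset.sum_pos' (fun k _ => mul_nonneg (hP i k).le (hw0 k))
    ⟨j, Finset.mem_univ j, mul_pos (hP i j) hwj⟩

lemma pos_matrix_eigen (hn : 0 < n) (P : Matrix (Fin n) (Fin n) ℝ) (hP : ∀ i j, 0 < P i j) :
    ∃ x ∈ stdSimplex ℝ (Fin n), P.mulVec x = sSup (cwSet P) • x := by
  have hP0 : ∀ i j, 0 ≤ P i j := fun i j => (hP i j).le
  obtain ⟨x, hxS, hineq⟩ := csSup_cwSet_attained hn P hP0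
  set r := sSup (cwSet P) with hr
  have hbdd : BddAbove (cwSet P) := ⟨_, fun t ht => cwSet_le_bound hP0 ht⟩
  refine ⟨x, hxS, ?_⟩
  by_contra hne
  set d : Fin n → ℝ := P.mulVec x - r • x with hd
  have hd0 : ∀ i, 0 ≤ d i := fun i => by
    simp only [hd, Pi.sub_apply, Pi.smul_apply, smul_eq_mul]
    linarith [hineq i]
  have hdne : d ≠ 0 := fun h => hne (sub_eq_zero.mp h)
  have hy : ∀ i, 0 < P.mulVec x i := mulVec_pos hP hxS.1 (simplex_ne_zero hxS)
  have hPd : ∀ i, 0 < P.mulVec d i := mulVec_pos hP hd0 hdne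
  obtain ⟨i0, -, hmin⟩ := Finset.exists_min_image Finset.univ
    (fun i => P.mulVec d i / P.mulVec x i) ⟨⟨0, hn⟩, Finset.mem_univ _⟩
  have hsplit : ∀ i, P.mulVec (P.mulVec x) i = P.mulVec d i + r * P.mulVec x i := by
    intro i
    have h3 : P.mulVec d = P.mulVec (P.mulVec x) - r • P.mulVec x := by
      rw [hd, mulVec_sub, mulVec_smul]
    have h4 := congrFun h3 i
    simp only [Pi.sub_apply, Pi.smul_apply, smul_eq_mul] at h4
    linarith
  obtain ⟨δ, hδpos, hδle⟩ : ∃ δ : ℝ, 0 < δ ∧ ∀ i, δ * P.mulVec x i ≤ P.mulVec d i := by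
    refine ⟨P.mulVec d i0 / P.mulVec x i0, div_pos (hPd i0) (hy i0), fun i => ?_⟩
    rw [← le_div_iff₀ (hy i)]
    exact hmin i (Finset.mem_univ i)
  have hmem : r + δ ∈ cwSet P := by
    refine mem_cwSet P (w := P.mulVec x) (fun i => (hy i).le)
      (fun h => (hy i0).ne' (congrFun h i0)) (fun i => ?_)
    nlinarith [hδle i, hsplit i, hy i]
  have := le_csSup hbdd hmem
  linarith

lemma nonneg_matrix_eigen (hn : 0 < n) (M : Matrix (Fin n) (Fin n) ℝ)
    (hM : ∀ i j, 0 ≤ M i j) :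
    ∃ r : ℝ, 0 ≤ r ∧ (∃ x ∈ stdSimplex ℝ (Fin n), M.mulVec x = r • x) ∧
      ∀ t ∈ cwSet M, t ≤ r := by
  classical
  set J : Matrix (Fin n) (Fin n) ℝ := Matrix.of fun _ _ => (1:ℝ) with hJ
  set Mk : ℕ → Matrix (Fin n) (Fin n) ℝ := fun k => M + (1/((k:ℝ)+1)) • J with hMk
  have hMk_pos : ∀ k i j, 0 < Mk k i j := by
    intro k i j
    have h1 : (0:ℝ) < 1/((k:ℝ)+1) := by positivity
    have : Mk k i j = M i j + (1/((k:ℝ)+1)) * 1 := rfl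
    rw [this]; nlinarith [hM i j]
  have hMk_le : ∀ k i j, Mk k i j ≤ M i j + 1 := by
    intro k i j
    have h1 : 1/((k:ℝ)+1) ≤ 1 := by
      rw [div_le_one (by positivity)]; norm_num
    have : Mk k i j = M i j + (1/((k:ℝ)+1)) * 1 := rfl
    rw [this]; nlinarith
  set rk : ℕ → ℝ := fun k => sSup (cwSet (Mk k)) with hrk
  have hxex : ∀ k, ∃ x ∈ stdSimplex ℝ (Fin n), (Mk k).mulVec x = rk k • x := fun k =>
    pos_matrix_eigen hn _ (hMk_pos k)
  choose x hxS hxe using hxex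
  have hbddk : ∀ k, BddAbove (cwSet (Mk k)) := fun k =>
    ⟨_, fun t ht => cwSet_le_bound (fun i j => (hMk_pos k i j).le) ht⟩
  have hrk0 : ∀ k, 0 ≤ rk k := fun k =>
    le_csSup (hbddk k) (zero_mem_cwSet hn _ (fun i j => (hMk_pos k i j).le))
  set C : ℝ := ∑ i : Fin n, ∑ j : Fin n, (M i j + 1) with hC
  have hrkC : ∀ k, rk k ≤ C := by
    intro k
    refine csSup_le ⟨0, zero_mem_cwSet hn _ (fun i j => (hMk_pos k i j).le)⟩ fun t ht => ?_
    refine le_trans (cwSet_le_bound (fun i j => (hMk_pos k i j).le) ht) ?_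
    exact Finset.sum_le_sum fun i _ => Finset.sum_le_sum fun j _ => hMk_le k i j
  have hcomp : IsCompact ((stdSimplex ℝ (Fin n)) ×ˢ (Set.Icc (0:ℝ) C)) :=
    (isCompact_stdSimplex _ _).prod isCompact_Icc
  have hmem : ∀ k, (x k, rk k) ∈ (stdSimplex ℝ (Fin n)) ×ˢ (Set.Icc (0:ℝ) C) :=
    fun k => ⟨hxS k, hrk0 k, hrkC k⟩
  obtain ⟨⟨y, r⟩, hyr, φ, hφ, hconv⟩ := hcomp.tendsto_subseq hmem
  have hyS : y ∈ stdSimplex ℝ (Fin n) := hyr.1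
  have hconvx : Tendsto (fun k => x (φ k)) atTop (𝓝 y) :=
    (continuous_fst.tendsto (y, r)).comp hconv
  have hconvr : Tendsto (fun k => rk (φ k)) atTop (𝓝 r) :=
    (continuous_snd.tendsto (y, r)).comp hconv
  have hconvcoord : ∀ j, Tendsto (fun k => x (φ k) j) atTop (𝓝 (y j)) := fun j =>
    ((continuous_apply j).tendsto y).comp hconvx
  refine ⟨r, ge_of_tendsto' hconvr (fun k => hrk0 (φ k)), ⟨y, hyS, ?_⟩, ?_⟩
  · funext i
    have heq : ∀ k, M.mulVec (x (φ k)) i + 1/((φ k : ℝ)+1) = rk (φ k) * x (φ k) i := by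
      intro k
      have h1 := congrFun (hxe (φ k)) i
      have h2 : (Mk (φ k)).mulVec (x (φ k)) i
          = M.mulVec (x (φ k)) i + (1/((φ k : ℝ)+1)) * ∑ j, x (φ k) j := by
        rw [hMk]
        simp only [add_mulVec, Pi.add_apply, smul_mulVec, Pi.smul_apply, smul_eq_mul]
        congr 1
        rw [mulVec_apply']
        simp [hJ, Finset.mul_sum]
      rw [h2, (hxS (φ k)).2, mul_one] at h1
      simpa using h1
    have hL : Tendsto (fun k => M.mulVec (x (φ k)) i + 1/((φ k : ℝ)+1)) atTop
        (𝓝 (M.mulVec y i)) := by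
      have hA : Tendsto (fun k => M.mulVec (x (φ k)) i) atTop (𝓝 (M.mulVec y i)) := by
        simp only [mulVec_apply']
        exact tendsto_finset_sum _ fun j _ => tendsto_const_nhds.mul (hconvcoord j)
      have hB : Tendsto (fun k : ℕ => 1/((φ k : ℝ)+1)) atTop (𝓝 0) := by
        have hB0 : Tendsto (fun k : ℕ => 1/((k : ℝ)+1)) atTop (𝓝 0) :=
          tendsto_one_div_add_atTop_nhds_zero_nat
        refine tendsto_of_tendsto_of_tendsto_of_le_of_le tendsto_const_nhds hB0 ?_ ?_
        · intro k; positivity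
        · intro k
          have hk : (k:ℝ) + 1 ≤ (φ k : ℝ) + 1 := by
            exact_mod_cast Nat.succ_le_succ (hφ.le_apply (x := k))
          exact one_div_le_one_div_of_le (by positivity) hk
      simpa using hA.add hB
    have hR : Tendsto (fun k => rk (φ k) * x (φ k) i) atTop (𝓝 (r * y i)) :=
      hconvr.mul (hconvcoord i)
    have := tendsto_nhds_unique (by simpa only [heq] using hL) hR
    simpa [Pi.smul_apply, smul_eq_mul] using this
  · intro t ht
    refine ge_of_tendsto' hconvr fun k => ?_
    refine le_csSup (hbddk (φ k)) (cwSet_mono ?_ ht)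
    intro i j
    have h1 : (0:ℝ) < 1/((φ k : ℝ)+1) := by positivity
    have : Mk (φ k) i j = M i j + (1/((φ k : ℝ)+1)) * 1 := rfl
    rw [this]; nlinarith

lemma algebraMap_mulVec (z : ℂ) (v : Fin n → ℂ) :
    (algebraMap ℂ (Matrix (Fin n) (Fin n) ℂ) z) *ᵥ v = z • v := by
  rw [Matrix.algebraMap_eq_diagonal]
  funext i
  simp [mulVec_diagonal]

lemma spectrum_exists_eigvec {M' : Matrix (Fin n) (Fin n) ℂ} {z : ℂ}
    (hz : z ∈ spectrum ℂ M') : ∃ v : Fin n → ℂ, v ≠ 0 ∧ M' *ᵥ v = z • v := by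
  rw [spectrum.mem_iff] at hz
  have hdet : (algebraMap ℂ (Matrix (Fin n) (Fin n) ℂ) z - M').det = 0 := by
    by_contra h
    exact hz ((Matrix.isUnit_iff_isUnit_det _).2 (isUnit_iff_ne_zero.2 h))
  obtain ⟨v, hv0, hv⟩ := (Matrix.exists_mulVec_eq_zero_iff).2 hdet
  refine ⟨v, hv0, ?_⟩
  rw [sub_mulVec, algebraMap_mulVec] at hv
  have := sub_eq_zero.mp hv
  exact this.symm

lemma abs_spectrum_mem_cwSet (M : Matrix (Fin n) (Fin n) ℝ)
    (hM : ∀ i j, 0 ≤ M i j) {z : ℂ}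
    (hz : z ∈ spectrum ℂ (M.map (algebraMap ℝ ℂ))) : ‖z‖ ∈ cwSet M := by
  obtain ⟨v, hv0, hveq⟩ := spectrum_exists_eigvec hz
  set w : Fin n → ℝ := fun i => ‖v i‖ with hw
  have hw0 : ∀ i, 0 ≤ w i := fun i => norm_nonneg _
  have hwne : w ≠ 0 := by
    intro h
    apply hv0
    funext i
    have := congrFun h i
    simpa [hw, norm_eq_zero] using this
  refine mem_cwSet M hw0 hwne fun i => ?_
  have h1 : ‖z‖ * w i = ‖(M.map (algebraMap ℝ ℂ) *ᵥ v) i‖ := by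
    rw [congrFun hveq i]
    simp [hw, Pi.smul_apply, smul_eq_mul, AbsoluteValue.map_mul]
  have h2 : (M.map (algebraMap ℝ ℂ) *ᵥ v) i = ∑ j, (M i j : ℂ) * v j := by
    rw [mulVec_apply']
    simp [Matrix.map_apply, Complex.coe_algebraMap]
  rw [h1, h2, mulVec_apply' M w i]
  refine le_trans (norm_sum_le _ _) ?_
  refine le_of_eq (Finset.sum_congr rfl fun j _ => ?_)
  rw [norm_mul, Complex.norm_real, Real.norm_eq_abs, abs_of_nonneg (hM i j)]

lemma real_eig_mem_spectrum (M : Matrix (Fin n) (Fin n) ℝ) {t : ℝ} {x : Fin n → ℝ}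
    (hx : x ≠ 0) (h : M.mulVec x = t • x) :
    (t : ℂ) ∈ spectrum ℂ (M.map (algebraMap ℝ ℂ)) := by
  rw [spectrum.mem_iff]
  intro hu
  have hdet := (Matrix.isUnit_iff_isUnit_det _).1 hu
  rw [isUnit_iff_ne_zero] at hdet
  apply hdet
  rw [← Matrix.exists_mulVec_eq_zero_iff]
  refine ⟨fun i => (x i : ℂ), ?_, ?_⟩
  · intro h0
    apply hx
    funext i
    have := congrFun h0 i
    simpa using this
  · rw [sub_mulVec, algebraMap_mulVec]
    funext i
    have h3 : (M.map (algebraMap ℝ ℂ) *ᵥ fun i => (x i : ℂ)) i = ((M.mulVec x i : ℝ) : ℂ) := by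
      rw [mulVec_apply', mulVec_apply']
      push_cast
      simp [Matrix.map_apply, Complex.coe_algebraMap]
    have h4 := congrFun h i
    simp only [Pi.sub_apply, Pi.smul_apply, smul_eq_mul, Pi.zero_apply]
    rw [h3, h4]
    simp only [Pi.smul_apply, smul_eq_mul]
    push_cast
    ring

lemma specRad_spec (hn : 0 < n) (M : Matrix (Fin n) (Fin n) ℝ) (hM : ∀ i j, 0 ≤ M i j) :
    0 ≤ specRad M ∧ (∃ x : Fin n → ℝ, x ≠ 0 ∧ M.mulVec x = specRad M • x) ∧
      (∀ (t : ℝ) (x : Fin n → ℝ), x ≠ 0 → M.mulVec x = t • x → t ≤ specRad M) := by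
  obtain ⟨r, hr0, ⟨y, hyS, hye⟩, hmax⟩ := nonneg_matrix_eigen hn M hM
  have hy0 : y ≠ 0 := simplex_ne_zero hyS
  have hrspec : ((r : ℝ) : ℂ) ∈ spectrum ℂ (M.map (algebraMap ℝ ℂ)) :=
    real_eig_mem_spectrum M hy0 hye
  have himg : r ∈ (fun z : ℂ => ‖z‖) '' spectrum ℂ (M.map (algebraMap ℝ ℂ)) :=
    ⟨(r : ℂ), hrspec, by show ‖(r:ℂ)‖ = r; rw [Complex.norm_real, Real.norm_eq_abs]; exact abs_of_nonneg hr0⟩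
  have hub : ∀ a ∈ (fun z : ℂ => ‖z‖) '' spectrum ℂ (M.map (algebraMap ℝ ℂ)),
      a ≤ r := by
    rintro a ⟨z, hz, rfl⟩
    exact hmax _ (abs_spectrum_mem_cwSet M hM hz)
  have heq : specRad M = r :=
    le_antisymm (Real.sSup_le hub hr0) (le_csSup ⟨r, hub⟩ himg)
  refine ⟨heq ▸ hr0, ⟨y, hy0, by rw [heq]; exact hye⟩, ?_⟩
  intro t x hx hxe
  have := real_eig_mem_spectrum M hx hxe
  have h1 : |t| ∈ cwSet M := by
    have := abs_spectrum_mem_cwSet M hM this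
    rwa [Complex.norm_real, Real.norm_eq_abs] at this
  have := hmax _ h1
  rw [heq]
  exact le_trans (le_abs_self t) this

lemma mmatrix_monotone (C : Matrix (Fin n) (Fin n) ℝ)
    (hoff : ∀ i j, i ≠ j → C i j ≤ 0)
    (u : Fin n → ℝ) (hu : ∀ i, 0 < u i) (hCu : ∀ i, 0 < C.mulVec u i)
    {x : Fin n → ℝ} (hx : ∀ i, 0 ≤ C.mulVec x i) : ∀ i, 0 ≤ x i := by
  by_contra h
  push_neg at h
  obtain ⟨i1, hi1⟩ := h
  obtain ⟨i0, -, hmin⟩ := Finset.exists_min_image Finset.univ (fun i => x i / u i)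
    ⟨i1, Finset.mem_univ _⟩
  have hneg : x i0 / u i0 < 0 :=
    lt_of_le_of_lt (hmin i1 (Finset.mem_univ _)) (div_neg_of_neg_of_pos hi1 (hu i1))
  set t : ℝ := -(x i0 / u i0) with htdef
  have ht : 0 < t := by simp [htdef]; linarith
  set y : Fin n → ℝ := x + t • u with hy
  have hy0 : ∀ j, 0 ≤ y j := by
    intro j
    have h1 : x i0 / u i0 * u j ≤ x j / u j * u j :=
      mul_le_mul_of_nonneg_right (hmin j (Finset.mem_univ _)) (hu j).le
    rw [div_mul_cancel₀ _ (hu j).ne'] at h1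
    simp only [hy, Pi.add_apply, Pi.smul_apply, smul_eq_mul, htdef]
    nlinarith
  have hyi0 : y i0 = 0 := by
    have hc : x i0 / u i0 * u i0 = x i0 := div_mul_cancel₀ _ (hu i0).ne'
    simp only [hy, Pi.add_apply, Pi.smul_apply, smul_eq_mul, htdef]
    linarith [hc]
  have h2 : 0 < C.mulVec y i0 := by
    have : C.mulVec y = C.mulVec x + t • C.mulVec u := by
      rw [hy, mulVec_add, mulVec_smul]
    rw [this]
    simp only [Pi.add_apply, Pi.smul_apply, smul_eq_mul]
    nlinarith [hx i0, hCu i0]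
  have h3 : C.mulVec y i0 ≤ 0 := by
    rw [mulVec_apply']
    refine Finset.sum_nonpos fun j _ => ?_
    rcases eq_or_ne j i0 with rfl | hne
    · rw [hyi0, mul_zero]
    · exact mul_nonpos_iff.2 (Or.inr ⟨hoff i0 j (Ne.symm hne), hy0 j⟩)
  linarith


lemma mmatrix_det_isUnit (C : Matrix (Fin n) (Fin n) ℝ)
    (hoff : ∀ i j, i ≠ j → C i j ≤ 0)
    (u : Fin n → ℝ) (hu : ∀ i, 0 < u i) (hCu : ∀ i, 0 < C.mulVec u i) :
    IsUnit C.det := by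
  rw [isUnit_iff_ne_zero]
  intro h
  obtain ⟨v, hv0, hv⟩ := (Matrix.exists_mulVec_eq_zero_iff).2 h
  have h1 := mmatrix_monotone C hoff u hu hCu (x := v)
    (by intro i; rw [hv]; exact le_refl 0)
  have h2 := mmatrix_monotone C hoff u hu hCu (x := -v)
    (by intro i; rw [mulVec_neg, hv]; simp)
  apply hv0
  funext i
  have ha := h1 i
  have hb := h2 i
  simp only [Pi.neg_apply] at hb
  have : v i = 0 := le_antisymm (by linarith) ha
  simpa using this

lemma mmatrix_inv_nonneg (C : Matrix (Fin n) (Fin n) ℝ)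
    (hoff : ∀ i j, i ≠ j → C i j ≤ 0)
    (u : Fin n → ℝ) (hu : ∀ i, 0 < u i) (hCu : ∀ i, 0 < C.mulVec u i)
    (hdet : IsUnit C.det) : ∀ i j, 0 ≤ C⁻¹ i j := by
  intro i j
  have h := mmatrix_monotone C hoff u hu hCu (x := C⁻¹.mulVec (Pi.single j 1)) ?_
  · have h2 := h i
    rw [mulVec_single] at h2
    simpa using h2
  · intro i'
    rw [mulVec_mulVec, Matrix.mul_nonsing_inv _ hdet, one_mulVec]
    rcases eq_or_ne i' j with rfl | hne
    · simp
    · simp [Pi.single_eq_of_ne hne]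

end PFaux

/-- Under (c1)–(c3), `ρ(A,B) = μ/(1+μ)` with `μ = ρ((B−A)⁻¹A)` lies in `[0,1)`,
is an eigenvalue of the pencil `(A,B)`, and is the largest real eigenvalue of
`(A,B)` in `[0,1)`. -/
theorem stmt_3 {n : ℕ} (hn : 0 < n) (A B : Matrix (Fin n) (Fin n) ℝ)
    (hc1 : ∀ i j, 0 ≤ A i j)
    (hc2 : ∀ i j, i ≠ j → B i j ≤ A i j)
    (hc3 : ∃ u : Fin n → ℝ, (∀ i, 0 < u i) ∧ ∀ i, 0 < (B - A).mulVec u i)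
    (μ ρAB : ℝ) (hμ : μ = specRad ((B - A)⁻¹ * A)) (hρ : ρAB = μ / (1 + μ)) :
    (0 ≤ ρAB ∧ ρAB < 1) ∧
    (∃ x : Fin n → ℝ, x ≠ 0 ∧ A.mulVec x = ρAB • B.mulVec x) ∧
    (∀ lam : ℝ, 0 ≤ lam → lam < 1 →
      (∃ x : Fin n → ℝ, x ≠ 0 ∧ A.mulVec x = lam • B.mulVec x) →
      lam ≤ ρAB) := by
  obtain ⟨u, hu, hCu⟩ := hc3
  set C : Matrix (Fin n) (Fin n) ℝ := B - A with hCdef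
  have hoff : ∀ i j, i ≠ j → C i j ≤ 0 := by
    intro i j hij
    rw [hCdef, Matrix.sub_apply]
    linarith [hc2 i j hij]
  have hdet : IsUnit C.det := PFaux.mmatrix_det_isUnit C hoff u hu hCu
  have hinv : ∀ i j, 0 ≤ C⁻¹ i j := PFaux.mmatrix_inv_nonneg C hoff u hu hCu hdet
  set M : Matrix (Fin n) (Fin n) ℝ := C⁻¹ * A with hMdef
  have hM0 : ∀ i j, 0 ≤ M i j := by
    intro i j
    rw [hMdef, Matrix.mul_apply]
    exact Finset.sum_nonneg fun k _ => mul_nonneg (hinv i k) (hc1 k j)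
  have hspec := PFaux.specRad_spec hn M hM0
  have hμ0 : 0 ≤ μ := by rw [hμ]; exact hspec.1
  have h1μ : 0 < 1 + μ := by linarith
  have hsub : ∀ x : Fin n → ℝ, ∀ i, C.mulVec x i = B.mulVec x i - A.mulVec x i := by
    intro x i
    rw [hCdef, sub_mulVec]
    rfl
  refine ⟨⟨by rw [hρ]; exact div_nonneg hμ0 h1μ.le,
      by rw [hρ, div_lt_one h1μ]; linarith⟩, ?_, ?_⟩
  · obtain ⟨x, hx0, hxe⟩ := hspec.2.1
    rw [← hμ] at hxe
    refine ⟨x, hx0, ?_⟩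
    have hAx : A.mulVec x = μ • C.mulVec x := by
      have h2 : C.mulVec (M.mulVec x) = A.mulVec x := by
        rw [hMdef, mulVec_mulVec, ← Matrix.mul_assoc, Matrix.mul_nonsing_inv _ hdet,
          Matrix.one_mul]
      rw [← h2, hxe, mulVec_smul]
    funext i
    have h3 := congrFun hAx i
    simp only [Pi.smul_apply, smul_eq_mul] at h3 ⊢
    rw [hsub x i] at h3
    rw [hρ]
    field_simp
    linear_combination h3
  · rintro lam hlam0 hlam1 ⟨x, hx0, hxe⟩
    have h1l : 0 < 1 - lam := by linarith
    set t : ℝ := lam / (1 - lam) with htdef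
    have hAx : A.mulVec x = t • C.mulVec x := by
      funext i
      have h5 := congrFun hxe i
      simp only [Pi.smul_apply, smul_eq_mul] at h5 ⊢
      rw [hsub x i, htdef]
      field_simp
      linear_combination h5
    have hMx : M.mulVec x = t • x := by
      rw [hMdef, ← mulVec_mulVec, hAx, mulVec_smul, mulVec_mulVec,
        Matrix.nonsing_inv_mul _ hdet, one_mulVec]
    have hts := hspec.2.2 t x hx0 hMx
    rw [← hμ] at hts
    rw [hρ, le_div_iff₀ h1μ]
    have h6 : lam ≤ μ * (1 - lam) := by
      have := (div_le_iff₀ h1l).1 hts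
      linarith
    nlinarith
end

section
/- Let A, B be real n×n matrices satisfying: (c1) A is entrywise nonnegative, (c2) B_{ij} ≤ A_{ij} for all i ≠ j, and (c3) there exists an entrywise positive vector u with (B−A)u entrywise positive. Set μ = ρ((B−A)⁻¹A) and ρ(A,B) = μ/(1+μ). Then there exists a nonzero entrywise nonnegative vector x ∈ ℝⁿ with Ax = ρ(A,B)·Bx. -/
open Matrix

theorem spec_nonempty {n : ℕ} (hn : 0 < n) (N : Matrix (Fin n) (Fin n) ℂ) :
    ∃ lam : ℂ, lam ∈ spectrum ℂ N := by
  have hdeg : N.charpoly.natDegree = n := by simpa using N.charpoly_natDegree_eq_dim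
  have hdeg' : 0 < N.charpoly.degree := by
    rw [Polynomial.degree_eq_natDegree N.charpoly_monic.ne_zero, hdeg]
    exact_mod_cast hn
  obtain ⟨lam, hlam⟩ := Complex.exists_root hdeg'
  refine ⟨lam, ?_⟩
  rw [spectrum.mem_iff, Matrix.isUnit_iff_isUnit_det, isUnit_iff_ne_zero, not_ne_iff]
  have : (algebraMap ℂ (Matrix (Fin n) (Fin n) ℂ) lam - N).det = N.charpoly.eval lam := by
    rw [Matrix.charpoly, ← Polynomial.coe_evalRingHom, RingHom.map_det]
    congr 1
    funext i j
    simp [Matrix.charmatrix, Matrix.algebraMap_eq_diagonal, Matrix.diagonal, Matrix.map_apply,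
      Matrix.one_apply, apply_ite]
  rw [this]
  exact hlam

theorem mem_spec_iff {n : ℕ} (N : Matrix (Fin n) (Fin n) ℂ) (lam : ℂ) :
    lam ∈ spectrum ℂ N ↔ ∃ v : Fin n → ℂ, v ≠ 0 ∧ N.mulVec v = lam • v := by
  rw [spectrum.mem_iff, Matrix.isUnit_iff_isUnit_det, isUnit_iff_ne_zero, not_ne_iff,
    ← Matrix.exists_mulVec_eq_zero_iff]
  have key : ∀ v : Fin n → ℂ,
      (algebraMap ℂ (Matrix (Fin n) (Fin n) ℂ) lam - N).mulVec v = lam • v - N.mulVec v := by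
    intro v
    rw [Matrix.sub_mulVec, Matrix.algebraMap_eq_diagonal]
    congr 1
    funext i
    simp [Matrix.mulVec_diagonal, Pi.algebraMap_apply, Algebra.algebraMap_self_apply]
  constructor
  · rintro ⟨v, hv, h⟩
    exact ⟨v, hv, by rw [key v, sub_eq_zero] at h; exact h.symm⟩
  · rintro ⟨v, hv, h⟩
    exact ⟨v, hv, by rw [key v, sub_eq_zero, h]⟩

theorem cw_upper {n : ℕ} (M : Matrix (Fin n) (Fin n) ℝ) (hM : ∀ i j, 0 ≤ M i j)
    (u : Fin n → ℝ) (hu : ∀ i, 0 < u i) (c : ℝ) (hc : ∀ i, M.mulVec u i ≤ c * u i)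
    (lam : ℂ) (hlam : lam ∈ spectrum ℂ (M.map (algebraMap ℝ ℂ))) : ‖lam‖ ≤ c := by
  obtain ⟨v, hv, heig⟩ := (mem_spec_iff _ _).mp hlam
  have hne : (Finset.univ : Finset (Fin n)).Nonempty := by
    rcases Function.ne_iff.mp hv with ⟨j, -⟩
    exact ⟨j, Finset.mem_univ j⟩
  obtain ⟨i, -, hi⟩ := Finset.exists_max_image Finset.univ
    (fun j => ‖v j‖ / u j) hne
  set s : ℝ := ‖v i‖ / u i with hs
  have hsu : ∀ j, ‖v j‖ ≤ s * u j := by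
    intro j
    exact (div_le_iff₀ (hu j)).mp (hi j (Finset.mem_univ j))
  have hvi : ‖v i‖ = s * u i := (div_mul_cancel₀ _ (hu i).ne').symm
  have hspos : 0 < s := by
    rcases Function.ne_iff.mp hv with ⟨j, hj⟩
    have h1 : 0 < ‖v j‖ := by simpa using hj
    have := (hsu j)
    nlinarith [hu j]
  have heigi : (M.map (algebraMap ℝ ℂ)).mulVec v i = lam * v i := by
    rw [heig]; rfl
  have hexp : (M.map (algebraMap ℝ ℂ)).mulVec v i = ∑ j, (M i j : ℂ) * v j := by
    simp [Matrix.mulVec, dotProduct, Matrix.map_apply]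
  have key : ‖lam‖ * (s * u i) ≤ c * (s * u i) := by
    calc ‖lam‖ * (s * u i) = ‖lam‖ * ‖v i‖ := by rw [hvi]
    _ = ‖lam * v i‖ := (norm_mul lam (v i)).symm
    _ = ‖∑ j, (M i j : ℂ) * v j‖ := by rw [← heigi, hexp]
    _ ≤ ∑ j, ‖(M i j : ℂ) * v j‖ := norm_sum_le _ _
    _ = ∑ j, M i j * ‖v j‖ := by
        refine Finset.sum_congr rfl fun j _ => ?_
        rw [norm_mul, Complex.norm_real, Real.norm_of_nonneg (hM i j)]
    _ ≤ ∑ j, M i j * (s * u j) := by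
        refine Finset.sum_le_sum fun j _ => ?_
        exact mul_le_mul_of_nonneg_left (hsu j) (hM i j)
    _ = s * M.mulVec u i := by
        have : M.mulVec u i = ∑ j, M i j * u j := by simp [Matrix.mulVec, dotProduct]
        rw [this, Finset.mul_sum]
        exact Finset.sum_congr rfl fun j _ => by ring
    _ ≤ s * (c * u i) := mul_le_mul_of_nonneg_left (hc i) hspos.le
    _ = c * (s * u i) := by ring
  have hpos : 0 < s * u i := mul_pos hspos (hu i)
  exact le_of_mul_le_mul_right (by linarith [key]) hpos


theorem pf_pos {n : ℕ} (hn : 0 < n) (M : Matrix (Fin n) (Fin n) ℝ) (hM : ∀ i j, 0 < M i j) :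
    ∃ r : ℝ, ∃ x : Fin n → ℝ, 0 < r ∧ (∀ i, 0 < x i) ∧ (∑ i, x i) = 1 ∧
      M.mulVec x = r • x := by
  classical
  set K : Set (ℝ × (Fin n → ℝ)) :=
    {p | 0 ≤ p.1 ∧ (∀ i, 0 ≤ p.2 i) ∧ (∑ i, p.2 i) = 1 ∧ ∀ i, p.1 * p.2 i ≤ M.mulVec p.2 i}
    with hKdef
  have hmulVec : ∀ (w : Fin n → ℝ) i, M.mulVec w i = ∑ j, M i j * w j := by
    intro w i; simp [Matrix.mulVec, dotProduct]
  -- K is closed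
  have hclosed : IsClosed K := by
    have h1 : IsClosed {p : ℝ × (Fin n → ℝ) | 0 ≤ p.1} := isClosed_le continuous_const continuous_fst
    have h2 : IsClosed {p : ℝ × (Fin n → ℝ) | ∀ i, 0 ≤ p.2 i} := by
      have : {p : ℝ × (Fin n → ℝ) | ∀ i, 0 ≤ p.2 i} = ⋂ i, {p | 0 ≤ p.2 i} := by
        ext p; simp
      rw [this]
      exact isClosed_iInter fun i =>
        isClosed_le continuous_const ((continuous_apply i).comp continuous_snd)
    have h3 : IsClosed {p : ℝ × (Fin n → ℝ) | (∑ i, p.2 i) = 1} :=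
      isClosed_eq (continuous_finset_sum _ fun i _ => (continuous_apply i).comp continuous_snd) continuous_const
    have h4 : IsClosed {p : ℝ × (Fin n → ℝ) | ∀ i, p.1 * p.2 i ≤ M.mulVec p.2 i} := by
      have : {p : ℝ × (Fin n → ℝ) | ∀ i, p.1 * p.2 i ≤ M.mulVec p.2 i}
          = ⋂ i, {p | p.1 * p.2 i ≤ ∑ j, M i j * p.2 j} := by
        ext p; simp only [Set.mem_setOf_eq, Set.mem_iInter]
        refine forall_congr' fun i => ?_
        rw [hmulVec]
      rw [this]
      refine isClosed_iInter fun i => isClosed_le ?_ ?_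
      · exact continuous_fst.mul ((continuous_apply i).comp continuous_snd)
      · exact continuous_finset_sum _ fun j _ =>
          continuous_const.mul ((continuous_apply j).comp continuous_snd)
    have hK2 : K = {p : ℝ × (Fin n → ℝ) | 0 ≤ p.1} ∩ ({p | ∀ i, 0 ≤ p.2 i} ∩
        ({p | (∑ i, p.2 i) = 1} ∩ {p | ∀ i, p.1 * p.2 i ≤ M.mulVec p.2 i})) := by
      ext p
      simp only [hKdef, Set.mem_setOf_eq, Set.mem_inter_iff]
    rw [hK2]
    exact h1.inter (h2.inter (h3.inter h4))
  -- K is contained in a compact set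
  set c₀ : ℝ := ∑ i, ∑ j, M i j with hc₀
  have hsub : K ⊆ (Set.Icc (0:ℝ) c₀) ×ˢ (Set.pi Set.univ fun _ : Fin n => Set.Icc (0:ℝ) 1) := by
    rintro ⟨r, x⟩ ⟨hr, hx, hsum, hle⟩
    have hx1 : ∀ j, x j ≤ 1 := by
      intro j
      calc x j ≤ ∑ i, x i := Finset.single_le_sum (fun i _ => hx i) (Finset.mem_univ j)
      _ = 1 := hsum
    constructor
    · refine ⟨hr, ?_⟩
      calc r = r * ∑ i, x i := by rw [hsum, mul_one]
      _ = ∑ i, r * x i := by rw [Finset.mul_sum]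
      _ ≤ ∑ i, M.mulVec x i := Finset.sum_le_sum fun i _ => hle i
      _ ≤ c₀ := by
          rw [hc₀]
          refine Finset.sum_le_sum fun i _ => ?_
          rw [hmulVec]
          refine Finset.sum_le_sum fun j _ => ?_
          calc M i j * x j ≤ M i j * 1 := by
                exact mul_le_mul_of_nonneg_left (hx1 j) (hM i j).le
          _ = M i j := mul_one _
    · intro j _
      exact ⟨hx j, hx1 j⟩
  have hKcompact : IsCompact K :=
    IsCompact.of_isClosed_subset
      ((isCompact_Icc).prod (isCompact_univ_pi fun _ => isCompact_Icc)) hclosed hsub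
  -- K is nonempty
  have hy_pos : ∀ x : Fin n → ℝ, (∀ i, 0 ≤ x i) → (∑ i, x i) = 1 → ∀ i, 0 < M.mulVec x i := by
    intro x hx hsum i
    rw [hmulVec]
    have : ∃ j, 0 < x j := by
      by_contra h
      push_neg at h
      have : ∑ i, x i = 0 := Finset.sum_eq_zero fun i _ => le_antisymm (h i) (hx i)
      rw [hsum] at this; norm_num at this
    obtain ⟨j, hj⟩ := this
    refine Finset.sum_pos' (fun k _ => mul_nonneg (hM i k).le (hx k)) ⟨j, Finset.mem_univ j, ?_⟩
    exact mul_pos (hM i j) hj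
  have hKne : K.Nonempty := by
    refine ⟨(0, fun _ => (n : ℝ)⁻¹), ⟨le_refl 0, fun i => by positivity, ?_, fun i => ?_⟩⟩
    · simp
      field_simp
    · rw [zero_mul]
      exact (hy_pos _ (fun i => by positivity) (by simp; field_simp) i).le
  -- maximize first coordinate
  obtain ⟨p, hpK, hpmax⟩ := hKcompact.exists_isMaxOn hKne continuous_fst.continuousOn
  obtain ⟨hr0, hx0, hxsum, hxle⟩ := hpK
  set r := p.1
  set x := p.2
  have hy : ∀ i, 0 < M.mulVec x i := hy_pos x hx0 hxsum
  -- the eigen equation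
  have heq : ∀ i, M.mulVec x i = r * x i := by
    by_contra hcon
    push_neg at hcon
    obtain ⟨i₀, hi₀⟩ := hcon
    have hi₀' : r * x i₀ < M.mulVec x i₀ := lt_of_le_of_ne (hxle i₀) (Ne.symm hi₀)
    set y := M.mulVec x with hydef
    set z := fun i => y i - r * x i with hzdef
    have hz0 : ∀ i, 0 ≤ z i := fun i => sub_nonneg.mpr (hxle i)
    have hMz : ∀ i, 0 < M.mulVec z i := by
      intro i
      rw [hmulVec]
      refine Finset.sum_pos' (fun k _ => mul_nonneg (hM i k).le (hz0 k))
        ⟨i₀, Finset.mem_univ i₀, mul_pos (hM i i₀) (by simpa [hzdef] using sub_pos.mpr hi₀')⟩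
    have hMy : ∀ i, M.mulVec y i = r * y i + M.mulVec z i := by
      intro i
      have : z = y - r • x := by funext k; simp [hzdef]
      rw [this, Matrix.mulVec_sub, Matrix.mulVec_smul]
      simp [hydef]
    obtain ⟨m, -, hm⟩ := Finset.exists_min_image Finset.univ
      (fun i => M.mulVec z i / y i) ⟨i₀, Finset.mem_univ i₀⟩
    set δ := M.mulVec z m / y m with hδdef
    have hδpos : 0 < δ := div_pos (hMz m) (hy m)
    have hδle : ∀ i, δ * y i ≤ M.mulVec z i := by
      intro i
      have := hm i (Finset.mem_univ i)
      calc δ * y i ≤ (M.mulVec z i / y i) * y i :=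
            mul_le_mul_of_nonneg_right this (hy i).le
      _ = M.mulVec z i := div_mul_cancel₀ _ (hy i).ne'
    set t := ∑ i, y i with htdef
    have ht : 0 < t := Finset.sum_pos (fun i _ => hy i) ⟨i₀, Finset.mem_univ i₀⟩
    have hKmem : ((r + δ), t⁻¹ • y) ∈ K := by
      refine ⟨add_nonneg hr0 hδpos.le, fun i => by
        simp only [Pi.smul_apply, smul_eq_mul]
        exact mul_nonneg (inv_nonneg.mpr ht.le) (hy i).le, ?_, fun i => ?_⟩
      · simp only [Pi.smul_apply, smul_eq_mul, ← Finset.mul_sum, ← htdef]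
        exact inv_mul_cancel₀ ht.ne'
      · rw [Matrix.mulVec_smul]
        simp only [Pi.smul_apply, smul_eq_mul]
        have h1 : (r + δ) * y i ≤ M.mulVec y i := by
          rw [hMy i]
          nlinarith [hδle i]
        calc (r + δ) * (t⁻¹ * y i) = t⁻¹ * ((r + δ) * y i) := by ring
        _ ≤ t⁻¹ * M.mulVec y i := by
            exact mul_le_mul_of_nonneg_left h1 (inv_nonneg.mpr ht.le)
    have := hpmax hKmem
    simp only [r] at this
    have : r + δ ≤ r := this
    linarith
  have hxpos : ∀ i, 0 < x i := by
    intro i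
    have h1 := hy i
    rw [heq i] at h1
    rcases (mul_pos_iff.mp h1) with ⟨-, h⟩ | ⟨h1', -⟩
    · exact h
    · exact absurd hr0 (not_le.mpr h1')
  have hrpos : 0 < r := by
    have h1 := hy ⟨0, hn⟩
    rw [heq _] at h1
    nlinarith [hxpos ⟨0, hn⟩]
  exact ⟨r, x, hrpos, hxpos, hxsum, funext heq⟩

/-- real eigenpair gives complex spectrum membership -/
theorem real_eig_mem_spec {n : ℕ} (M : Matrix (Fin n) (Fin n) ℝ) (r : ℝ) (x : Fin n → ℝ)
    (hx : x ≠ 0) (h : M.mulVec x = r • x) :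
    (r : ℂ) ∈ spectrum ℂ (M.map (algebraMap ℝ ℂ)) := by
  rw [mem_spec_iff]
  refine ⟨fun i => (x i : ℂ), ?_, ?_⟩
  · intro h0
    apply hx
    funext i
    have := congrFun h0 i
    simpa using this
  · funext i
    have hi := congrFun h i
    simp only [Pi.smul_apply, smul_eq_mul] at hi ⊢
    have : (M.map (algebraMap ℝ ℂ)).mulVec (fun j => (x j : ℂ)) i
        = ((M.mulVec x i : ℝ) : ℂ) := by
      simp [Matrix.mulVec, dotProduct, Matrix.map_apply]
    rw [this, hi]
    push_cast
    ring

theorem pf_nonneg {n : ℕ} (hn : 0 < n) (M : Matrix (Fin n) (Fin n) ℝ)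
    (hM : ∀ i j, 0 ≤ M i j) :
    ∃ x : Fin n → ℝ, x ≠ 0 ∧ (∀ i, 0 ≤ x i) ∧ M.mulVec x = specRad M • x ∧ 0 ≤ specRad M := by
  classical
  set μ := specRad M with hμ
  -- perturbed matrices
  set Mk : ℕ → Matrix (Fin n) (Fin n) ℝ :=
    fun k => M + ((k : ℝ) + 1)⁻¹ • Matrix.of (fun _ _ : Fin n => (1 : ℝ)) with hMk
  have hMkpos : ∀ k i j, 0 < Mk k i j := by
    intro k i j
    simp only [hMk, Matrix.add_apply, Matrix.smul_apply, Matrix.of_apply, smul_eq_mul, mul_one]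
    have : (0:ℝ) < ((k : ℝ) + 1)⁻¹ := by positivity
    linarith [hM i j]
  have hMkent : ∀ k i j, Mk k i j = M i j + ((k : ℝ) + 1)⁻¹ := by
    intro k i j
    simp [hMk]
  have h := fun k => pf_pos hn (Mk k) (hMkpos k)
  choose r x hr hx hsum heig using h
  have hmulVec : ∀ (N : Matrix (Fin n) (Fin n) ℝ) (w : Fin n → ℝ) i,
      N.mulVec w i = ∑ j, N i j * w j := by
    intro N w i; simp [Matrix.mulVec, dotProduct]
  -- (Mk k) *ᵥ (x k) i = M *ᵥ (x k) i + εk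
  have hkey : ∀ k i, r k * x k i = M.mulVec (x k) i + ((k : ℝ) + 1)⁻¹ := by
    intro k i
    have h1 := congrFun (heig k) i
    simp only [Pi.smul_apply, smul_eq_mul] at h1
    rw [← h1, hmulVec, hmulVec]
    have : ∀ j, Mk k i j * x k j = M i j * x k j + ((k : ℝ) + 1)⁻¹ * x k j := by
      intro j; rw [hMkent]; ring
    rw [Finset.sum_congr rfl fun j _ => this j, Finset.sum_add_distrib, ← Finset.mul_sum,
      hsum k, mul_one]
  -- bounds on r
  have hx1 : ∀ k j, x k j ≤ 1 := by
    intro k j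
    calc x k j ≤ ∑ i, x k i := Finset.single_le_sum (fun i _ => (hx k i).le) (Finset.mem_univ j)
    _ = 1 := hsum k
  set Cb : ℝ := (∑ i, ∑ j, M i j) + n ^ 2 with hCb
  have hrCb : ∀ k, r k ≤ Cb := by
    intro k
    have : r k = ∑ i, r k * x k i := by
      rw [← Finset.mul_sum, hsum k, mul_one]
    rw [this]
    have hb : ∀ i, r k * x k i ≤ (∑ j, M i j) + n := by
      intro i
      rw [hkey k i, hmulVec]
      have h1 : ∑ j, M i j * x k j ≤ ∑ j, M i j :=
        Finset.sum_le_sum fun j _ => by nlinarith [hM i j, hx1 k j, (hx k j).le]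
      have h2 : ((k:ℝ)+1)⁻¹ ≤ 1 := by
        rw [inv_le_one_iff₀]; right; linarith [Nat.cast_nonneg (α := ℝ) k]
      have h3 : (1:ℝ) ≤ n := by exact_mod_cast hn
      linarith
    calc ∑ i, r k * x k i ≤ ∑ i : Fin n, ((∑ j, M i j) + n) := Finset.sum_le_sum fun i _ => hb i
    _ = (∑ i, ∑ j, M i j) + ∑ _i : Fin n, (n:ℝ) := Finset.sum_add_distrib
    _ = Cb := by
        rw [Finset.sum_const, Finset.card_univ, Fintype.card_fin, nsmul_eq_mul, hCb]
        push_cast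
        ring
  -- μ ≤ r k
  have hspecne := spec_nonempty hn (M.map (algebraMap ℝ ℂ))
  have hμler : ∀ k, μ ≤ r k := by
    intro k
    have hcw : ∀ lam ∈ spectrum ℂ (M.map (algebraMap ℝ ℂ)), ‖lam‖ ≤ r k := by
      intro lam hlam
      refine cw_upper M hM (x k) (hx k) (r k) (fun i => ?_) lam hlam
      have h1 : M.mulVec (x k) i ≤ r k * x k i := by
        rw [hkey k i]
        have : (0:ℝ) < ((k : ℝ) + 1)⁻¹ := by positivity
        linarith
      exact h1
    refine csSup_le ?_ ?_
    · obtain ⟨lam, hlam⟩ := hspecne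
      exact ⟨‖lam‖, lam, hlam, rfl⟩
    · rintro b ⟨lam, hlam, rfl⟩
      exact hcw lam hlam
  have hbdd : BddAbove ((fun z : ℂ => ‖z‖) '' spectrum ℂ (M.map (algebraMap ℝ ℂ))) := by
    refine ⟨r 0, ?_⟩
    rintro b ⟨l2, hl2, rfl⟩
    refine cw_upper M hM (x 0) (hx 0) (r 0) (fun i => ?_) l2 hl2
    rw [hkey 0 i]
    norm_num
  have hμ0 : 0 ≤ μ := by
    obtain ⟨lam, hlam⟩ := hspecne
    calc (0:ℝ) ≤ ‖lam‖ := norm_nonneg _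
    _ ≤ μ := le_csSup hbdd ⟨lam, hlam, rfl⟩
  -- compact container
  set S : Set (ℝ × (Fin n → ℝ)) :=
    (Set.Icc (0:ℝ) Cb) ×ˢ (Set.pi Set.univ fun _ : Fin n => Set.Icc (0:ℝ) 1) with hS
  have hScompact : IsCompact S :=
    (isCompact_Icc).prod (isCompact_univ_pi fun _ => isCompact_Icc)
  have hmem : ∀ k, (r k, x k) ∈ S := by
    intro k
    exact ⟨⟨(hr k).le, hrCb k⟩, fun j _ => ⟨(hx k j).le, hx1 k j⟩⟩
  obtain ⟨a, haS, φ, hφ, hconv⟩ := hScompact.tendsto_subseq hmem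
  set r' := a.1
  set x' := a.2
  have hconvr : Filter.Tendsto (fun k => r (φ k)) Filter.atTop (nhds r') :=
    (continuous_fst.tendsto a).comp hconv
  have hconvx : ∀ i, Filter.Tendsto (fun k => x (φ k) i) Filter.atTop (nhds (x' i)) := by
    intro i
    exact ((continuous_apply i).comp continuous_snd |>.tendsto a).comp hconv
  -- epsilon tends to zero
  have hεconv : Filter.Tendsto (fun k => ((φ k : ℝ) + 1)⁻¹) Filter.atTop (nhds 0) := by
    have h1 : Filter.Tendsto (fun m : ℕ => ((m : ℝ) + 1)⁻¹) Filter.atTop (nhds 0) := by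
      simpa using tendsto_one_div_add_atTop_nhds_zero_nat (𝕜 := ℝ)
    exact h1.comp hφ.tendsto_atTop
  -- limit equation
  have heig' : M.mulVec x' = r' • x' := by
    funext i
    have hLHS : Filter.Tendsto (fun k => r (φ k) * x (φ k) i) Filter.atTop (nhds (r' * x' i)) :=
      hconvr.mul (hconvx i)
    have hRHS : Filter.Tendsto (fun k => M.mulVec (x (φ k)) i + ((φ k : ℝ) + 1)⁻¹)
        Filter.atTop (nhds (M.mulVec x' i + 0)) := by
      refine Filter.Tendsto.add ?_ hεconv
      have : ∀ w : Fin n → ℝ, M.mulVec w i = ∑ j, M i j * w j := fun w => hmulVec M w i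
      simp only [this]
      exact tendsto_finset_sum _ fun j _ => (tendsto_const_nhds.mul (hconvx j))
    have hsame : (fun k => r (φ k) * x (φ k) i)
        = (fun k => M.mulVec (x (φ k)) i + ((φ k : ℝ) + 1)⁻¹) := by
      funext k; exact hkey (φ k) i
    rw [hsame] at hLHS
    have := tendsto_nhds_unique hLHS hRHS
    simp only [add_zero] at this
    simpa [Pi.smul_apply, smul_eq_mul] using this.symm
  -- x' sums to 1, hence nonzero
  have hsum' : (∑ i, x' i) = 1 := by
    have hconvsum : Filter.Tendsto (fun k => ∑ i, x (φ k) i) Filter.atTop (nhds (∑ i, x' i)) :=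
      tendsto_finset_sum _ fun i _ => hconvx i
    have : (fun k => ∑ i, x (φ k) i) = fun _ => (1:ℝ) := by funext k; exact hsum (φ k)
    rw [this] at hconvsum
    exact (tendsto_nhds_unique tendsto_const_nhds hconvsum).symm
  have hx'0 : ∀ i, 0 ≤ x' i := fun i => (haS.2 i (Set.mem_univ i)).1
  have hx'ne : x' ≠ 0 := by
    intro h0
    rw [h0] at hsum'
    simp at hsum'
  -- r' = μ
  have hμler' : μ ≤ r' := ge_of_tendsto' hconvr fun k => hμler (φ k)
  have hr'leμ : r' ≤ μ := by
    have hmem' := real_eig_mem_spec M r' x' hx'ne heig'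
    have : ‖(r' : ℂ)‖ ≤ μ := le_csSup hbdd ⟨(r' : ℂ), hmem', rfl⟩
    rwa [Complex.norm_real, Real.norm_eq_abs, abs_of_nonneg (le_trans hμ0 hμler')] at this
  have : r' = μ := le_antisymm hr'leμ hμler'
  exact ⟨x', hx'ne, hx'0, by rw [← this]; exact heig', hμ0⟩

theorem mmatrix_inv {n : ℕ} (hn : 0 < n) (C : Matrix (Fin n) (Fin n) ℝ)
    (hoff : ∀ i j, i ≠ j → C i j ≤ 0) (u : Fin n → ℝ) (hu : ∀ i, 0 < u i)
    (hCu : ∀ i, 0 < C.mulVec u i) :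
    IsUnit C.det ∧ (∀ i j, 0 ≤ C⁻¹ i j) := by
  classical
  have hmulVec : ∀ (N : Matrix (Fin n) (Fin n) ℝ) (w : Fin n → ℝ) i,
      N.mulVec w i = ∑ j, N i j * w j := by
    intro N w i; simp [Matrix.mulVec, dotProduct]
  set s : ℝ := 1 + ∑ i, |C i i| with hs
  have hs1 : (1:ℝ) ≤ s := by
    rw [hs]
    have : (0:ℝ) ≤ ∑ i, |C i i| := Finset.sum_nonneg fun i _ => abs_nonneg _
    linarith
  have hspos : 0 < s := lt_of_lt_of_le one_pos hs1
  have hsd : ∀ i, C i i ≤ s - 1 := by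
    intro i
    have h1 : |C i i| ≤ ∑ j, |C j j| :=
      Finset.single_le_sum (f := fun j => |C j j|) (fun j _ => abs_nonneg _) (Finset.mem_univ i)
    have := le_abs_self (C i i)
    rw [hs]; linarith
  set P : Matrix (Fin n) (Fin n) ℝ := s • (1 : Matrix (Fin n) (Fin n) ℝ) - C with hP
  have hPnn : ∀ i j, 0 ≤ P i j := by
    intro i j
    have hPij : P i j = (if i = j then s else 0) - C i j := by
      rw [hP]
      simp only [Matrix.sub_apply, Matrix.smul_apply, Matrix.one_apply, smul_eq_mul,
        mul_ite, mul_one, mul_zero]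
    rw [hPij]
    by_cases h : i = j
    · rw [if_pos h]
      subst h
      linarith [hsd i]
    · rw [if_neg h]
      linarith [hoff i j h]
  have hPu : ∀ i, P.mulVec u i = s * u i - C.mulVec u i := by
    intro i
    rw [hP, Matrix.sub_mulVec, Matrix.smul_mulVec, Matrix.one_mulVec]
    simp
  -- c = max (Pu)_i / u_i < s
  obtain ⟨m, -, hm⟩ := Finset.exists_max_image Finset.univ
    (fun i => P.mulVec u i / u i) ⟨⟨0, hn⟩, Finset.mem_univ _⟩
  set c : ℝ := P.mulVec u m / u m with hc
  have hcle : ∀ i, P.mulVec u i ≤ c * u i := by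
    intro i
    have := hm i (Finset.mem_univ i)
    calc P.mulVec u i = (P.mulVec u i / u i) * u i := (div_mul_cancel₀ _ (hu i).ne').symm
    _ ≤ c * u i := mul_le_mul_of_nonneg_right this (hu i).le
  have hc0 : 0 ≤ c := by
    have h0 : 0 ≤ P.mulVec u m := by
      rw [hmulVec]
      exact Finset.sum_nonneg fun j _ => mul_nonneg (hPnn m j) (hu j).le
    exact div_nonneg h0 (hu m).le
  have hcs : c < s := by
    rw [hc, div_lt_iff₀ (hu m)]
    rw [hPu m]
    have := hCu m
    nlinarith
  -- invertibility
  have hdet : IsUnit C.det := by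
    rw [isUnit_iff_ne_zero]
    intro hdet0
    obtain ⟨v, hv, hCv⟩ := (Matrix.exists_mulVec_eq_zero_iff).mpr hdet0
    have hPv : P.mulVec v = s • v := by
      rw [hP, Matrix.sub_mulVec, Matrix.smul_mulVec, Matrix.one_mulVec, hCv]
      simp
    have hmem := real_eig_mem_spec P s v hv hPv
    have := cw_upper P hPnn u hu c hcle (s : ℂ) hmem
    rw [Complex.norm_real, Real.norm_eq_abs, abs_of_pos hspos] at this
    linarith
  constructor
  · exact hdet
  -- nonnegativity of the inverse
  set R := C⁻¹ with hR
  have hRC : R * C = 1 := Matrix.nonsing_inv_mul C hdet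
  have hrec : R = s⁻¹ • (1 + R * P) := by
    have hCP : s • (1:Matrix (Fin n) (Fin n) ℝ) - P = C := by rw [hP, sub_sub_cancel]
    have h1 : R * (s • (1:Matrix (Fin n) (Fin n) ℝ)) - R * P = 1 := by
      rw [← Matrix.mul_sub, hCP, hRC]
    have h2 : s • R = 1 + R * P := by
      have : R * (s • (1:Matrix (Fin n) (Fin n) ℝ)) = s • R := by
        rw [Matrix.mul_smul, Matrix.mul_one]
      rw [this] at h1
      linear_combination (norm := module) h1
    calc R = s⁻¹ • (s • R) := by rw [smul_smul, inv_mul_cancel₀ hspos.ne', one_smul]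
    _ = s⁻¹ • (1 + R * P) := by rw [h2]
  have hiter : ∀ N : ℕ, R = (∑ k ∈ Finset.range N, ((s⁻¹)^(k+1)) • P^k)
      + ((s⁻¹)^N) • (R * P^N) := by
    intro N
    induction N with
    | zero => simp
    | succ N ih =>
      rw [Finset.sum_range_succ]
      have hstep : R * P^N = s⁻¹ • (P^N + R * P^(N+1)) := by
        calc R * P^N = (s⁻¹ • (1 + R * P)) * P^N := by rw [← hrec]
        _ = s⁻¹ • (P^N + R * P^(N+1)) := by
            rw [Matrix.smul_mul, Matrix.add_mul, Matrix.one_mul]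
            congr 2
            rw [Matrix.mul_assoc, pow_succ']
      calc R = (∑ k ∈ Finset.range N, ((s⁻¹)^(k+1)) • P^k) + ((s⁻¹)^N) • (R * P^N) := ih
      _ = _ := by
          rw [hstep]
          simp only [smul_add, smul_smul, ← pow_succ]
          rw [add_assoc]
  -- entrywise nonnegativity of powers
  have hpow_nn : ∀ N : ℕ, ∀ i j, 0 ≤ (P^N) i j := by
    intro N
    induction N with
    | zero => intro i j; simp [Matrix.one_apply]; positivity
    | succ N ih =>
      intro i j
      rw [pow_succ, Matrix.mul_apply]
      exact Finset.sum_nonneg fun k _ => mul_nonneg (ih i k) (hPnn k j)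
  -- power bound
  have hpow_u : ∀ N : ℕ, ∀ i, (P^N).mulVec u i ≤ c^N * u i := by
    intro N
    induction N with
    | zero => intro i; simp [Matrix.one_mulVec]
    | succ N ih =>
      intro i
      rw [pow_succ, ← Matrix.mulVec_mulVec]
      have h1 : ∀ j, P.mulVec u j ≤ c * u j := hcle
      have h2 : (P^N).mulVec (P.mulVec u) i ≤ (P^N).mulVec (fun j => c * u j) i := by
        rw [hmulVec, hmulVec]
        exact Finset.sum_le_sum fun j _ =>
          mul_le_mul_of_nonneg_left (h1 j) (hpow_nn N i j)
      have h3 : (P^N).mulVec (fun j => c * u j) i = c * (P^N).mulVec u i := by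
        rw [hmulVec, hmulVec, Finset.mul_sum]
        exact Finset.sum_congr rfl fun j _ => by ring
      calc (P^N).mulVec (P.mulVec u) i ≤ c * (P^N).mulVec u i := by rw [← h3]; exact h2
      _ ≤ c * (c^N * u i) := mul_le_mul_of_nonneg_left (ih i) hc0
      _ = c^(N+1) * u i := by ring
  -- entry bound for powers
  have hpow_entry : ∀ N : ℕ, ∀ k j, (P^N) k j ≤ c^N * u k / u j := by
    intro N k j
    have h1 : (P^N) k j * u j ≤ (P^N).mulVec u k := by
      rw [hmulVec]
      exact Finset.single_le_sum (fun l _ => mul_nonneg (hpow_nn N k l) (hu l).le)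
        (Finset.mem_univ j)
    have h2 := hpow_u N k
    rw [le_div_iff₀ (hu j)]
    linarith
  -- conclude
  intro i j
  set K : ℝ := (∑ k, |R i k| * u k) / u j with hK
  have hKnn : 0 ≤ K :=
    div_nonneg (Finset.sum_nonneg fun k _ => mul_nonneg (abs_nonneg _) (hu k).le) (hu j).le
  have hbound : ∀ N : ℕ, -(K * (c/s)^N) ≤ R i j := by
    intro N
    have hexp := congrFun (congrFun (hiter N) i) j
    rw [Matrix.add_apply, Matrix.smul_apply] at hexp
    have hsum_nn : 0 ≤ (∑ k ∈ Finset.range N, ((s⁻¹)^(k+1)) • P^k) i j := by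
      rw [Matrix.sum_apply]
      refine Finset.sum_nonneg fun k _ => ?_
      rw [Matrix.smul_apply, smul_eq_mul]
      exact mul_nonneg (pow_nonneg (inv_nonneg.mpr hspos.le) _) (hpow_nn k i j)
    have herr : |(R * P^N) i j| ≤ K * c^N := by
      rw [Matrix.mul_apply]
      calc |∑ k, R i k * (P^N) k j| ≤ ∑ k, |R i k * (P^N) k j| :=
            Finset.abs_sum_le_sum_abs _ _
      _ = ∑ k, |R i k| * (P^N) k j := by
          refine Finset.sum_congr rfl fun k _ => ?_
          rw [abs_mul, abs_of_nonneg (hpow_nn N k j)]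
      _ ≤ ∑ k, |R i k| * (c^N * u k / u j) := by
          refine Finset.sum_le_sum fun k _ => ?_
          exact mul_le_mul_of_nonneg_left (hpow_entry N k j) (abs_nonneg _)
      _ = K * c^N := by
          rw [hK, div_mul_eq_mul_div, eq_div_iff (hu j).ne', Finset.sum_mul, Finset.sum_mul]
          refine Finset.sum_congr rfl fun k _ => ?_
          field_simp [(hu j).ne']
    have h5 : -(K * c^N) * (s⁻¹)^N ≤ (s⁻¹)^N * (R * P^N) i j := by
      have h6 : -(K * c^N) ≤ (R * P^N) i j := by
        have := abs_le.mp herr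
        linarith [this.1]
      calc -(K * c^N) * (s⁻¹)^N ≤ (R * P^N) i j * (s⁻¹)^N :=
            mul_le_mul_of_nonneg_right h6 (pow_nonneg (inv_nonneg.mpr hspos.le) _)
      _ = (s⁻¹)^N * (R * P^N) i j := mul_comm _ _
    have h7 : -(K * (c/s)^N) = -(K * c^N) * (s⁻¹)^N := by
      rw [div_pow]
      rw [inv_pow]; ring
    rw [h7]
    calc -(K * c^N) * (s⁻¹)^N ≤ (s⁻¹)^N * (R * P^N) i j := h5
    _ ≤ (∑ k ∈ Finset.range N, ((s⁻¹)^(k+1)) • P^k) i j + (s⁻¹)^N • (R * P^N) i j := by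
        rw [smul_eq_mul]; linarith
    _ = R i j := hexp.symm
  -- limit
  have hcs01 : 0 ≤ c / s ∧ c / s < 1 := ⟨div_nonneg hc0 hspos.le, (div_lt_one hspos).mpr hcs⟩
  have htend : Filter.Tendsto (fun N : ℕ => -(K * (c/s)^N)) Filter.atTop (nhds 0) := by
    have h1 : Filter.Tendsto (fun N : ℕ => (c/s)^N) Filter.atTop (nhds 0) :=
      tendsto_pow_atTop_nhds_zero_of_lt_one hcs01.1 hcs01.2
    have h2 := h1.const_mul K
    simpa using h2.neg
  exact le_of_tendsto_of_tendsto' htend tendsto_const_nhds hbound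

/-- Under (c1)–(c3), there is a nonzero entrywise nonnegative eigenvector of
the pencil `(A,B)` for the eigenvalue `ρ(A,B) = μ/(1+μ)`, `μ = ρ((B−A)⁻¹A)`. -/
theorem stmt_4 {n : ℕ} (hn : 0 < n) (A B : Matrix (Fin n) (Fin n) ℝ)
    (hc1 : ∀ i j, 0 ≤ A i j)
    (hc2 : ∀ i j, i ≠ j → B i j ≤ A i j)
    (hc3 : ∃ u : Fin n → ℝ, (∀ i, 0 < u i) ∧ ∀ i, 0 < (B - A).mulVec u i)
    (μ ρAB : ℝ) (hμ : μ = specRad ((B - A)⁻¹ * A)) (hρ : ρAB = μ / (1 + μ)) :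
    ∃ x : Fin n → ℝ, x ≠ 0 ∧ (∀ i, 0 ≤ x i) ∧ A.mulVec x = ρAB • B.mulVec x := by
  classical
  obtain ⟨u, hu, hCu⟩ := hc3
  set C := B - A with hC
  have hoff : ∀ i j, i ≠ j → C i j ≤ 0 := by
    intro i j hij
    simp only [hC, Matrix.sub_apply]
    linarith [hc2 i j hij]
  obtain ⟨hdet, hinv⟩ := mmatrix_inv hn C hoff u hu hCu
  set M := C⁻¹ * A with hM
  have hMnn : ∀ i j, 0 ≤ M i j := by
    intro i j
    rw [hM, Matrix.mul_apply]
    exact Finset.sum_nonneg fun k _ => mul_nonneg (hinv i k) (hc1 k j)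
  obtain ⟨x, hxne, hxnn, heig, hsr0⟩ := pf_nonneg hn M hMnn
  have hμM : μ = specRad M := hμ
  have hμ0 : 0 ≤ μ := by rw [hμM]; exact hsr0
  have h1μ : 0 < 1 + μ := by linarith
  have hAx : A.mulVec x = μ • C.mulVec x := by
    have hCM : C * M = A := by
      rw [hM, ← Matrix.mul_assoc, Matrix.mul_nonsing_inv C hdet, Matrix.one_mul]
    calc A.mulVec x = (C * M).mulVec x := by rw [hCM]
    _ = C.mulVec (M.mulVec x) := by rw [← Matrix.mulVec_mulVec]
    _ = C.mulVec (μ • x) := by rw [heig, ← hμM]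
    _ = μ • C.mulVec x := by rw [Matrix.mulVec_smul]
  refine ⟨x, hxne, hxnn, ?_⟩
  funext i
  have h2 := congrFun hAx i
  simp only [Pi.smul_apply, smul_eq_mul] at h2 ⊢
  have h3 : C.mulVec x i = B.mulVec x i - A.mulVec x i := by
    rw [hC, Matrix.sub_mulVec]
    simp
  rw [h3] at h2
  rw [hρ]
  rw [div_mul_eq_mul_div, eq_div_iff h1μ.ne']
  linarith [h2]
end

section
/- Let A, B be real n×n matrices satisfying: (c1) A is entrywise nonnegative, (c2) B_{ij} ≤ A_{ij} for all i ≠ j, and (c3) there exists an entrywise positive vector u with (B−A)u entrywise positive. Set μ = ρ((B−A)⁻¹A) and ρ(A,B) = μ/(1+μ). Then for every real t with ρ(A,B) < t ≤ 1, the matrix tB − A is a nonsingular M-matrix. -/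
open Matrix

section Aux

lemma specRad_nonneg {m : Type*} [Fintype m] [DecidableEq m] (M : Matrix m m ℝ) :
    0 ≤ specRad M :=
  Real.sSup_nonneg fun x hx => by
    rcases hx with ⟨z, -, rfl⟩; exact norm_nonneg z

lemma abs_le_specRad {m : Type*} [Fintype m] [DecidableEq m] {M : Matrix m m ℝ} {z : ℂ}
    (h : z ∈ spectrum ℂ (M.map (algebraMap ℝ ℂ))) : ‖z‖ ≤ specRad M :=
  le_csSup (((M.map (algebraMap ℝ ℂ)).finite_spectrum.image _).bddAbove) ⟨z, h, rfl⟩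

lemma mem_spectrum_of_det_eq_zero {m : Type*} [Fintype m] [DecidableEq m]
    {M' : Matrix m m ℂ} {z : ℂ} (h : (z • (1 : Matrix m m ℂ) - M').det = 0) :
    z ∈ spectrum ℂ M' := by
  rw [spectrum.mem_iff, Algebra.algebraMap_eq_smul_one, Matrix.isUnit_iff_isUnit_det, h]
  simp

lemma det_eq_zero_of_mem_spectrum {m : Type*} [Fintype m] [DecidableEq m]
    {M' : Matrix m m ℂ} {z : ℂ} (h : z ∈ spectrum ℂ M') :
    (z • (1 : Matrix m m ℂ) - M').det = 0 := by
  rw [spectrum.mem_iff, Algebra.algebraMap_eq_smul_one, Matrix.isUnit_iff_isUnit_det,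
    isUnit_iff_ne_zero, not_not] at h
  exact h

/-- If `P ≥ 0` entrywise, `u > 0`, and `Pu < q·u` entrywise with `q > 0`, then
`ρ(P) < q`. -/
lemma specRad_lt_of_vec {m : Type*} [Fintype m] [DecidableEq m]
    (P : Matrix m m ℝ) (q : ℝ) (hq : 0 < q) (hP : ∀ i j, 0 ≤ P i j)
    (u : m → ℝ) (hu : ∀ i, 0 < u i) (h : ∀ i, P.mulVec u i < q * u i) :
    specRad P < q := by
  set P' := P.map (algebraMap ℝ ℂ) with hP'
  have hfin : ((fun z : ℂ => ‖z‖) '' spectrum ℂ P').Finite :=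
    P'.finite_spectrum.image _
  rcases Set.eq_empty_or_nonempty ((fun z : ℂ => ‖z‖) '' spectrum ℂ P') with he | hne
  · rw [specRad, ← hP', he, Real.sSup_empty]; exact hq
  · have hmem := hne.csSup_mem hfin
    rw [specRad, ← hP']
    obtain ⟨lam, hlam, hE⟩ := hmem
    rw [← hE]
    -- get an eigenvector
    have hdet0 : (lam • (1 : Matrix m m ℂ) - P').det = 0 := det_eq_zero_of_mem_spectrum hlam
    obtain ⟨w, hw0, hw⟩ := (Matrix.exists_mulVec_eq_zero_iff).mpr hdet0
    have hPw : P'.mulVec w = lam • w := by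
      have h1 : (lam • (1 : Matrix m m ℂ) - P').mulVec w
          = lam • w - P'.mulVec w := by
        rw [Matrix.sub_mulVec, Matrix.smul_mulVec, Matrix.one_mulVec]
      rw [h1] at hw
      linear_combination (norm := module) -hw
    haveI : Nonempty m := by
      rcases isEmpty_or_nonempty m with hE' | hN
      · exact absurd (Subsingleton.elim w 0) hw0
      · exact hN
    obtain ⟨i0, -, hi0⟩ := Finset.exists_max_image Finset.univ
      (fun i => ‖w i‖ / u i) Finset.univ_nonempty
    set c := ‖w i0‖ / u i0 with hc
    have hcb : ∀ j, ‖w j‖ ≤ c * u j := fun j =>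
      (div_le_iff₀ (hu j)).mp (hi0 j (Finset.mem_univ j))
    have hcpos : 0 < c := by
      obtain ⟨j, hj⟩ := Function.ne_iff.mp hw0
      have h1 : 0 < ‖w j‖ / u j :=
        div_pos (norm_pos_iff.mpr (by simpa using hj)) (hu j)
      exact lt_of_lt_of_le h1 (hi0 j (Finset.mem_univ j))
    have hwi0 : ‖w i0‖ = c * u i0 := by
      rw [hc, div_mul_cancel₀ _ (ne_of_gt (hu i0))]
    have hcu : 0 < c * u i0 := mul_pos hcpos (hu i0)
    have key : ‖lam‖ * (c * u i0) < q * (c * u i0) := by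
      calc ‖lam‖ * (c * u i0) = ‖lam * w i0‖ := by
            rw [norm_mul, hwi0]
        _ = ‖P'.mulVec w i0‖ := by
            rw [hPw]; simp [smul_eq_mul]
        _ ≤ ∑ j, ‖P' i0 j * w j‖ := by
            rw [show P'.mulVec w i0 = ∑ j, P' i0 j * w j by
              simp [Matrix.mulVec, dotProduct]]
            exact norm_sum_le _ _
        _ = ∑ j, P i0 j * ‖w j‖ := by
            apply Finset.sum_congr rfl; intro j _
            rw [norm_mul, hP', Matrix.map_apply]
            simp [abs_of_nonneg (hP i0 j)]
        _ ≤ ∑ j, P i0 j * (c * u j) :=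
            Finset.sum_le_sum fun j _ => mul_le_mul_of_nonneg_left (hcb j) (hP i0 j)
        _ = c * P.mulVec u i0 := by
            simp only [Matrix.mulVec, dotProduct, Finset.mul_sum]
            apply Finset.sum_congr rfl; intro j _; ring
        _ < c * (q * u i0) := by
            exact (mul_lt_mul_iff_right₀ hcpos).mpr (h i0)
        _ = q * (c * u i0) := by ring
    exact lt_of_mul_lt_mul_right key hcu.le

/-- For a Z-matrix `C` with `Cu > 0`, `u > 0`: solutions of `Cx ≥ 0` satisfy `x ≥ 0`. -/
lemma zmat_sol_nonneg {n : ℕ} (C : Matrix (Fin n) (Fin n) ℝ)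
    (hZ : ∀ i j, i ≠ j → C i j ≤ 0) (u : Fin n → ℝ) (hu : ∀ i, 0 < u i)
    (hCu : ∀ i, 0 < C.mulVec u i) (x : Fin n → ℝ) (hx : ∀ i, 0 ≤ C.mulVec x i) :
    ∀ i, 0 ≤ x i := by
  by_contra hcon
  push_neg at hcon
  obtain ⟨k, hk⟩ := hcon
  haveI : Nonempty (Fin n) := ⟨k⟩
  obtain ⟨i0, -, hi0⟩ := Finset.exists_max_image Finset.univ
    (fun i => -x i / u i) Finset.univ_nonempty
  set c := -x i0 / u i0 with hc
  have hcpos : 0 < c :=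
    lt_of_lt_of_le (div_pos (neg_pos.mpr hk) (hu k)) (hi0 k (Finset.mem_univ k))
  have hxb : ∀ j, -(c * u j) ≤ x j := by
    intro j
    have h1 : -x j ≤ c * u j := (div_le_iff₀ (hu j)).mp (hi0 j (Finset.mem_univ j))
    linarith
  have hxi0 : x i0 = -(c * u i0) := by
    have : c * u i0 = -x i0 := by
      rw [hc, div_mul_cancel₀ _ (ne_of_gt (hu i0))]
    linarith
  have key : C.mulVec x i0 ≤ -(c * C.mulVec u i0) := by
    have hterm : ∀ j, C i0 j * x j ≤ C i0 j * (-(c * u j)) := by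
      intro j
      rcases eq_or_ne j i0 with rfl | hj
      · rw [hxi0]
      · exact mul_le_mul_of_nonpos_left (hxb j) (hZ i0 j (Ne.symm hj))
    calc C.mulVec x i0 = ∑ j, C i0 j * x j := by simp [Matrix.mulVec, dotProduct]
      _ ≤ ∑ j, C i0 j * (-(c * u j)) := Finset.sum_le_sum fun j _ => hterm j
      _ = -(c * ∑ j, C i0 j * u j) := by
          rw [Finset.mul_sum, ← Finset.sum_neg_distrib]
          apply Finset.sum_congr rfl; intro j _; ring
      _ = -(c * C.mulVec u i0) := by simp [Matrix.mulVec, dotProduct]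
  nlinarith [hx i0, mul_pos hcpos (hCu i0)]

end Aux

/-- Under (c1)–(c3), for every `t` with `ρ(A,B) < t ≤ 1`, the matrix `tB − A`
is a nonsingular M-matrix. -/
theorem stmt_5 {n : ℕ} (A B : Matrix (Fin n) (Fin n) ℝ)
    (hc1 : ∀ i j, 0 ≤ A i j)
    (hc2 : ∀ i j, i ≠ j → B i j ≤ A i j)
    (hc3 : ∃ u : Fin n → ℝ, (∀ i, 0 < u i) ∧ ∀ i, 0 < (B - A).mulVec u i)
    (μ ρAB : ℝ) (hμ : μ = specRad ((B - A)⁻¹ * A)) (hρ : ρAB = μ / (1 + μ)) :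
    ∀ t : ℝ, ρAB < t → t ≤ 1 → IsNonsingMMatrix (t • B - A) := by
  obtain ⟨u, hu, hCu⟩ := hc3
  intro t ht ht1
  set C := B - A with hCdef
  have hZC : ∀ i j, i ≠ j → C i j ≤ 0 := by
    intro i j hij
    have := hc2 i j hij
    simp only [hCdef, Matrix.sub_apply]
    linarith
  have hμ0 : 0 ≤ μ := hμ ▸ specRad_nonneg _
  have hρ0 : 0 ≤ ρAB := by rw [hρ]; positivity
  have ht0 : 0 < t := lt_of_le_of_lt hρ0 ht
  set s := (1 - t) / t with hs
  have hs0 : 0 ≤ s := div_nonneg (by linarith) ht0.le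
  have hts : t * s = 1 - t := by rw [hs]; field_simp
  have hsμ : s * μ < 1 := by
    rw [hρ, div_lt_iff₀ (by linarith : (0:ℝ) < 1 + μ)] at ht
    have h1 : t * (s * μ) = (1 - t) * μ := by rw [← mul_assoc, hts]
    nlinarith
  -- C is invertible
  have hdetC : C.det ≠ 0 := by
    intro h0
    obtain ⟨w, hw0, hw⟩ := (Matrix.exists_mulVec_eq_zero_iff).mpr h0
    have h1 := zmat_sol_nonneg C hZC u hu hCu w (by rw [hw]; intro i; exact le_refl 0)
    have h2 := zmat_sol_nonneg C hZC u hu hCu (-w)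
      (by rw [Matrix.mulVec_neg, hw]; intro i; simp)
    apply hw0
    funext i
    have h3 := h1 i
    have h4 := h2 i
    simp only [Pi.neg_apply] at h4
    have h5 : w i = 0 := le_antisymm (by linarith) h3
    simp [h5]
  have hunit : IsUnit C.det := isUnit_iff_ne_zero.mpr hdetC
  have hCinv : ∀ i j, 0 ≤ C⁻¹ i j := by
    intro i j
    have hsol : ∀ k, 0 ≤ C.mulVec (C⁻¹.mulVec (Pi.single j 1)) k := by
      rw [Matrix.mulVec_mulVec, Matrix.mul_nonsing_inv _ hunit, Matrix.one_mulVec]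
      intro k
      rcases eq_or_ne k j with rfl | h
      · simp
      · simp [Pi.single_apply, h]
    have h6 := zmat_sol_nonneg C hZC u hu hCu _ hsol i
    rw [Matrix.mulVec_single] at h6
    simpa using h6
  set Mm := C⁻¹ * A with hMm
  have hMm0 : ∀ i j, 0 ≤ Mm i j := by
    intro i j
    rw [hMm, Matrix.mul_apply]
    exact Finset.sum_nonneg fun k _ => mul_nonneg (hCinv i k) (hc1 k j)
  have hA : C * Mm = A := by
    rw [hMm, ← Matrix.mul_assoc, Matrix.mul_nonsing_inv _ hunit, Matrix.one_mul]
  -- the matrices 1 - s'•Mm are nonsingular for 0 ≤ s' ≤ s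
  have hdet : ∀ s' ∈ Set.Icc (0:ℝ) s, ((1 : Matrix (Fin n) (Fin n) ℝ) - s' • Mm).det ≠ 0 := by
    rintro s' ⟨hs'0, hs's⟩ h0
    rcases eq_or_lt_of_le hs'0 with rfl | hs'pos
    · simp at h0
    · have hz : (s' : ℂ) ≠ 0 := by exact_mod_cast ne_of_gt hs'pos
      have hmap : ((1 : Matrix (Fin n) (Fin n) ℝ) - s' • Mm).map (algebraMap ℝ ℂ)
          = 1 - (s' : ℂ) • Mm.map (algebraMap ℝ ℂ) := by
        ext i j
        by_cases h : i = j <;>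
          simp [Matrix.map_apply, Matrix.one_apply, h, mul_comm]
      have h1 : ((1 : Matrix (Fin n) (Fin n) ℂ) - (s' : ℂ) • Mm.map (algebraMap ℝ ℂ)).det = 0 := by
        rw [← hmap, ← RingHom.mapMatrix_apply, ← RingHom.map_det, h0, map_zero]
      have h2 : ((s' : ℂ)⁻¹) • (1 : Matrix (Fin n) (Fin n) ℂ) - Mm.map (algebraMap ℝ ℂ)
          = (s' : ℂ)⁻¹ • ((1 : Matrix (Fin n) (Fin n) ℂ) - (s' : ℂ) • Mm.map (algebraMap ℝ ℂ)) := by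
        rw [smul_sub, smul_smul, inv_mul_cancel₀ hz, one_smul]
      have hdet2 : ((s' : ℂ)⁻¹ • (1 : Matrix (Fin n) (Fin n) ℂ) - Mm.map (algebraMap ℝ ℂ)).det = 0 := by
        rw [h2, Matrix.det_smul, h1, mul_zero]
      have hmem : ((s' : ℂ)⁻¹) ∈ spectrum ℂ (Mm.map (algebraMap ℝ ℂ)) :=
        mem_spectrum_of_det_eq_zero hdet2
      have hle : ‖(s' : ℂ)⁻¹‖ ≤ specRad Mm := abs_le_specRad hmem
      have habs : ‖(s' : ℂ)⁻¹‖ = s'⁻¹ := by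
        rw [norm_inv]
        simp [abs_of_pos hs'pos]
      rw [habs, ← hμ] at hle
      have h7 : 1 ≤ s' * μ := by
        calc (1:ℝ) = s' * s'⁻¹ := (mul_inv_cancel₀ (ne_of_gt hs'pos)).symm
          _ ≤ s' * μ := mul_le_mul_of_nonneg_left hle hs'pos.le
      have h8 : s' * μ ≤ s * μ := mul_le_mul_of_nonneg_right hs's hμ0
      linarith
  -- continuity and connectedness: v = (1 - s•Mm)⁻¹ u is positive
  set F : ℝ → Matrix (Fin n) (Fin n) ℝ := fun r => 1 - r • Mm with hF
  set G : ℝ → (Fin n → ℝ) := fun r => ((F r).det)⁻¹ • ((F r).adjugate.mulVec u) with hG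
  have hGinv : ∀ r, G r = (F r)⁻¹.mulVec u := by
    intro r
    rw [hG, Matrix.inv_def, Ring.inverse_eq_inv, Matrix.smul_mulVec]
  have hFc : Continuous F := by
    apply continuous_matrix
    intro i j
    simp only [hF, Matrix.sub_apply, Matrix.smul_apply, smul_eq_mul]
    fun_prop
  have hdetc : Continuous fun r => (F r).det := hFc.matrix_det
  have hadjc : Continuous fun r => (F r).adjugate.mulVec u :=
    (hFc.matrix_adjugate).matrix_mulVec continuous_const
  have hGc : ContinuousOn G (Set.Icc 0 s) := by
    refine ContinuousOn.smul (f := fun r => ((F r).det)⁻¹) (g := fun r => (F r).adjugate.mulVec u) ?_ ?_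
    · exact (hdetc.continuousOn).inv₀ fun r hr => hdet r hr
    · exact hadjc.continuousOn
  have hGrestrict : Continuous ((Set.Icc (0:ℝ) s).restrict G) :=
    continuousOn_iff_continuous_restrict.mp hGc
  have hGid : ∀ r ∈ Set.Icc (0:ℝ) s, G r = u + r • Mm.mulVec (G r) := by
    intro r hr
    have h1 : (F r).mulVec (G r) = u := by
      rw [hGinv r, Matrix.mulVec_mulVec,
        Matrix.mul_nonsing_inv _ (isUnit_iff_ne_zero.mpr (hdet r hr)), Matrix.one_mulVec]
    have h2 : (F r).mulVec (G r) = G r - r • Mm.mulVec (G r) := by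
      rw [hF]
      simp only
      rw [Matrix.sub_mulVec, Matrix.one_mulVec, Matrix.smul_mulVec]
    rw [h2] at h1
    funext i
    have h3 := congrFun h1 i
    simp only [Pi.sub_apply, Pi.add_apply, Pi.smul_apply, smul_eq_mul] at h3 ⊢
    linarith
  haveI : PreconnectedSpace (Set.Icc (0:ℝ) s) := Subtype.preconnectedSpace isPreconnected_Icc
  set K : Set (Set.Icc (0:ℝ) s) := {p | ∀ i, 0 < G p.1 i} with hK
  have hKopen : IsOpen K := by
    rw [hK, Set.setOf_forall]
    refine isOpen_iInter_of_finite fun i => ?_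
    exact IsOpen.preimage ((continuous_apply i).comp hGrestrict) isOpen_Ioi
  have hKeq : K = {p : Set.Icc (0:ℝ) s | ∀ i, 0 ≤ G p.1 i} := by
    ext p
    constructor
    · exact fun hp i => (hp i).le
    · intro hp i
      have h1 := congrFun (hGid p.1 p.2) i
      have hmv : 0 ≤ Mm.mulVec (G p.1) i := by
        have h2 : Mm.mulVec (G p.1) i = ∑ j, Mm i j * G p.1 j := by
          simp [Matrix.mulVec, dotProduct]
        rw [h2]
        exact Finset.sum_nonneg fun j _ => mul_nonneg (hMm0 i j) (hp j)
      have hr0 : 0 ≤ (p.1 : ℝ) := p.2.1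
      simp only [Pi.add_apply, Pi.smul_apply, smul_eq_mul] at h1
      nlinarith [hu i, mul_nonneg hr0 hmv]
  have hKclosed : IsClosed K := by
    rw [hKeq, Set.setOf_forall]
    refine isClosed_iInter fun i => ?_
    exact IsClosed.preimage ((continuous_apply i).comp hGrestrict) isClosed_Ici
  have h0mem : (⟨0, Set.left_mem_Icc.mpr hs0⟩ : Set.Icc (0:ℝ) s) ∈ K := by
    intro i
    have hG0 : G 0 = u := by
      simp [hG, hF]
    rw [hG0]
    exact hu i
  have hKuniv : K = Set.univ := IsClopen.eq_univ ⟨hKclosed, hKopen⟩ ⟨_, h0mem⟩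
  have hsmem : (⟨s, Set.right_mem_Icc.mpr hs0⟩ : Set.Icc (0:ℝ) s) ∈ K := by
    rw [hKuniv]; trivial
  set v := G s with hv
  have hv0 : ∀ i, 0 < v i := hsmem
  have hFu : (F s).mulVec v = u := by
    rw [hv, hGinv s, Matrix.mulVec_mulVec,
      Matrix.mul_nonsing_inv _ (isUnit_iff_ne_zero.mpr (hdet s (Set.right_mem_Icc.mpr hs0))),
      Matrix.one_mulVec]
  have e1 : t • B - A = t • (C - s • A) := by
    ext i j
    simp only [hCdef, Matrix.sub_apply, Matrix.smul_apply, smul_eq_mul]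
    linear_combination (A i j) * hts
  have e2 : C - s • A = C * F s := by
    rw [hF]
    simp only
    rw [Matrix.mul_sub, Matrix.mul_one, Matrix.mul_smul, hA]
  have hXv : (t • B - A).mulVec v = t • C.mulVec u := by
    rw [e1, e2, Matrix.smul_mulVec, ← Matrix.mulVec_mulVec, hFu]
  set X := t • B - A with hX
  set q : ℝ := 1 + ∑ i, |X i i| with hq
  have hsum0 : 0 ≤ ∑ i, |X i i| := Finset.sum_nonneg fun i _ => abs_nonneg _
  have hq1 : (1:ℝ) ≤ q := by rw [hq]; linarith
  have hqd : ∀ i, X i i ≤ q := by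
    intro i
    have h1 : |X i i| ≤ ∑ j, |X j j| :=
      Finset.single_le_sum (f := fun j => |X j j|) (fun j _ => abs_nonneg _) (Finset.mem_univ i)
    have h2 := le_abs_self (X i i)
    rw [hq]
    linarith
  set P : Matrix (Fin n) (Fin n) ℝ := q • 1 - X with hP
  have hPnn : ∀ i j, 0 ≤ P i j := by
    intro i j
    rcases eq_or_ne i j with rfl | hij
    · simp only [hP, Matrix.sub_apply, Matrix.smul_apply, Matrix.one_apply_eq, smul_eq_mul,
        mul_one]
      linarith [hqd i]
    · have hBA : X i j ≤ 0 := by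
        have h1 := hc2 i j hij
        have h2 : t * B i j ≤ t * A i j := mul_le_mul_of_nonneg_left h1 ht0.le
        have h3 : t * A i j ≤ A i j := mul_le_of_le_one_left (hc1 i j) ht1
        simp only [hX, Matrix.sub_apply, Matrix.smul_apply, smul_eq_mul]
        linarith
      simp only [hP, Matrix.sub_apply, Matrix.smul_apply, Matrix.one_apply_ne hij, smul_eq_mul,
        mul_zero]
      linarith
  have hPv : ∀ i, P.mulVec v i < q * v i := by
    intro i
    have h1 : P.mulVec v = q • v - X.mulVec v := by
      rw [hP, Matrix.sub_mulVec, Matrix.smul_mulVec, Matrix.one_mulVec]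
    have h2 := congrFun h1 i
    have h3 := congrFun hXv i
    simp only [Pi.sub_apply, Pi.smul_apply, smul_eq_mul] at h2 h3
    rw [h2, h3]
    have h4 := mul_pos ht0 (hCu i)
    linarith
  exact ⟨q, P, hPnn, (sub_sub_cancel _ _).symm, specRad_lt_of_vec P q (by linarith) hPnn v hv0 hPv⟩
end

section
/- Let A, B be real n×n matrices satisfying: (c1) A is entrywise nonnegative, (c2) B_{ij} ≤ A_{ij} for all i ≠ j, and (c3) there exists an entrywise positive vector u with (B−A)u entrywise positive. Set μ = ρ((B−A)⁻¹A) and ρ(A,B) = μ/(1+μ). Then the matrix ρ(A,B)·B − A is a singular M-matrix (i.e., an M-matrix that is not invertible). -/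
open Matrix

namespace PFAux
open Finset

variable {n : ℕ}

/-- Discrete maximum principle for Z-matrices with a positive superharmonic vector. -/
lemma maxp {C : Matrix (Fin n) (Fin n) ℝ} (hZ : ∀ i j, i ≠ j → C i j ≤ 0)
    {u : Fin n → ℝ} (hu : ∀ i, 0 < u i) (hCu : ∀ i, 0 < C.mulVec u i)
    {x : Fin n → ℝ} (hx : ∀ i, 0 ≤ C.mulVec x i) : ∀ i, 0 ≤ x i := by
  by_contra h
  push_neg at h
  obtain ⟨j, hj⟩ := h
  obtain ⟨i₀, -, hmin⟩ := Finset.exists_min_image Finset.univ (fun i => x i / u i)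
    ⟨j, Finset.mem_univ j⟩
  set t := x i₀ / u i₀ with ht
  have htneg : t < 0 := lt_of_le_of_lt (hmin j (Finset.mem_univ j))
    (div_neg_of_neg_of_pos hj (hu j))
  have hxi₀ : x i₀ = t * u i₀ := by
    rw [ht, div_mul_cancel₀]
    exact ne_of_gt (hu i₀)
  have hall : ∀ i, t * u i ≤ x i := by
    intro i
    have := hmin i (Finset.mem_univ i)
    calc t * u i ≤ (x i / u i) * u i := by
          exact mul_le_mul_of_nonneg_right this (le_of_lt (hu i))
      _ = x i := div_mul_cancel₀ _ (ne_of_gt (hu i))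
  have hkey : C.mulVec x i₀ ≤ t * C.mulVec u i₀ := by
    simp only [Matrix.mulVec, dotProduct]
    rw [Finset.mul_sum]
    apply Finset.sum_le_sum
    intro k _
    rcases eq_or_ne k i₀ with rfl | hk
    · rw [hxi₀]; ring_nf; exact le_rfl
    · have h1 : C i₀ k ≤ 0 := hZ i₀ k (Ne.symm hk)
      have h2 : t * u k ≤ x k := hall k
      nlinarith [h2, h1]
  have : t * C.mulVec u i₀ < 0 := mul_neg_of_neg_of_pos htneg (hCu i₀)
  linarith [hx i₀, hkey]


section MP
variable {C : Matrix (Fin n) (Fin n) ℝ} {u : Fin n → ℝ}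

lemma maxp_isUnit_det (hZ : ∀ i j, i ≠ j → C i j ≤ 0)
    (hu : ∀ i, 0 < u i) (hCu : ∀ i, 0 < C.mulVec u i) : IsUnit C.det := by
  rw [← Matrix.isUnit_iff_isUnit_det, ← Matrix.mulVec_injective_iff_isUnit]
  intro x y hxy
  have key : ∀ z : Fin n → ℝ, C.mulVec z = 0 → ∀ i, z i = 0 := by
    intro z hz i
    have h1 : ∀ i, 0 ≤ z i := maxp hZ hu hCu (by simp [hz])
    have h2 : ∀ i, 0 ≤ -z i := by
      refine maxp hZ hu hCu (x := -z) ?_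
      intro i
      simp [Matrix.mulVec_neg, hz]
    have := h1 i; have := h2 i
    linarith [h2 i]
  have : C.mulVec (x - y) = 0 := by
    rw [Matrix.mulVec_sub, hxy, sub_self]
  funext i
  have := key _ this i
  simp only [Pi.sub_apply] at this
  linarith

lemma maxp_inv_nonneg (hZ : ∀ i j, i ≠ j → C i j ≤ 0)
    (hu : ∀ i, 0 < u i) (hCu : ∀ i, 0 < C.mulVec u i) : ∀ i j, 0 ≤ C⁻¹ i j := by
  intro i j
  have hdet := maxp_isUnit_det hZ hu hCu
  have hCC : C * C⁻¹ = 1 := Matrix.mul_nonsing_inv C hdet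
  have hx : ∀ i, 0 ≤ C.mulVec (fun k => C⁻¹ k j) i := by
    intro i
    have : C.mulVec (fun k => C⁻¹ k j) i = (C * C⁻¹) i j := by
      simp [Matrix.mulVec, dotProduct, Matrix.mul_apply]
    rw [this, hCC]
    by_cases hij : i = j <;> simp [Matrix.one_apply, hij]
  exact maxp hZ hu hCu hx i

/-- Diagonal entries of a nonnegative left-inverse of a Z-matrix are positive. -/
lemma diag_pos_of_left_inv {S : Matrix (Fin n) (Fin n) ℝ} (hSC : S * C = 1)
    (hZ : ∀ i j, i ≠ j → C i j ≤ 0) (hS : ∀ i j, 0 ≤ S i j) : ∀ i, 0 < S i i := by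
  intro i
  rcases lt_or_eq_of_le (hS i i) with h | h
  · exact h
  · exfalso
    have h1 : (S * C) i i = 1 := by rw [hSC]; simp [Matrix.one_apply]
    rw [Matrix.mul_apply] at h1
    have : ∑ j, S i j * C j i ≤ 0 := by
      apply Finset.sum_nonpos
      intro j _
      rcases eq_or_ne j i with rfl | hj
      · rw [← h]; ring_nf; exact le_rfl
      · exact mul_nonpos_of_nonneg_of_nonpos (hS i j) (hZ j i hj)
    linarith

end MP

section Resolvent

variable {T : Matrix (Fin n) (Fin n) ℝ}

/-- `s•1 - T` is invertible with entrywise-nonnegative inverse. -/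
def Good (T : Matrix (Fin n) (Fin n) ℝ) (s : ℝ) : Prop :=
  IsUnit (s • (1 : Matrix (Fin n) (Fin n) ℝ) - T).det ∧
    ∀ i j, 0 ≤ (s • (1 : Matrix (Fin n) (Fin n) ℝ) - T)⁻¹ i j

lemma sOneSubZ (hT : ∀ i j, 0 ≤ T i j) (s : ℝ) :
    ∀ i j, i ≠ j → (s • (1 : Matrix (Fin n) (Fin n) ℝ) - T) i j ≤ 0 := by
  intro i j hij
  simp [Matrix.sub_apply, Matrix.smul_apply, Matrix.one_apply_ne hij, hT i j]

lemma mulVec_sOneSub (s : ℝ) (x : Fin n → ℝ) :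
    (s • (1 : Matrix (Fin n) (Fin n) ℝ) - T).mulVec x = s • x - T.mulVec x := by
  rw [Matrix.sub_mulVec, Matrix.smul_mulVec, Matrix.one_mulVec]

lemma good_of_pos_vec (hT : ∀ i j, 0 ≤ T i j) {s : ℝ} {u : Fin n → ℝ}
    (hu : ∀ i, 0 < u i)
    (h : ∀ i, 0 < ((s • (1 : Matrix (Fin n) (Fin n) ℝ) - T).mulVec u) i) : Good T s :=
  ⟨maxp_isUnit_det (sOneSubZ hT s) hu h, maxp_inv_nonneg (sOneSubZ hT s) hu h⟩

lemma good_of_big (hn : 0 < n) (hT : ∀ i j, 0 ≤ T i j) {s : ℝ}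
    (hs : ∀ i, ∑ j, T i j < s) : Good T s := by
  refine good_of_pos_vec hT (u := fun _ => 1) (fun _ => one_pos) ?_
  intro i
  rw [mulVec_sOneSub]
  have : T.mulVec (fun _ => 1) i = ∑ j, T i j := by
    simp [Matrix.mulVec, dotProduct]
  simp only [Pi.sub_apply, Pi.smul_apply, smul_eq_mul, mul_one, this]
  linarith [hs i]

/-- The canonical positive vector associated to a good value. -/
lemma good_vec (hT : ∀ i j, 0 ≤ T i j) {s : ℝ} (hs : Good T s) :
    ∃ u : Fin n → ℝ, (∀ i, 0 < u i) ∧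
      (s • (1 : Matrix (Fin n) (Fin n) ℝ) - T).mulVec u = fun _ => 1 := by
  set R := (s • (1 : Matrix (Fin n) (Fin n) ℝ) - T)⁻¹
  refine ⟨R.mulVec (fun _ => 1), ?_, ?_⟩
  · intro i
    have hdiag : 0 < R i i := by
      have h1 : R * (s • (1 : Matrix (Fin n) (Fin n) ℝ) - T) = 1 :=
        Matrix.nonsing_inv_mul _ hs.1
      exact diag_pos_of_left_inv h1 (sOneSubZ hT s) hs.2 i
    have : R i i ≤ R.mulVec (fun _ => 1) i := by
      simp only [Matrix.mulVec, dotProduct, mul_one]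
      exact Finset.single_le_sum (fun j _ => hs.2 i j) (Finset.mem_univ i)
    linarith
  · rw [Matrix.mulVec_mulVec, Matrix.mul_nonsing_inv _ hs.1, Matrix.one_mulVec]

lemma good_mono_up (hT : ∀ i j, 0 ≤ T i j) {s t : ℝ} (hst : s ≤ t) (hs : Good T s) :
    Good T t := by
  obtain ⟨u, hu, hequ⟩ := good_vec hT hs
  refine good_of_pos_vec hT hu ?_
  intro i
  have : (t • (1 : Matrix (Fin n) (Fin n) ℝ) - T).mulVec u
      = (s • (1 : Matrix (Fin n) (Fin n) ℝ) - T).mulVec u + (t - s) • u := by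
    rw [mulVec_sOneSub, mulVec_sOneSub]
    funext k
    simp only [Pi.sub_apply, Pi.add_apply, Pi.smul_apply, smul_eq_mul]
    ring
  rw [this, hequ]
  have : 0 ≤ (t - s) * u i := mul_nonneg (by linarith) (le_of_lt (hu i))
  simp only [Pi.add_apply, Pi.smul_apply, smul_eq_mul]
  linarith

lemma good_down (hn : 0 < n) (hT : ∀ i j, 0 ≤ T i j) {s : ℝ} (hs : Good T s) :
    ∃ δ > 0, ∀ t, s - δ < t → t ≤ s → Good T t := by
  obtain ⟨u, hu, hequ⟩ := good_vec hT hs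
  haveI : Nonempty (Fin n) := ⟨⟨0, hn⟩⟩
  set m := Finset.univ.sup' Finset.univ_nonempty u with hm
  have hmu : ∀ i, u i ≤ m := fun i => Finset.le_sup' u (Finset.mem_univ i)
  have hmpos : 0 < m := lt_of_lt_of_le (hu (Classical.arbitrary _)) (hmu _)
  refine ⟨m⁻¹, inv_pos.mpr hmpos, ?_⟩
  intro t h1 h2
  refine good_of_pos_vec hT hu ?_
  intro i
  have : (t • (1 : Matrix (Fin n) (Fin n) ℝ) - T).mulVec u
      = (s • (1 : Matrix (Fin n) (Fin n) ℝ) - T).mulVec u + (t - s) • u := by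
    rw [mulVec_sOneSub, mulVec_sOneSub]
    funext k
    simp only [Pi.sub_apply, Pi.add_apply, Pi.smul_apply, smul_eq_mul]
    ring
  rw [this, hequ]
  simp only [Pi.add_apply, Pi.smul_apply, smul_eq_mul]
  have h3 : (s - t) * u i < 1 := by
    have h4 : s - t < m⁻¹ := by linarith
    have h5 : u i ≤ m := hmu i
    rcases le_or_gt (s - t) 0 with h6 | h6
    · have : (s - t) * u i ≤ 0 := mul_nonpos_of_nonpos_of_nonneg h6 (le_of_lt (hu i))
      linarith
    · calc (s - t) * u i ≤ (s - t) * m := by nlinarith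
        _ < m⁻¹ * m := by nlinarith
        _ = 1 := inv_mul_cancel₀ (ne_of_gt hmpos)
  nlinarith

/-- Resolvent comparison: for `t ≤ s`, entrywise `R(s) ≤ R(t)`. -/
lemma res_mono (ht : Good T t) (hs : Good T s) (hts : t ≤ s) :
    ∀ i j, (s • (1 : Matrix (Fin n) (Fin n) ℝ) - T)⁻¹ i j
      ≤ (t • (1 : Matrix (Fin n) (Fin n) ℝ) - T)⁻¹ i j := by
  set Rt := (t • (1 : Matrix (Fin n) (Fin n) ℝ) - T)⁻¹
  set Rs := (s • (1 : Matrix (Fin n) (Fin n) ℝ) - T)⁻¹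
  have key : Rt - Rs = (s - t) • (Rt * Rs) := by
    have h1 : Rt * ((s • (1 : Matrix (Fin n) (Fin n) ℝ) - T)
        - (t • (1 : Matrix (Fin n) (Fin n) ℝ) - T)) * Rs = Rt - Rs := by
      rw [Matrix.mul_sub, Matrix.sub_mul]
      rw [Matrix.mul_assoc, Matrix.mul_nonsing_inv _ hs.1, Matrix.mul_one]
      rw [Matrix.nonsing_inv_mul _ ht.1, Matrix.one_mul]
    have h2 : (s • (1 : Matrix (Fin n) (Fin n) ℝ) - T)
        - (t • (1 : Matrix (Fin n) (Fin n) ℝ) - T) = (s - t) • (1 : Matrix (Fin n) (Fin n) ℝ) := by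
      rw [sub_smul]; abel
    rw [← h1, h2]
    rw [Matrix.mul_smul, Matrix.smul_mul, Matrix.mul_one]
  intro i j
  have h3 : 0 ≤ (Rt - Rs) i j := by
    rw [key]
    simp only [Matrix.smul_apply, smul_eq_mul, Matrix.mul_apply]
    apply mul_nonneg (by linarith)
    exact Finset.sum_nonneg fun k _ => mul_nonneg (ht.2 i k) (hs.2 k j)
  simpa [Matrix.sub_apply, sub_nonneg] using h3

end Resolvent

section Dichotomy

variable {T : Matrix (Fin n) (Fin n) ℝ}

lemma dichotomy (hn : 0 < n) (hT : ∀ i j, 0 ≤ T i j) (t : ℝ)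
    (hgood : ∀ s, t < s → Good T s) :
    Good T t ∨ ∃ v : Fin n → ℝ, (∀ i, 0 ≤ v i) ∧ v ≠ 0 ∧ T.mulVec v = t • v := by
  haveI : Nonempty (Fin n) := ⟨⟨0, hn⟩⟩
  set s : ℕ → ℝ := fun k => t + 1 / (k + 1) with hsdef
  have hspos : ∀ k, t < s k := by
    intro k
    have : (0:ℝ) < 1 / (k + 1) := by positivity
    simp only [hsdef]; linarith
  have hgoods : ∀ k, Good T (s k) := fun k => hgood _ (hspos k)
  have hsanti : ∀ k l, k ≤ l → s l ≤ s k := by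
    intro k l hkl
    have h1 : (k:ℝ) + 1 ≤ (l:ℝ) + 1 := by exact_mod_cast by omega
    have : 1 / ((l:ℝ) + 1) ≤ 1 / ((k:ℝ) + 1) := by
      apply one_div_le_one_div_of_le (by positivity) h1
    simp only [hsdef]; linarith
  have hstend : Filter.Tendsto s Filter.atTop (nhds t) := by
    have : Filter.Tendsto (fun k : ℕ => 1 / ((k:ℝ) + 1)) Filter.atTop (nhds 0) :=
      tendsto_one_div_add_atTop_nhds_zero_nat
    simpa [hsdef] using (tendsto_const_nhds (x := t)).add this
  set R : ℕ → Matrix (Fin n) (Fin n) ℝ :=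
    fun k => (s k • (1 : Matrix (Fin n) (Fin n) ℝ) - T)⁻¹ with hRdef
  have hRmono : ∀ i j, Monotone fun k => R k i j := by
    intro i j k l hkl
    exact res_mono (hgoods l) (hgoods k) (hsanti k l hkl) i j
  have hRnn : ∀ k i j, 0 ≤ R k i j := fun k => (hgoods k).2
  have hReq : ∀ k, (s k • (1 : Matrix (Fin n) (Fin n) ℝ) - T) * R k = 1 :=
    fun k => Matrix.mul_nonsing_inv _ (hgoods k).1
  by_cases hbdd : ∀ i j, BddAbove (Set.range fun k => R k i j)
  · -- bounded case : Good t
    left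
    set Rstar : Matrix (Fin n) (Fin n) ℝ := Matrix.of fun i j => ⨆ k, R k i j with hRstar
    have hRtend : ∀ i j, Filter.Tendsto (fun k => R k i j) Filter.atTop (nhds (Rstar i j)) :=
      fun i j => tendsto_atTop_ciSup (hRmono i j) (hbdd i j)
    have hkey : (t • (1 : Matrix (Fin n) (Fin n) ℝ) - T) * Rstar = 1 := by
      ext i j
      have h1 : Filter.Tendsto
          (fun k => ((t • (1 : Matrix (Fin n) (Fin n) ℝ) - T) * R k) i j)
          Filter.atTop (nhds (((t • (1 : Matrix (Fin n) (Fin n) ℝ) - T) * Rstar) i j)) := by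
        simp only [Matrix.mul_apply]
        exact tendsto_finset_sum _ fun m _ => (hRtend m j).const_mul _
      have h2 : ∀ k, ((t • (1 : Matrix (Fin n) (Fin n) ℝ) - T) * R k) i j
          = (1 : Matrix (Fin n) (Fin n) ℝ) i j - (s k - t) * R k i j := by
        intro k
        have : (t • (1 : Matrix (Fin n) (Fin n) ℝ) - T)
            = (s k • (1 : Matrix (Fin n) (Fin n) ℝ) - T)
              - (s k - t) • (1 : Matrix (Fin n) (Fin n) ℝ) := by
          rw [sub_smul]; abel
        rw [this, Matrix.sub_mul, hReq k, Matrix.smul_mul, Matrix.one_mul]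
        simp [Matrix.sub_apply, Matrix.smul_apply]
      have h3 : Filter.Tendsto
          (fun k => (1 : Matrix (Fin n) (Fin n) ℝ) i j - (s k - t) * R k i j)
          Filter.atTop (nhds ((1 : Matrix (Fin n) (Fin n) ℝ) i j)) := by
        have hst : Filter.Tendsto (fun k => s k - t) Filter.atTop (nhds 0) := by
          simpa using hstend.sub (tendsto_const_nhds (x := t))
        have h4 : Filter.Tendsto (fun k => (s k - t) * R k i j) Filter.atTop (nhds 0) := by
          simpa using hst.mul (hRtend i j)
        have h5 := (tendsto_const_nhds (x := (1 : Matrix (Fin n) (Fin n) ℝ) i j)).sub h4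
        rw [sub_zero] at h5
        exact h5
      simp only [h2] at h1
      exact tendsto_nhds_unique h1 h3
    have hdet : IsUnit (t • (1 : Matrix (Fin n) (Fin n) ℝ) - T).det := by
      have := congrArg Matrix.det hkey
      rw [Matrix.det_mul, Matrix.det_one] at this
      exact IsUnit.of_mul_eq_one _ this
    have hinv : (t • (1 : Matrix (Fin n) (Fin n) ℝ) - T)⁻¹ = Rstar :=
      Matrix.inv_eq_right_inv hkey
    refine ⟨hdet, ?_⟩
    intro i j
    rw [hinv]
    have : R 0 i j ≤ Rstar i j := le_ciSup (hbdd i j) 0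
    have h0 := hRnn 0 i j
    simp only [hRstar, Matrix.of_apply] at this ⊢
    linarith
  · -- unbounded case : eigenvector
    right
    push_neg at hbdd
    obtain ⟨i₀, j₀, hub⟩ := hbdd
    have htop : Filter.Tendsto (fun k => R k i₀ j₀) Filter.atTop Filter.atTop := by
      rcases tendsto_of_monotone (hRmono i₀ j₀) with h | ⟨l, hl⟩
      · exact h
      · exact absurd ⟨l, by rintro x ⟨k, rfl⟩; exact Monotone.ge_of_tendsto (hRmono i₀ j₀) hl k⟩ hub
    set w : ℕ → Fin n → ℝ := fun k => (R k).mulVec (fun _ => 1) with hwdef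
    have hweq : ∀ k, (s k • (1 : Matrix (Fin n) (Fin n) ℝ) - T).mulVec (w k)
        = fun _ => 1 := by
      intro k
      rw [hwdef]
      simp only
      rw [Matrix.mulVec_mulVec, hReq k, Matrix.one_mulVec]
    have hwnn : ∀ k i, 0 ≤ w k i := by
      intro k i
      simp only [hwdef, Matrix.mulVec, dotProduct, mul_one]
      exact Finset.sum_nonneg fun j _ => hRnn k i j
    have hwge : ∀ k, R k i₀ j₀ ≤ w k i₀ := by
      intro k
      simp only [hwdef, Matrix.mulVec, dotProduct, mul_one]
      exact Finset.single_le_sum (fun j _ => hRnn k i₀ j) (Finset.mem_univ j₀)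
    set c : ℕ → ℝ := fun k => ∑ i, w k i with hcdef
    have hcge : ∀ k, R k i₀ j₀ ≤ c k := by
      intro k
      calc R k i₀ j₀ ≤ w k i₀ := hwge k
        _ ≤ ∑ i, w k i := Finset.single_le_sum (fun i _ => hwnn k i) (Finset.mem_univ i₀)
    have hctop : Filter.Tendsto c Filter.atTop Filter.atTop :=
      Filter.tendsto_atTop_mono hcge htop
    have hcpos : ∀ k, 0 < c k := by
      intro k
      have hd : 0 < R k i₀ i₀ := by
        have h1 : R k * (s k • (1 : Matrix (Fin n) (Fin n) ℝ) - T) = 1 :=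
          Matrix.nonsing_inv_mul _ (hgoods k).1
        exact diag_pos_of_left_inv h1 (sOneSubZ hT (s k)) (hgoods k).2 i₀
      have h2 : R k i₀ i₀ ≤ w k i₀ := by
        simp only [hwdef, Matrix.mulVec, dotProduct, mul_one]
        exact Finset.single_le_sum (fun j _ => hRnn k i₀ j) (Finset.mem_univ i₀)
      have h3 : w k i₀ ≤ c k :=
        Finset.single_le_sum (fun i _ => hwnn k i) (Finset.mem_univ i₀)
      linarith
    set v : ℕ → Fin n → ℝ := fun k => (c k)⁻¹ • w k with hvdef
    have hvnn : ∀ k i, 0 ≤ v k i := fun k i =>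
      mul_nonneg (inv_nonneg.mpr (le_of_lt (hcpos k))) (hwnn k i)
    have hvsum : ∀ k, ∑ i, v k i = 1 := by
      intro k
      simp only [hvdef, Pi.smul_apply, smul_eq_mul]
      rw [← Finset.mul_sum]
      exact inv_mul_cancel₀ (ne_of_gt (hcpos k))
    have hvle : ∀ k i, v k i ≤ 1 := by
      intro k i
      have := Finset.single_le_sum (fun i _ => hvnn k i) (Finset.mem_univ i)
      rw [hvsum k] at this
      exact this
    have hvball : ∀ k, v k ∈ Metric.closedBall (0 : Fin n → ℝ) 1 := by
      intro k
      rw [mem_closedBall_zero_iff]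
      rw [pi_norm_le_iff_of_nonneg zero_le_one]
      intro i
      rw [Real.norm_eq_abs, abs_le]
      exact ⟨by linarith [hvnn k i], hvle k i⟩
    obtain ⟨vlim, hvmem, φ, hφmono, hφtend⟩ :=
      (isCompact_closedBall (0 : Fin n → ℝ) 1).tendsto_subseq hvball
    have hcoord : ∀ i, Filter.Tendsto (fun k => v (φ k) i) Filter.atTop (nhds (vlim i)) :=
      fun i => ((continuous_apply i).continuousAt.tendsto).comp hφtend
    refine ⟨vlim, ?_, ?_, ?_⟩
    · intro i
      exact ge_of_tendsto (hcoord i) (Filter.Eventually.of_forall fun k => hvnn (φ k) i)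
    · intro hzero
      have hsum : Filter.Tendsto (fun k => ∑ i, v (φ k) i) Filter.atTop
          (nhds (∑ i, vlim i)) := tendsto_finset_sum _ fun i _ => hcoord i
      have : (∑ i, vlim i) = 1 := by
        refine tendsto_nhds_unique hsum ?_
        simpa [hvsum] using tendsto_const_nhds (x := (1:ℝ))
      rw [hzero] at this
      simp at this
    · -- the eigen equation
      have heq : ∀ k, T.mulVec (v k) = s k • v k - (c k)⁻¹ • (fun _ => (1:ℝ)) := by
        intro k
        have h1 := hweq k
        rw [mulVec_sOneSub] at h1
        have h2 : T.mulVec (w k) = s k • w k - (fun _ => (1:ℝ)) := by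
          funext i
          have := congrFun h1 i
          simp only [Pi.sub_apply, Pi.smul_apply, smul_eq_mul] at this ⊢
          linarith
        simp only [hvdef]
        rw [Matrix.mulVec_smul, h2]
        funext i
        simp only [Pi.smul_apply, Pi.sub_apply, smul_eq_mul]
        ring
      funext i
      have hL : Filter.Tendsto (fun k => T.mulVec (v (φ k)) i) Filter.atTop
          (nhds (T.mulVec vlim i)) := by
        simp only [Matrix.mulVec, dotProduct]
        exact tendsto_finset_sum _ fun j _ => (hcoord j).const_mul _
      have hstphi : Filter.Tendsto (fun k => s (φ k)) Filter.atTop (nhds t) :=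
        hstend.comp (StrictMono.tendsto_atTop hφmono)
      have hcphi : Filter.Tendsto (fun k => (c (φ k))⁻¹) Filter.atTop (nhds 0) :=
        tendsto_inv_atTop_zero.comp (hctop.comp (StrictMono.tendsto_atTop hφmono))
      have hR : Filter.Tendsto
          (fun k => s (φ k) * v (φ k) i - (c (φ k))⁻¹ * 1) Filter.atTop
          (nhds (t * vlim i - 0 * 1)) :=
        (hstphi.mul (hcoord i)).sub (hcphi.mul tendsto_const_nhds)
      have : ∀ k, T.mulVec (v (φ k)) i = s (φ k) * v (φ k) i - (c (φ k))⁻¹ * 1 := by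
        intro k
        have := congrFun (heq (φ k)) i
        simpa using this
      simp only [this] at hL
      have := tendsto_nhds_unique hL hR
      simpa using this

end Dichotomy

section Spectrum

lemma matrix_spectrum_nonempty (hn : 0 < n) (M : Matrix (Fin n) (Fin n) ℂ) :
    (spectrum ℂ M).Nonempty := by
  haveI : Nonempty (Fin n) := ⟨⟨0, hn⟩⟩
  obtain ⟨μ, hμ⟩ := Module.End.exists_eigenvalue
    ((Matrix.toLinAlgEquiv (Pi.basisFun ℂ (Fin n))) M)
  have h2 := Module.End.hasEigenvalue_iff_mem_spectrum.mp hμ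
  rw [AlgEquiv.spectrum_eq] at h2
  exact ⟨μ, h2⟩

lemma mem_spectrum_iff_det {M : Matrix (Fin n) (Fin n) ℂ} {z : ℂ} :
    z ∈ spectrum ℂ M ↔ (z • (1 : Matrix (Fin n) (Fin n) ℂ) - M).det = 0 := by
  rw [spectrum.mem_iff, Algebra.algebraMap_eq_smul_one]
  rw [Matrix.isUnit_iff_isUnit_det, isUnit_iff_ne_zero, not_ne_iff]

lemma det_map_eq (M : Matrix (Fin n) (Fin n) ℝ) (s : ℝ) :
    ((s : ℂ) • (1 : Matrix (Fin n) (Fin n) ℂ) - M.map (algebraMap ℝ ℂ)).det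
      = algebraMap ℝ ℂ ((s • (1 : Matrix (Fin n) (Fin n) ℝ) - M).det) := by
  have h1 : ((s : ℂ) • (1 : Matrix (Fin n) (Fin n) ℂ) - M.map (algebraMap ℝ ℂ))
      = (algebraMap ℝ ℂ).mapMatrix (s • (1 : Matrix (Fin n) (Fin n) ℝ) - M) := by
    ext i j
    simp only [RingHom.mapMatrix_apply, Matrix.map_apply, Matrix.sub_apply, Matrix.smul_apply,
      Matrix.one_apply, map_sub, smul_eq_mul]
    rw [map_mul (algebraMap ℝ ℂ), apply_ite (algebraMap ℝ ℂ)]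
    simp
  rw [h1, ← RingHom.map_det]

lemma abs_le_specRad {M : Matrix (Fin n) (Fin n) ℝ} {z : ℂ}
    (hz : z ∈ spectrum ℂ (M.map (algebraMap ℝ ℂ))) : ‖z‖ ≤ specRad M := by
  apply le_csSup
  · exact ((Matrix.finite_spectrum _).image _).bddAbove
  · exact ⟨z, hz, rfl⟩

lemma specRad_nonneg (hn : 0 < n) (M : Matrix (Fin n) (Fin n) ℝ) : 0 ≤ specRad M := by
  obtain ⟨z, hz⟩ := matrix_spectrum_nonempty hn (M.map (algebraMap ℝ ℂ))
  exact le_trans (norm_nonneg z) (abs_le_specRad hz)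

lemma exists_abs_eq_specRad (hn : 0 < n) (M : Matrix (Fin n) (Fin n) ℝ) :
    ∃ z ∈ spectrum ℂ (M.map (algebraMap ℝ ℂ)), ‖z‖ = specRad M := by
  have hne : ((fun z : ℂ => ‖z‖) '' spectrum ℂ (M.map (algebraMap ℝ ℂ))).Nonempty :=
    (matrix_spectrum_nonempty hn _).image _
  have hfin : ((fun z : ℂ => ‖z‖) '' spectrum ℂ (M.map (algebraMap ℝ ℂ))).Finite :=
    (Matrix.finite_spectrum _).image _
  have := hne.csSup_mem hfin
  obtain ⟨z, hz, hz2⟩ := this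
  exact ⟨z, hz, hz2⟩

lemma le_specRad_of_eigen {M : Matrix (Fin n) (Fin n) ℝ} {r : ℝ} {v : Fin n → ℝ}
    (hv : v ≠ 0) (heq : M.mulVec v = r • v) : r ≤ specRad M := by
  have hker : (r • (1 : Matrix (Fin n) (Fin n) ℝ) - M).mulVec v = 0 := by
    rw [mulVec_sOneSub, heq, sub_self]
  have hdet : (r • (1 : Matrix (Fin n) (Fin n) ℝ) - M).det = 0 := by
    by_contra h
    have hunit : IsUnit (r • (1 : Matrix (Fin n) (Fin n) ℝ) - M) :=
      (Matrix.isUnit_iff_isUnit_det _).mpr (isUnit_iff_ne_zero.mpr h)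
    have hinj := Matrix.mulVec_injective_iff_isUnit.mpr hunit
    apply hv
    have : (r • (1 : Matrix (Fin n) (Fin n) ℝ) - M).mulVec v
        = (r • (1 : Matrix (Fin n) (Fin n) ℝ) - M).mulVec 0 := by
      rw [hker, Matrix.mulVec_zero]
    exact hinj this
  have hmem : (r : ℂ) ∈ spectrum ℂ (M.map (algebraMap ℝ ℂ)) := by
    rw [mem_spectrum_iff_det, det_map_eq, hdet, map_zero]
  calc r ≤ |r| := le_abs_self r
    _ = ‖(r : ℂ)‖ := by rw [Complex.norm_real, Real.norm_eq_abs]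
    _ ≤ specRad M := abs_le_specRad hmem

end Spectrum

section Main

variable {T : Matrix (Fin n) (Fin n) ℝ}

theorem good_of_gt_specRad (hn : 0 < n) (hT : ∀ i j, 0 ≤ T i j)
    {s₀ : ℝ} (hs₀ : specRad T < s₀) : Good T s₀ := by
  haveI : Nonempty (Fin n) := ⟨⟨0, hn⟩⟩
  set E : Set ℝ := {s | s₀ ≤ s ∧ Good T s} with hE
  set rs := Finset.univ.sup' Finset.univ_nonempty (fun i => ∑ j, T i j) with hrs
  set B := max s₀ rs + 1 with hB
  have hBs₀ : s₀ ≤ B := by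
    have := le_max_left s₀ rs
    simp only [hB]; linarith
  have hBE : B ∈ E := by
    refine ⟨hBs₀, good_of_big hn hT ?_⟩
    intro i
    have h1 : ∑ j, T i j ≤ rs := Finset.le_sup' (fun i => ∑ j, T i j) (Finset.mem_univ i)
    have := le_max_right s₀ rs
    simp only [hB]; linarith
  have hEne : E.Nonempty := ⟨B, hBE⟩
  have hEbdd : BddBelow E := ⟨s₀, fun x hx => hx.1⟩
  set b := sInf E with hb
  have hbs₀ : s₀ ≤ b := le_csInf hEne fun x hx => hx.1
  have hgood_gt : ∀ s, b < s → Good T s := by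
    intro s hs
    obtain ⟨e, heE, hes⟩ := exists_lt_of_csInf_lt hEne hs
    exact good_mono_up hT (le_of_lt hes) heE.2
  have hGoodb : Good T b := by
    rcases dichotomy hn hT b hgood_gt with h | ⟨v, hvnn, hvne, hveq⟩
    · exact h
    · exfalso
      have := le_specRad_of_eigen hvne hveq
      linarith
  have hbeq : b = s₀ := by
    by_contra hne
    have hlt : s₀ < b := lt_of_le_of_ne hbs₀ (Ne.symm hne)
    obtain ⟨δ, hδ, hdown⟩ := good_down hn hT hGoodb
    set t := max s₀ (b - δ / 2) with htdef
    have ht1 : b - δ < t := by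
      have := le_max_right s₀ (b - δ / 2)
      simp only [htdef]; linarith [le_max_right s₀ (b - δ / 2)]
    have ht2 : t < b := by
      apply max_lt hlt; linarith
    have htE : t ∈ E := ⟨le_max_left _ _, hdown t ht1 (le_of_lt ht2)⟩
    have := csInf_le hEbdd htE
    rw [← hb] at this
    linarith
  rw [← hbeq]
  exact hGoodb

lemma mul_mono {W X Y : Matrix (Fin n) (Fin n) ℝ} (hW : ∀ i j, 0 ≤ W i j)
    (h : ∀ i j, X i j ≤ Y i j) : ∀ i j, (W * X) i j ≤ (W * Y) i j := by
  intro i j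
  simp only [Matrix.mul_apply]
  exact Finset.sum_le_sum fun k _ => mul_le_mul_of_nonneg_left (h k j) (hW i k)

/-- Entrywise bound `|R(z)| ≤ R(|z|)` for the resolvent of a nonnegative matrix. -/
lemma abs_res_le (hT : ∀ i j, 0 ≤ T i j) {z : ℂ} {s : ℝ} (hs : s = ‖z‖)
    (hgs : Good T s)
    (hzdet : IsUnit (z • (1 : Matrix (Fin n) (Fin n) ℂ) - T.map (algebraMap ℝ ℂ)).det) :
    ∀ i j, ‖((z • (1 : Matrix (Fin n) (Fin n) ℂ) - T.map (algebraMap ℝ ℂ))⁻¹ i j)‖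
      ≤ (s • (1 : Matrix (Fin n) (Fin n) ℝ) - T)⁻¹ i j := by
  set Tc := T.map (algebraMap ℝ ℂ) with hTc
  set Rc := (z • (1 : Matrix (Fin n) (Fin n) ℂ) - Tc)⁻¹ with hRc
  set Rs := (s • (1 : Matrix (Fin n) (Fin n) ℝ) - T)⁻¹ with hRs
  have hXR : (z • (1 : Matrix (Fin n) (Fin n) ℂ) - Tc) * Rc = 1 :=
    Matrix.mul_nonsing_inv _ hzdet
  have hentry : ∀ i j, z * Rc i j
      = (1 : Matrix (Fin n) (Fin n) ℂ) i j + (Tc * Rc) i j := by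
    intro i j
    have h1 : ((z • (1 : Matrix (Fin n) (Fin n) ℂ) - Tc) * Rc) i j
        = (1 : Matrix (Fin n) (Fin n) ℂ) i j := by rw [hXR]
    rw [Matrix.sub_mul, Matrix.smul_mul, Matrix.one_mul] at h1
    simp only [Matrix.sub_apply, Matrix.smul_apply, smul_eq_mul] at h1
    linear_combination h1
  set Q : Matrix (Fin n) (Fin n) ℝ := Matrix.of fun i j => ‖(Rc i j)‖ with hQ
  have hQnn : ∀ i j, 0 ≤ Q i j := fun i j => norm_nonneg (Rc i j)
  have hQbound : ∀ i j, ((s • (1 : Matrix (Fin n) (Fin n) ℝ) - T) * Q) i j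
      ≤ (1 : Matrix (Fin n) (Fin n) ℝ) i j := by
    intro i j
    have h2 : ((s • (1 : Matrix (Fin n) (Fin n) ℝ) - T) * Q) i j
        = s * Q i j - (T * Q) i j := by
      rw [Matrix.sub_mul, Matrix.smul_mul, Matrix.one_mul]
      simp [Matrix.sub_apply, Matrix.smul_apply]
    rw [h2]
    have h3 : s * Q i j = ‖(z * Rc i j)‖ := by
      rw [norm_mul, hs]
      simp [hQ]
    have h4 : ‖(z * Rc i j)‖
        ≤ (1 : Matrix (Fin n) (Fin n) ℝ) i j + (T * Q) i j := by
      rw [hentry i j]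
      refine le_trans (norm_add_le _ _) ?_
      have h5 : ‖((1 : Matrix (Fin n) (Fin n) ℂ) i j)‖
          = (1 : Matrix (Fin n) (Fin n) ℝ) i j := by
        by_cases hij : i = j <;> simp [Matrix.one_apply, hij]
      have h6 : ‖((Tc * Rc) i j)‖ ≤ (T * Q) i j := by
        rw [Matrix.mul_apply, Matrix.mul_apply]
        refine le_trans (norm_sum_le _ _) ?_
        apply Finset.sum_le_sum
        intro k _
        rw [norm_mul]
        have : ‖(Tc i k)‖ = T i k := by
          simp [hTc, Matrix.map_apply, Complex.norm_real, Real.norm_eq_abs, abs_of_nonneg (hT i k)]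
        rw [this]
        simp [hQ]
      linarith
    linarith [h3 ▸ h4]
  have hfin : ∀ i j, Q i j ≤ Rs i j := by
    have h7 := mul_mono hgs.2 hQbound
    intro i j
    have h8 : (Rs * ((s • (1 : Matrix (Fin n) (Fin n) ℝ) - T) * Q)) i j = Q i j := by
      rw [← Matrix.mul_assoc, Matrix.nonsing_inv_mul _ hgs.1, Matrix.one_mul]
    have h9 := h7 i j
    rw [h8, Matrix.mul_one] at h9
    exact h9
  intro i j
  exact hfin i j

/-- Perron–Frobenius: the spectral radius of an entrywise nonnegative matrix is an
eigenvalue with an entrywise nonnegative eigenvector. -/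
theorem perron (hn : 0 < n) (hT : ∀ i j, 0 ≤ T i j) :
    ∃ v : Fin n → ℝ, (∀ i, 0 ≤ v i) ∧ v ≠ 0 ∧ T.mulVec v = specRad T • v := by
  set μ := specRad T with hμ
  have hgood : ∀ s, μ < s → Good T s := fun s hs => good_of_gt_specRad hn hT hs
  rcases dichotomy hn hT μ hgood with hGood | hv
  swap
  · exact hv
  exfalso
  set Tc := T.map (algebraMap ℝ ℂ) with hTc
  obtain ⟨lam, hlmem, hlabs⟩ := exists_abs_eq_specRad hn T
  rcases eq_or_lt_of_le (specRad_nonneg hn T) with hμ0 | hμpos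
  · -- μ = 0 : Good 0 contradicts 0 ∈ spectrum
    have hlz : lam = 0 := by
      have h1 : ‖lam‖ = 0 := by rw [hlabs]; exact hμ0.symm
      simpa using h1
    have hdet0 := mem_spectrum_iff_det.mp (hlz ▸ hlmem)
    have hcast : ((0:ℝ) : ℂ) = (0 : ℂ) := by norm_num
    rw [← hcast, det_map_eq T 0] at hdet0
    have hunit : IsUnit ((0:ℝ) • (1 : Matrix (Fin n) (Fin n) ℝ) - T).det := by
      rw [hμ0]; exact hGood.1
    rw [isUnit_iff_ne_zero] at hunit
    exact hunit (by simpa using hdet0)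
  · -- μ > 0
    set z : ℕ → ℂ := fun k => ((1 + 1/((k:ℝ)+1) : ℝ) : ℂ) * lam with hz
    have hfrac : ∀ k : ℕ, (0:ℝ) < 1/((k:ℝ)+1) := by intro k; positivity
    have habs : ∀ k, ‖(z k)‖ = (1 + 1/((k:ℝ)+1)) * μ := by
      intro k
      rw [hz]
      simp only [norm_mul, Complex.norm_real, Real.norm_eq_abs, hlabs]
      rw [abs_of_pos (by have := hfrac k; linarith : (0:ℝ) < 1 + 1/((k:ℝ)+1))]
    have habsgt : ∀ k, μ < ‖(z k)‖ := by
      intro k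
      rw [habs k]
      nlinarith [hfrac k, hμpos]
    have hzunit : ∀ k, IsUnit (z k • (1 : Matrix (Fin n) (Fin n) ℂ) - Tc).det := by
      intro k
      rw [isUnit_iff_ne_zero]
      intro h0
      have h1 := abs_le_specRad (M := T) (mem_spectrum_iff_det.mpr h0)
      have h2 := habsgt k
      rw [← hμ] at h1
      linarith
    set Rk : ℕ → Matrix (Fin n) (Fin n) ℂ := fun k => (z k • 1 - Tc)⁻¹ with hRk
    set Rm : Matrix (Fin n) (Fin n) ℝ := (μ • (1 : Matrix (Fin n) (Fin n) ℝ) - T)⁻¹ with hRm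
    have hgoodk : ∀ k, Good T (‖(z k)‖) := fun k => hgood _ (habsgt k)
    have hbound : ∀ k i j, ‖(Rk k i j)‖ ≤ Rm i j := by
      intro k i j
      have h1 := abs_res_le hT rfl (hgoodk k) (hzunit k) i j
      have h2 := res_mono hGood (hgoodk k) (le_of_lt (habsgt k)) i j
      exact le_trans h1 h2
    have hfact : ∀ k, Rk k * (lam • (1 : Matrix (Fin n) (Fin n) ℂ) - Tc)
        = 1 + (lam - z k) • Rk k := by
      intro k
      have h3 : lam • (1 : Matrix (Fin n) (Fin n) ℂ) - Tc
          = (z k • (1 : Matrix (Fin n) (Fin n) ℂ) - Tc)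
            + (lam - z k) • (1 : Matrix (Fin n) (Fin n) ℂ) := by
        rw [sub_smul]; abel
      rw [h3, Matrix.mul_add, Matrix.nonsing_inv_mul _ (hzunit k), Matrix.mul_smul,
        Matrix.mul_one]
    have hld := mem_spectrum_iff_det.mp hlmem
    have hdet0 : ∀ k, (1 + (lam - z k) • Rk k).det = 0 := by
      intro k
      rw [← hfact k, Matrix.det_mul, hld, mul_zero]
    have habsdiff : ∀ k, ‖(lam - z k)‖ = 1/((k:ℝ)+1) * μ := by
      intro k
      have h4 : lam - z k = -(((1/((k:ℝ)+1) : ℝ) : ℂ) * lam) := by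
        rw [hz]; push_cast; ring
      rw [h4, norm_neg, norm_mul, Complex.norm_real, Real.norm_eq_abs, hlabs,
        abs_of_pos (hfrac k)]
    have htendentry : ∀ i j, Filter.Tendsto (fun k => (lam - z k) * Rk k i j)
        Filter.atTop (nhds 0) := by
      intro i j
      rw [tendsto_zero_iff_norm_tendsto_zero]
      refine squeeze_zero (fun k => norm_nonneg _) (g := fun k : ℕ => 1/((k:ℝ)+1) * (μ * Rm i j))
        (fun k => ?_) ?_
      · rw [norm_mul, habsdiff k]
        have h5 := hbound k i j
        have h6 : (0:ℝ) ≤ 1/((k:ℝ)+1) * μ := le_of_lt (mul_pos (hfrac k) hμpos)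
        have h7 : ‖(Rk k i j)‖ ≥ 0 := norm_nonneg _
        calc 1/((k:ℝ)+1) * μ * ‖(Rk k i j)‖
            ≤ 1/((k:ℝ)+1) * μ * Rm i j := by nlinarith
          _ = 1/((k:ℝ)+1) * (μ * Rm i j) := by ring
      · simpa using tendsto_one_div_add_atTop_nhds_zero_nat.mul_const (μ * Rm i j)
    have hG : ∀ i j, Filter.Tendsto (fun k => (1 + (lam - z k) • Rk k) i j)
        Filter.atTop (nhds ((1 : Matrix (Fin n) (Fin n) ℂ) i j)) := by
      intro i j
      have h8 := (tendsto_const_nhds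
        (x := (1 : Matrix (Fin n) (Fin n) ℂ) i j)).add (htendentry i j)
      rw [add_zero] at h8
      have h9 : (fun k => ((1 : Matrix (Fin n) (Fin n) ℂ) + (lam - z k) • Rk k) i j)
          = fun k => (1 : Matrix (Fin n) (Fin n) ℂ) i j + (lam - z k) * Rk k i j := by
        funext k
        simp [Matrix.add_apply, Matrix.smul_apply, smul_eq_mul]
      rw [h9]
      exact h8
    have hdettend : Filter.Tendsto (fun k => (1 + (lam - z k) • Rk k).det)
        Filter.atTop (nhds ((1 : Matrix (Fin n) (Fin n) ℂ)).det) := by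
      simp only [Matrix.det_apply']
      apply tendsto_finset_sum
      intro σ _
      exact Filter.Tendsto.const_mul _ (tendsto_finset_prod _ fun i _ => hG (σ i) i)
    rw [Matrix.det_one] at hdettend
    have hzero : Filter.Tendsto (fun k => (1 + (lam - z k) • Rk k).det)
        Filter.atTop (nhds (0:ℂ)) := by
      simp only [hdet0]
      exact tendsto_const_nhds
    exact zero_ne_one (tendsto_nhds_unique hzero hdettend)

end Main

end PFAux

open PFAux in
/-- Under (c1)–(c3), the matrix `ρ(A,B)·B − A` is a singular M-matrix: it is an
M-matrix and it is not invertible. -/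
theorem stmt_6 {n : ℕ} (hn : 0 < n) (A B : Matrix (Fin n) (Fin n) ℝ)
    (hc1 : ∀ i j, 0 ≤ A i j)
    (hc2 : ∀ i j, i ≠ j → B i j ≤ A i j)
    (hc3 : ∃ u : Fin n → ℝ, (∀ i, 0 < u i) ∧ ∀ i, 0 < (B - A).mulVec u i)
    (μ ρAB : ℝ) (hμ : μ = specRad ((B - A)⁻¹ * A)) (hρ : ρAB = μ / (1 + μ)) :
    IsMMatrix (ρAB • B - A) ∧ ¬ IsUnit (ρAB • B - A).det := by
  haveI : Nonempty (Fin n) := ⟨⟨0, hn⟩⟩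
  obtain ⟨u, hu, hCu⟩ := hc3
  set C := B - A with hC
  have hZ : ∀ i j, i ≠ j → C i j ≤ 0 := by
    intro i j hij
    have := hc2 i j hij
    simp only [hC, Matrix.sub_apply]
    linarith
  have hdetC : IsUnit C.det := maxp_isUnit_det hZ hu hCu
  have hSnn : ∀ i j, 0 ≤ C⁻¹ i j := maxp_inv_nonneg hZ hu hCu
  set T := C⁻¹ * A with hT
  have hTnn : ∀ i j, 0 ≤ T i j := by
    intro i j
    rw [hT, Matrix.mul_apply]
    exact Finset.sum_nonneg fun k _ => mul_nonneg (hSnn i k) (hc1 k j)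
  have hμT : μ = specRad T := hμ
  have hμnn : 0 ≤ μ := hμT ▸ specRad_nonneg hn T
  have h1μ : (0:ℝ) < 1 + μ := by linarith
  have hρ0 : 0 ≤ ρAB := by rw [hρ]; positivity
  have hρ1 : ρAB ≤ 1 := by
    rw [hρ, div_le_one h1μ]; linarith
  set M := ρAB • B - A with hM
  have hcoef : (1 + μ) * ρAB = μ := by
    rw [hρ]; field_simp
  have hkey : (1 + μ) • M = μ • C - A := by
    ext i j
    simp only [hM, hC, Matrix.smul_apply, Matrix.sub_apply, smul_eq_mul]
    linear_combination (B i j) * hcoef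
  -- eigenvector of T for μ
  obtain ⟨v, hvnn, hvne, hveq⟩ := perron hn hTnn
  rw [← hμT] at hveq
  have hCT : C * T = A := by
    rw [hT, ← Matrix.mul_assoc, Matrix.mul_nonsing_inv _ hdetC, Matrix.one_mul]
  have hAv : A.mulVec v = C.mulVec (T.mulVec v) := by
    rw [Matrix.mulVec_mulVec, hCT]
  have hMv : M.mulVec v = 0 := by
    have h2 : ((1 + μ) • M).mulVec v = 0 := by
      rw [hkey, Matrix.sub_mulVec, Matrix.smul_mulVec, hAv, hveq, Matrix.mulVec_smul]
      simp
    rw [Matrix.smul_mulVec] at h2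
    have := smul_eq_zero.mp h2
    rcases this with h | h
    · exact absurd h (ne_of_gt h1μ)
    · exact h
  have hnotunit : ¬ IsUnit M.det := by
    intro hunit
    have hinj := Matrix.mulVec_injective_iff_isUnit.mpr ((Matrix.isUnit_iff_isUnit_det _).mpr hunit)
    apply hvne
    apply hinj
    rw [hMv, Matrix.mulVec_zero]
  refine ⟨?_, hnotunit⟩
  -- M-matrix certificate
  set q := Finset.univ.sup' Finset.univ_nonempty (fun i => M i i) with hq
  set P := q • (1 : Matrix (Fin n) (Fin n) ℝ) - M with hP
  have hPnn : ∀ i j, 0 ≤ P i j := by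
    intro i j
    rcases eq_or_ne i j with rfl | hij
    · have h3 : M i i ≤ q := Finset.le_sup' (fun i => M i i) (Finset.mem_univ i)
      simp only [hP, Matrix.sub_apply, Matrix.smul_apply, Matrix.one_apply_eq, smul_eq_mul,
        mul_one]
      linarith
    · have h4 := hc2 i j hij
      have h5 := hc1 i j
      have h6 : ρAB * B i j ≤ A i j := by nlinarith
      simp only [hP, hM, Matrix.sub_apply, Matrix.smul_apply, Matrix.one_apply_ne hij,
        smul_eq_mul, mul_zero]
      linarith
  have hspec : specRad P ≤ q := by
    by_contra hgt
    push_neg at hgt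
    obtain ⟨x, hxnn, hxne, hxeq⟩ := perron hn hPnn
    set r := specRad P with hr
    have hMx : M.mulVec x = (q - r) • x := by
      have h7 : P.mulVec x = q • x - M.mulVec x := by
        rw [hP, Matrix.sub_mulVec, Matrix.smul_mulVec, Matrix.one_mulVec]
      rw [h7] at hxeq
      funext i
      have := congrFun hxeq i
      simp only [Pi.sub_apply, Pi.smul_apply, smul_eq_mul] at this ⊢
      linarith
    have hCx : C.mulVec (μ • x - T.mulVec x) = ((1 + μ) * (q - r)) • x := by
      have h8 : ((1 + μ) • M).mulVec x = ((1 + μ) * (q - r)) • x := by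
        rw [Matrix.smul_mulVec, hMx, smul_smul]
      rw [hkey, Matrix.sub_mulVec, Matrix.smul_mulVec] at h8
      rw [Matrix.mulVec_sub, Matrix.mulVec_smul]
      have h9 : A.mulVec x = C.mulVec (T.mulVec x) := by
        rw [Matrix.mulVec_mulVec, hCT]
      rw [← h9, ← h8]
    set y := C⁻¹.mulVec x with hy
    have hsub : μ • x - T.mulVec x = ((1 + μ) * (q - r)) • y := by
      have h10 : C⁻¹.mulVec (C.mulVec (μ • x - T.mulVec x)) = μ • x - T.mulVec x := by
        rw [Matrix.mulVec_mulVec, Matrix.nonsing_inv_mul _ hdetC, Matrix.one_mulVec]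
      rw [← h10, hCx, Matrix.mulVec_smul]
    have hynn : ∀ i, 0 ≤ y i := by
      intro i
      simp only [hy, Matrix.mulVec, dotProduct]
      exact Finset.sum_nonneg fun k _ => mul_nonneg (hSnn i k) (hxnn k)
    have hSdiag : ∀ i, 0 < C⁻¹ i i :=
      diag_pos_of_left_inv (Matrix.nonsing_inv_mul _ hdetC) hZ hSnn
    have hyx : ∀ i, C⁻¹ i i * x i ≤ y i := by
      intro i
      simp only [hy, Matrix.mulVec, dotProduct]
      exact Finset.single_le_sum (fun k _ => mul_nonneg (hSnn i k) (hxnn k)) (Finset.mem_univ i)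
    set K := Finset.univ.sup' Finset.univ_nonempty (fun i => (C⁻¹ i i)⁻¹) with hK
    have hKpos : 0 < K := by
      have := Finset.le_sup' (fun i => (C⁻¹ i i)⁻¹) (Finset.mem_univ (Classical.arbitrary (Fin n)))
      have h11 := hSdiag (Classical.arbitrary (Fin n))
      have h12 : 0 < (C⁻¹ (Classical.arbitrary (Fin n)) (Classical.arbitrary (Fin n)))⁻¹ :=
        inv_pos.mpr h11
      linarith
    have hxley : ∀ i, x i ≤ K * y i := by
      intro i
      have h13 := hyx i
      have h14 := hSdiag i
      have h15 : x i ≤ (C⁻¹ i i)⁻¹ * y i := by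
        have h15a := mul_le_mul_of_nonneg_left h13 (le_of_lt (inv_pos.mpr h14))
        rwa [← mul_assoc, inv_mul_cancel₀ (ne_of_gt h14), one_mul] at h15a
      have h16 : (C⁻¹ i i)⁻¹ ≤ K := Finset.le_sup' (fun i => (C⁻¹ i i)⁻¹) (Finset.mem_univ i)
      nlinarith [hynn i]
    set γ := -((1 + μ) * (q - r)) with hγ
    have hγpos : 0 < γ := by
      rw [hγ]
      have : q - r < 0 := by linarith
      nlinarith
    set s := μ + γ / K with hs
    have hsgt : specRad T < s := by
      rw [← hμT, hs]
      have := div_pos hγpos hKpos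
      linarith
    have hGood := good_of_gt_specRad hn hTnn hsgt
    have hTx : ∀ i, s * x i ≤ T.mulVec x i := by
      intro i
      have h17 := congrFun hsub i
      simp only [Pi.sub_apply, Pi.smul_apply, smul_eq_mul] at h17
      -- μ x i - Tx i = (1+μ)(q-r) y i = -γ y i
      have h18 : T.mulVec x i = μ * x i + γ * y i := by
        rw [hγ]; linarith
      have h19 : γ * y i ≥ γ / K * x i := by
        have := hxley i
        rw [ge_iff_le, div_mul_eq_mul_div, div_le_iff₀ hKpos]
        nlinarith
      rw [h18, hs]
      nlinarith
    have hneg : ∀ i, ((s • (1 : Matrix (Fin n) (Fin n) ℝ) - T).mulVec x) i ≤ 0 := by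
      intro i
      rw [mulVec_sOneSub]
      simp only [Pi.sub_apply, Pi.smul_apply, smul_eq_mul]
      linarith [hTx i]
    have hxle : ∀ i, x i ≤ 0 := by
      intro i
      have h20 : (s • (1 : Matrix (Fin n) (Fin n) ℝ) - T)⁻¹.mulVec
          ((s • (1 : Matrix (Fin n) (Fin n) ℝ) - T).mulVec x) = x := by
        rw [Matrix.mulVec_mulVec, Matrix.nonsing_inv_mul _ hGood.1, Matrix.one_mulVec]
      rw [← h20]
      simp only [Matrix.mulVec, dotProduct]
      apply Finset.sum_nonpos
      intro k _
      exact mul_nonpos_of_nonneg_of_nonpos (hGood.2 i k) (hneg k)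
    apply hxne
    funext i
    exact le_antisymm (hxle i) (hxnn i)
  exact ⟨q, P, hPnn, by rw [hP]; ext i j; simp [Matrix.sub_apply], hspec⟩
end

section
/- Let A, B be real n×n matrices satisfying: (c1) A is entrywise nonnegative, (c2) B_{ij} ≤ A_{ij} for all i ≠ j, and (c3) there exists an entrywise positive vector u with (B−A)u entrywise positive. Set μ = ρ((B−A)⁻¹A) and ρ(A,B) = μ/(1+μ). Then for every real t with 0 < t < ρ(A,B), the matrix tB − A is not an M-matrix. -/
open Matrix Filter Topology

section Helpers

variable {n : ℕ}


lemma MM.mulVec_nonneg {S : Matrix (Fin n) (Fin n) ℝ} (hS : ∀ i j, 0 ≤ S i j)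
    {x : Fin n → ℝ} (hx : ∀ i, 0 ≤ x i) : ∀ i, 0 ≤ S.mulVec x i := by
  intro i
  simp only [Matrix.mulVec, dotProduct]
  exact Finset.sum_nonneg fun j _ => mul_nonneg (hS i j) (hx j)

lemma MM.mulVec_nonpos {S : Matrix (Fin n) (Fin n) ℝ} (hS : ∀ i j, 0 ≤ S i j)
    {x : Fin n → ℝ} (hx : ∀ i, x i ≤ 0) : ∀ i, S.mulVec x i ≤ 0 := by
  intro i
  simp only [Matrix.mulVec, dotProduct]
  exact Finset.sum_nonpos fun j _ => mul_nonpos_of_nonneg_of_nonpos (hS i j) (hx j)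

lemma MM.mulVec_mono {S : Matrix (Fin n) (Fin n) ℝ} (hS : ∀ i j, 0 ≤ S i j)
    {x y : Fin n → ℝ} (hxy : ∀ i, x i ≤ y i) : ∀ i, S.mulVec x i ≤ S.mulVec y i := by
  intro i
  simp only [Matrix.mulVec, dotProduct]
  exact Finset.sum_le_sum fun j _ => mul_le_mul_of_nonneg_left (hxy j) (hS i j)

lemma MM.mulVec_le_mulVec {S T : Matrix (Fin n) (Fin n) ℝ} (hST : ∀ i j, S i j ≤ T i j)
    {x : Fin n → ℝ} (hx : ∀ i, 0 ≤ x i) :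
    ∀ i, S.mulVec x i ≤ T.mulVec x i := by
  intro i
  simp only [Matrix.mulVec, dotProduct]
  exact Finset.sum_le_sum fun j _ => mul_le_mul_of_nonneg_right (hST i j) (hx j)

lemma MM.mul_nonneg' {S T : Matrix (Fin n) (Fin n) ℝ} (hS : ∀ i j, 0 ≤ S i j)
    (hT : ∀ i j, 0 ≤ T i j) : ∀ i j, 0 ≤ (S * T) i j := by
  intro i j
  rw [Matrix.mul_apply]
  exact Finset.sum_nonneg fun k _ => mul_nonneg (hS i k) (hT k j)

lemma MM.pow_nonneg {S : Matrix (Fin n) (Fin n) ℝ} (hS : ∀ i j, 0 ≤ S i j) (k : ℕ) :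
    ∀ i j, 0 ≤ (S ^ k) i j := by
  induction k with
  | zero => intro i j; by_cases h : i = j <;> simp [pow_zero, Matrix.one_apply, h]
  | succ k ih => rw [pow_succ]; exact MM.mul_nonneg' ih hS

/-- Z-matrix with a positive vector mapped to a positive vector is (inverse-)monotone. -/
lemma MM.zmono {N : Matrix (Fin n) (Fin n) ℝ} (hoff : ∀ i j, i ≠ j → N i j ≤ 0)
    {u : Fin n → ℝ} (hu : ∀ i, 0 < u i) (hNu : ∀ i, 0 < N.mulVec u i)
    {x : Fin n → ℝ} (hx : ∀ i, 0 ≤ N.mulVec x i) : ∀ i, 0 ≤ x i := by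
  by_contra hc
  push_neg at hc
  obtain ⟨i₀, hi₀⟩ := hc
  have hne : (Finset.univ : Finset (Fin n)).Nonempty := ⟨i₀, Finset.mem_univ _⟩
  obtain ⟨k, -, hk⟩ := Finset.exists_min_image Finset.univ (fun i => x i / u i) hne
  have hkneg : x k / u k < 0 :=
    lt_of_le_of_lt (hk i₀ (Finset.mem_univ _)) (div_neg_of_neg_of_pos hi₀ (hu i₀))
  have key : N.mulVec x k ≤ (x k / u k) * N.mulVec u k := by
    simp only [Matrix.mulVec, dotProduct]
    rw [Finset.mul_sum]
    refine Finset.sum_le_sum fun j _ => ?_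
    rcases eq_or_ne j k with rfl | hjk
    · have : x j / u j * (N j j * u j) = N j j * x j := by
        rw [mul_comm (N j j) (u j), ← mul_assoc, div_mul_cancel₀ _ (hu j).ne', mul_comm]
      rw [this]
    · have h1 : x k / u k * u j ≤ x j := by
        rw [div_mul_eq_mul_div, div_le_iff₀ (hu k)]
        have := hk j (Finset.mem_univ _)
        rw [div_le_div_iff₀ (hu k) (hu j)] at this
        linarith
      calc N k j * x j ≤ N k j * (x k / u k * u j) :=
            mul_le_mul_of_nonpos_left h1 (hoff k j (Ne.symm hjk))
        _ = x k / u k * (N k j * u j) := by ring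
  have : N.mulVec x k < 0 :=
    lt_of_le_of_lt key (mul_neg_of_neg_of_pos hkneg (hNu k))
  exact absurd (hx k) (not_le.mpr this)

lemma MM.zdet {N : Matrix (Fin n) (Fin n) ℝ} (hoff : ∀ i j, i ≠ j → N i j ≤ 0)
    {u : Fin n → ℝ} (hu : ∀ i, 0 < u i) (hNu : ∀ i, 0 < N.mulVec u i) :
    IsUnit N.det := by
  by_contra hdet
  have hd : N.det = 0 := by simpa [isUnit_iff_ne_zero] using hdet
  obtain ⟨v, hv0, hv⟩ := (Matrix.exists_mulVec_eq_zero_iff).2 hd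
  have hvneg : N.mulVec (-v) = 0 := by rw [Matrix.mulVec_neg, hv, neg_zero]
  have h1 : ∀ i, 0 ≤ v i := MM.zmono hoff hu hNu (fun i => by rw [hv]; exact le_rfl)
  have h2 : ∀ i, 0 ≤ (-v) i := MM.zmono hoff hu hNu (fun i => by rw [hvneg]; exact le_rfl)
  exact hv0 (funext fun i => le_antisymm (by simpa using h2 i) (h1 i))

lemma MM.zinv_nonneg {N : Matrix (Fin n) (Fin n) ℝ} (hoff : ∀ i j, i ≠ j → N i j ≤ 0)
    {u : Fin n → ℝ} (hu : ∀ i, 0 < u i) (hNu : ∀ i, 0 < N.mulVec u i) :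
    ∀ i j, 0 ≤ N⁻¹ i j := by
  intro i j
  have hdet := MM.zdet hoff hu hNu
  have h : ∀ i', 0 ≤ N.mulVec (N⁻¹.mulVec (Pi.single j 1)) i' := by
    intro i'
    rw [Matrix.mulVec_mulVec, Matrix.mul_nonsing_inv N hdet, Matrix.one_mulVec]
    by_cases h : i' = j <;> simp [Pi.single_apply, h]
  have := MM.zmono hoff hu hNu h i
  simpa using this

attribute [local instance] Matrix.linftyOpNormedRing Matrix.linftyOpNormedAlgebra

lemma MM.cmap_pow (S : Matrix (Fin n) (Fin n) ℝ) (k : ℕ) :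
    (S.map (algebraMap ℝ ℂ)) ^ k = (S ^ k).map (algebraMap ℝ ℂ) := by
  simpa [RingHom.mapMatrix_apply] using (map_pow ((algebraMap ℝ ℂ).mapMatrix) S k).symm

lemma MM.specRad_nonneg (S : Matrix (Fin n) (Fin n) ℝ) : 0 ≤ specRad S := by
  apply Real.sSup_nonneg
  rintro y ⟨w, hw, rfl⟩
  exact norm_nonneg _

lemma MM.abs_le_specRad {S : Matrix (Fin n) (Fin n) ℝ} {z : ℂ}
    (hz : z ∈ spectrum ℂ (S.map (algebraMap ℝ ℂ))) : ‖z‖ ≤ specRad S :=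
  le_csSup (((Matrix.finite_spectrum _).image _).bddAbove) ⟨z, hz, rfl⟩

lemma MM.spectralRadius_le (S : Matrix (Fin n) (Fin n) ℝ) :
    spectralRadius ℂ (S.map (algebraMap ℝ ℂ)) ≤ ENNReal.ofReal (specRad S) := by
  rw [spectralRadius]
  refine iSup₂_le fun z hz => ?_
  rw [← ENNReal.ofReal_coe_nnreal, coe_nnnorm]
  exact ENNReal.ofReal_le_ofReal (by simpa using MM.abs_le_specRad hz)

lemma MM.exists_abs_eq_specRad (hn : 0 < n) (S : Matrix (Fin n) (Fin n) ℝ) :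
    ∃ z ∈ spectrum ℂ (S.map (algebraMap ℝ ℂ)), ‖z‖ = specRad S := by
  haveI : NeZero n := ⟨hn.ne'⟩
  have hne : (spectrum ℂ (S.map (algebraMap ℝ ℂ))).Nonempty := spectrum.nonempty _
  have hmem : specRad S ∈ (fun z : ℂ => ‖z‖) '' spectrum ℂ (S.map (algebraMap ℝ ℂ)) :=
    Set.Nonempty.csSup_mem (hne.image _) ((Matrix.finite_spectrum _).image _)
  obtain ⟨z, hz, hz2⟩ := hmem
  exact ⟨z, hz, hz2⟩

/-- Weak Perron: a nonnegative matrix has a nonzero nonnegative vector `x` with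
`S x ≥ specRad S • x`. -/
lemma MM.weakPerron (hn : 0 < n) {S : Matrix (Fin n) (Fin n) ℝ} (hS : ∀ i j, 0 ≤ S i j) :
    ∃ x : Fin n → ℝ, (∀ i, 0 ≤ x i) ∧ x ≠ 0 ∧ ∀ i, specRad S * x i ≤ S.mulVec x i := by
  obtain ⟨z, hz, habs⟩ := MM.exists_abs_eq_specRad hn S
  rw [spectrum.mem_iff] at hz
  have hdet : (algebraMap ℂ (Matrix (Fin n) (Fin n) ℂ) z - S.map (algebraMap ℝ ℂ)).det = 0 := by
    by_contra hd
    exact hz ((Matrix.isUnit_iff_isUnit_det _).2 (isUnit_iff_ne_zero.2 hd))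
  obtain ⟨v, hv0, hv⟩ := (Matrix.exists_mulVec_eq_zero_iff).2 hdet
  have heig : ∀ i, (S.map (algebraMap ℝ ℂ)).mulVec v i = z * v i := by
    intro i
    have := congrFun hv i
    rw [Algebra.algebraMap_eq_smul_one] at this
    rw [Matrix.sub_mulVec, Matrix.smul_mulVec, Matrix.one_mulVec] at this
    have h2 : (z • v) i - (S.map (algebraMap ℝ ℂ)).mulVec v i = 0 := this
    simp only [Pi.smul_apply, smul_eq_mul] at h2
    exact (sub_eq_zero.mp h2).symm
  refine ⟨fun i => ‖v i‖, fun i => norm_nonneg _, ?_, ?_⟩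
  · intro h
    apply hv0
    funext i
    have := congrFun h i
    simpa using this
  · intro i
    have hz2 : ‖z‖ * ‖v i‖
        = ‖(S.map (algebraMap ℝ ℂ)).mulVec v i‖ := by
      rw [heig i, norm_mul]
    have htri : ‖(S.map (algebraMap ℝ ℂ)).mulVec v i‖
        ≤ ∑ j, S i j * ‖v j‖ := by
      simp only [Matrix.mulVec, dotProduct, Matrix.map_apply]
      refine le_trans (norm_sum_le _ _) (le_of_eq ?_)
      refine Finset.sum_congr rfl fun j _ => ?_
      rw [norm_mul]
      congr 1
      simpa [Complex.norm_real] using abs_of_nonneg (hS i j)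
    rw [← habs] at *
    calc ‖z‖ * ‖v i‖
        = ‖(S.map (algebraMap ℝ ℂ)).mulVec v i‖ := hz2
      _ ≤ ∑ j, S i j * ‖v j‖ := htri
      _ = S.mulVec (fun j => ‖v j‖) i := by
          simp [Matrix.mulVec, dotProduct]

open scoped NNReal ENNReal

lemma MM.rowsum_le_nnnorm {R : Matrix (Fin n) (Fin n) ℝ} (hR : ∀ i j, 0 ≤ R i j) (i : Fin n) :
    ∑ j, R i j ≤ ((‖R.map (algebraMap ℝ ℂ)‖₊ : ℝ≥0) : ℝ) := by
  have h1 : (∑ j, ‖(R.map (algebraMap ℝ ℂ)) i j‖₊) ≤ ‖R.map (algebraMap ℝ ℂ)‖₊ := by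
    rw [Matrix.linfty_opNNNorm_def]
    exact Finset.le_sup (f := fun i => ∑ j, ‖(R.map (algebraMap ℝ ℂ)) i j‖₊) (Finset.mem_univ i)
  calc ∑ j, R i j = ((∑ j, ‖(R.map (algebraMap ℝ ℂ)) i j‖₊ : ℝ≥0) : ℝ) := by
        push_cast
        refine Finset.sum_congr rfl fun j _ => ?_
        simp [Matrix.map_apply, Complex.norm_real, Real.norm_eq_abs, abs_of_nonneg (hR i j)]
    _ ≤ _ := NNReal.coe_le_coe.2 h1

/-- Collatz–Wielandt type lower bound via Gelfand's formula. -/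
lemma MM.specRad_ge {S : Matrix (Fin n) (Fin n) ℝ} (hS : ∀ i j, 0 ≤ S i j)
    {r : ℝ} (hr : 0 ≤ r) {x : Fin n → ℝ} (hx : ∀ i, 0 ≤ x i) (hx0 : x ≠ 0)
    (hineq : ∀ i, r * x i ≤ S.mulVec x i) : r ≤ specRad S := by
  classical
  obtain ⟨i₀, hi₀⟩ : ∃ i, 0 < x i := by
    by_contra h
    push_neg at h
    exact hx0 (funext fun i => le_antisymm (h i) (hx i))
  set T : ℝ := ∑ j, x j with hT
  have hT0 : 0 < T := Finset.sum_pos' (fun j _ => hx j) ⟨i₀, Finset.mem_univ _, hi₀⟩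
  have hxT : ∀ j, x j ≤ T := fun j =>
    Finset.single_le_sum (fun j _ => hx j) (Finset.mem_univ j)
  -- iterated inequality
  have step1 : ∀ k : ℕ, ∀ i, r ^ k * x i ≤ (S ^ k).mulVec x i := by
    intro k
    induction k with
    | zero => intro i; simp [Matrix.one_mulVec]
    | succ k ih =>
      intro i
      have h1 : ∀ i, r * x i ≤ S.mulVec x i := hineq
      have h2 : (S ^ (k+1)).mulVec x i = (S ^ k).mulVec (S.mulVec x) i := by
        rw [Matrix.mulVec_mulVec, ← pow_succ]
      have h3 : (S ^ k).mulVec (fun j => r * x j) i ≤ (S ^ k).mulVec (S.mulVec x) i :=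
        MM.mulVec_mono (MM.pow_nonneg hS k) h1 i
      have h4 : (S ^ k).mulVec (fun j => r * x j) i = r * (S ^ k).mulVec x i := by
        have : (fun j => r * x j) = r • x := by funext j; simp [smul_eq_mul]
        rw [this, Matrix.mulVec_smul]
        simp [smul_eq_mul]
      have h5 : r ^ (k+1) * x i = r * (r ^ k * x i) := by ring
      rw [h2, h5]
      calc r * (r ^ k * x i) ≤ r * (S ^ k).mulVec x i :=
            mul_le_mul_of_nonneg_left (ih i) hr
        _ = (S ^ k).mulVec (fun j => r * x j) i := h4.symm
        _ ≤ _ := h3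
  -- norm bound
  have step2 : ∀ k : ℕ, r ^ k * x i₀ ≤ T * ((‖(S.map (algebraMap ℝ ℂ)) ^ k‖₊ : ℝ≥0) : ℝ) := by
    intro k
    have h1 : (S ^ k).mulVec x i₀ ≤ T * ((‖(S.map (algebraMap ℝ ℂ)) ^ k‖₊ : ℝ≥0) : ℝ) := by
      have h2 : (S ^ k).mulVec x i₀ ≤ ∑ j, (S ^ k) i₀ j * T := by
        simp only [Matrix.mulVec, dotProduct]
        exact Finset.sum_le_sum fun j _ =>
          mul_le_mul_of_nonneg_left (hxT j) (MM.pow_nonneg hS k i₀ j)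
      have h3 : ∑ j, (S ^ k) i₀ j * T = T * ∑ j, (S ^ k) i₀ j := by
        rw [Finset.mul_sum]; exact Finset.sum_congr rfl fun j _ => mul_comm _ _
      have h4 := MM.rowsum_le_nnnorm (MM.pow_nonneg hS k) i₀
      rw [MM.cmap_pow]
      calc (S ^ k).mulVec x i₀ ≤ T * ∑ j, (S ^ k) i₀ j := by rw [← h3]; exact h2
        _ ≤ _ := mul_le_mul_of_nonneg_left h4 hT0.le
    exact le_trans (step1 k i₀) h1
  -- Gelfand
  set c : ℝ := x i₀ / T with hc
  have hc0 : 0 < c := div_pos hi₀ hT0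
  have key : ∀ k : ℕ, ENNReal.ofReal (c * r ^ k) ≤ (‖(S.map (algebraMap ℝ ℂ)) ^ k‖₊ : ℝ≥0∞) := by
    intro k
    have h1 : c * r ^ k ≤ ((‖(S.map (algebraMap ℝ ℂ)) ^ k‖₊ : ℝ≥0) : ℝ) := by
      rw [hc, div_mul_eq_mul_div, div_le_iff₀ hT0]
      calc x i₀ * r ^ k = r ^ k * x i₀ := mul_comm _ _
        _ ≤ T * _ := step2 k
        _ = _ * T := mul_comm _ _
    calc ENNReal.ofReal (c * r ^ k) ≤ ENNReal.ofReal _ := ENNReal.ofReal_le_ofReal h1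
      _ = _ := ENNReal.ofReal_coe_nnreal
  have hglimit := spectrum.pow_nnnorm_pow_one_div_tendsto_nhds_spectralRadius
    (S.map (algebraMap ℝ ℂ))
  have hgbound : ∀ k : ℕ, 1 ≤ k →
      ENNReal.ofReal (Real.exp (Real.log c * (1 / (k:ℝ))) * r)
        ≤ (‖(S.map (algebraMap ℝ ℂ)) ^ k‖₊ : ℝ≥0∞) ^ (1 / (k:ℝ) : ℝ) := by
    intro k hk
    have hk0 : (k:ℝ) ≠ 0 := Nat.cast_ne_zero.2 (by omega)
    have hkpos : (0:ℝ) ≤ 1 / (k:ℝ) := by positivity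
    have h1 : (ENNReal.ofReal (c * r ^ k)) ^ (1 / (k:ℝ) : ℝ)
        ≤ (‖(S.map (algebraMap ℝ ℂ)) ^ k‖₊ : ℝ≥0∞) ^ (1 / (k:ℝ) : ℝ) :=
      ENNReal.rpow_le_rpow (key k) hkpos
    have h2 : (ENNReal.ofReal (c * r ^ k)) ^ (1 / (k:ℝ) : ℝ)
        = ENNReal.ofReal ((c * r ^ k) ^ (1 / (k:ℝ) : ℝ)) :=
      (ENNReal.ofReal_rpow_of_nonneg (by positivity) hkpos)
    have h3 : (c * r ^ k) ^ (1 / (k:ℝ) : ℝ) = Real.exp (Real.log c * (1 / (k:ℝ))) * r := by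
      rw [Real.mul_rpow hc0.le (by positivity)]
      congr 1
      · rw [Real.rpow_def_of_pos hc0]
      · rw [one_div, Real.pow_rpow_inv_natCast hr (by omega)]
    rw [← h3, ← h2]
    exact h1
  have hgtend : Tendsto (fun k : ℕ => ENNReal.ofReal (Real.exp (Real.log c * (1 / (k:ℝ))) * r))
      atTop (𝓝 (ENNReal.ofReal r)) := by
    have h1 : Tendsto (fun k : ℕ => Real.log c * (1 / (k:ℝ))) atTop (𝓝 0) := by
      have := tendsto_one_div_atTop_nhds_zero_nat.const_mul (Real.log c)
      simpa using this
    have h2 : Tendsto (fun k : ℕ => Real.exp (Real.log c * (1 / (k:ℝ))) * r) atTop (𝓝 r) := by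
      have h3 := (Real.continuous_exp.tendsto 0).comp h1
      have h4 := h3.mul_const r
      simpa using h4
    exact (ENNReal.continuous_ofReal.tendsto r).comp h2
  have hle : ENNReal.ofReal r ≤ spectralRadius ℂ (S.map (algebraMap ℝ ℂ)) := by
    refine le_of_tendsto_of_tendsto hgtend hglimit ?_
    filter_upwards [eventually_ge_atTop 1] with k hk
    exact hgbound k hk
  have hfinal := le_trans hle (MM.spectralRadius_le S)
  exact (ENNReal.ofReal_le_ofReal_iff (MM.specRad_nonneg S)).1 hfinal

/-- If `specRad S < θ` then there is a strictly positive vector `v` with `S v < θ v`. -/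
lemma MM.exists_pos_vec {S : Matrix (Fin n) (Fin n) ℝ} (hS : ∀ i j, 0 ≤ S i j)
    {θ : ℝ} (hθ : specRad S < θ) :
    ∃ v : Fin n → ℝ, (∀ i, 0 < v i) ∧ ∀ i, S.mulVec v i < θ * v i := by
  have hθ0 : 0 < θ := lt_of_le_of_lt (MM.specRad_nonneg S) hθ
  have hlt : spectralRadius ℂ (S.map (algebraMap ℝ ℂ)) < ENNReal.ofReal θ :=
    lt_of_le_of_lt (MM.spectralRadius_le S) ((ENNReal.ofReal_lt_ofReal_iff hθ0).2 hθ)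
  have hev := (spectrum.pow_nnnorm_pow_one_div_tendsto_nhds_spectralRadius
    (S.map (algebraMap ℝ ℂ))).eventually_lt_const hlt
  rw [Filter.eventually_atTop] at hev
  obtain ⟨N0, hN0⟩ := hev
  set K := N0 + 1 with hKdef
  have hfK := hN0 K (Nat.le_add_right N0 1)
  have hKne : (K:ℝ) ≠ 0 := Nat.cast_ne_zero.2 (by omega)
  have hKpos : (0:ℝ) < (K:ℝ) := by positivity
  have h1 : (‖(S.map (algebraMap ℝ ℂ)) ^ K‖₊ : ℝ≥0∞) < ENNReal.ofReal (θ ^ K) := by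
    have h2 := ENNReal.rpow_lt_rpow hfK hKpos
    have h3 : (((‖(S.map (algebraMap ℝ ℂ)) ^ K‖₊ : ℝ≥0∞)) ^ (1/(K:ℝ))) ^ ((K:ℝ))
        = (‖(S.map (algebraMap ℝ ℂ)) ^ K‖₊ : ℝ≥0∞) := by
      rw [← ENNReal.rpow_mul, one_div, inv_mul_cancel₀ hKne, ENNReal.rpow_one]
    rw [← h3]
    calc _ < (ENNReal.ofReal θ) ^ ((K:ℝ)) := h2
      _ = (ENNReal.ofReal θ) ^ (K:ℕ) := ENNReal.rpow_natCast _ K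
      _ = ENNReal.ofReal (θ ^ K) := (ENNReal.ofReal_pow hθ0.le K).symm
  have hrow : ∀ i, ∑ j, (S ^ K) i j < θ ^ K := by
    intro i
    have h4 := MM.rowsum_le_nnnorm (MM.pow_nonneg hS K) i
    have h5 : ((‖(S.map (algebraMap ℝ ℂ)) ^ K‖₊ : ℝ≥0) : ℝ) < θ ^ K := by
      have h6 := (ENNReal.lt_ofReal_iff_toReal_lt (ENNReal.coe_ne_top)).1 h1
      simpa using h6
    rw [← MM.cmap_pow] at h4
    exact lt_of_le_of_lt h4 h5
  -- inductive construction of the positive vector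
  have claim : ∀ m : ℕ, ∃ v : Fin n → ℝ, (∀ i, θ ^ m ≤ v i) ∧
      (θ • v - S.mulVec v
        = (fun _ => θ ^ (m+1)) - (S ^ (m+1)).mulVec (fun _ => 1)) := by
    intro m
    induction m with
    | zero =>
      refine ⟨fun _ => 1, fun i => by simp, ?_⟩
      funext i
      simp [pow_one]
    | succ m ih =>
      obtain ⟨v, hvb, hveq⟩ := ih
      have hv0 : ∀ j, 0 ≤ v j := fun j => le_trans (_root_.pow_nonneg hθ0.le m) (hvb j)
      refine ⟨(fun _ => θ ^ (m+1)) + S.mulVec v, ?_, ?_⟩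
      · intro i
        have := MM.mulVec_nonneg hS hv0 i
        simp only [Pi.add_apply]
        linarith
      · have hkey : θ • S.mulVec v - S.mulVec (S.mulVec v)
            = S.mulVec (fun _ => θ ^ (m+1)) - (S ^ (m+2)).mulVec (fun _ => 1) := by
          rw [← Matrix.mulVec_smul, ← Matrix.mulVec_sub, hveq, Matrix.mulVec_sub]
          congr 1
          rw [Matrix.mulVec_mulVec, ← pow_succ']
        funext i
        have h8 := congrFun hkey i
        simp only [Pi.sub_apply, Pi.smul_apply, smul_eq_mul] at h8
        have hp : θ * θ ^ (m+1) = θ ^ (m+1+1) := (pow_succ' θ (m+1)).symm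
        rw [Matrix.mulVec_add]
        simp only [Pi.add_apply, Pi.sub_apply, Pi.smul_apply, smul_eq_mul]
        rw [mul_add, hp]
        have hmm : (m + 1 + 1) = m + 2 := rfl
        rw [hmm]
        linarith
  obtain ⟨v, hvb, hveq⟩ := claim N0
  refine ⟨v, fun i => lt_of_lt_of_le (pow_pos hθ0 N0) (hvb i), fun i => ?_⟩
  have h9 := congrFun hveq i
  simp only [Pi.sub_apply, Pi.smul_apply, smul_eq_mul] at h9
  have h10 : (S ^ (N0+1)).mulVec (fun _ => 1) i = ∑ j, (S ^ (N0+1)) i j := by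
    simp [Matrix.mulVec, dotProduct]
  have h11 := hrow i
  rw [hKdef] at h11
  linarith [h9, h10 ▸ h11]

end Helpers

/-- Under (c1)–(c3), for every `t` with `0 < t < ρ(A,B)`, the matrix `tB − A`
is not an M-matrix. -/
theorem stmt_7 {n : ℕ} (A B : Matrix (Fin n) (Fin n) ℝ)
    (hc1 : ∀ i j, 0 ≤ A i j)
    (hc2 : ∀ i j, i ≠ j → B i j ≤ A i j)
    (hc3 : ∃ u : Fin n → ℝ, (∀ i, 0 < u i) ∧ ∀ i, 0 < (B - A).mulVec u i)
    (μ ρAB : ℝ) (hμ : μ = specRad ((B - A)⁻¹ * A)) (hρ : ρAB = μ / (1 + μ)) :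
    ∀ t : ℝ, 0 < t → t < ρAB → ¬ IsMMatrix (t • B - A) := by
  intro t ht htρ
  rintro ⟨q, P, hP, hXP, hPq⟩
  classical
  obtain ⟨u, hu, hMu⟩ := hc3
  set M : Matrix (Fin n) (Fin n) ℝ := B - A with hM
  set C : Matrix (Fin n) (Fin n) ℝ := M⁻¹ * A with hC
  -- dispose of the degenerate case n = 0
  rcases Nat.eq_zero_or_pos n with hn0 | hn
  · subst hn0
    have hspec : spectrum ℂ (C.map (algebraMap ℝ ℂ)) = ∅ := by
      ext z
      simp only [Set.mem_empty_iff_false, iff_false, spectrum.mem_iff, not_not]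
      exact isUnit_of_subsingleton _
    have hμ0 : μ = 0 := by
      rw [hμ]
      show sSup _ = 0
      rw [hspec]
      simp [Real.sSup_empty]
    rw [hρ, hμ0] at htρ
    norm_num at htρ
    linarith
  have hMoff : ∀ i j, i ≠ j → M i j ≤ 0 := fun i j hij => sub_nonpos.2 (hc2 i j hij)
  have hMdet : IsUnit M.det := MM.zdet hMoff hu hMu
  have hMinv : ∀ i j, 0 ≤ M⁻¹ i j := MM.zinv_nonneg hMoff hu hMu
  have hCnn : ∀ i j, 0 ≤ C i j := MM.mul_nonneg' hMinv hc1
  -- basic inequalities on t and μ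
  have hμ0 : 0 ≤ μ := by rw [hμ]; exact MM.specRad_nonneg C
  have h1μ : (0:ℝ) < 1 + μ := by linarith
  have htμ : t * (1 + μ) < μ := by
    rw [hρ] at htρ
    exact (lt_div_iff₀ h1μ).1 htρ
  have ht1 : t < 1 := by nlinarith
  have hδ : t < μ * (1 - t) := by nlinarith
  have hμpos : 0 < μ := by nlinarith
  have hq0 : 0 ≤ q := le_trans (MM.specRad_nonneg P) hPq
  have hXM : t • B - A = t • M - (1-t) • A := by
    rw [hM]
    ext i j
    simp only [Matrix.sub_apply, Matrix.smul_apply, smul_eq_mul]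
    ring
  -- weak Perron vector of C
  obtain ⟨xh, hxh0, hxhne, hxhP⟩ := MM.weakPerron hn hCnn
  have hxhμ : ∀ i, μ * xh i ≤ C.mulVec xh i := by
    intro i
    have := hxhP i
    rwa [← hμ] at this
  set b : Fin n → ℝ := M⁻¹.mulVec (C.mulVec xh) with hb
  have hCx0 : ∀ i, 0 ≤ C.mulVec xh i := MM.mulVec_nonneg hCnn hxh0
  have hb0 : ∀ i, 0 ≤ b i := MM.mulVec_nonneg hMinv hCx0
  set ρ' : ℝ := μ * (1 - t) / t with hρ'
  have hρ'1 : 1 < ρ' := (one_lt_div ht).2 hδ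
  set Kc : ℝ := (1 - t) / (t * t) with hKc
  have hKc0 : 0 ≤ Kc := div_nonneg (by linarith) (by positivity)
  -- choice of the perturbation parameter c
  have hune : (Finset.univ : Finset (Fin n)).Nonempty := by
    have : Nonempty (Fin n) := ⟨⟨0, hn⟩⟩
    exact Finset.univ_nonempty
  set c : ℝ := Finset.univ.inf' hune
    (fun i => if xh i = 0 then 1 else (ρ' - 1) * xh i / (Kc * b i + 1)) with hcdef
  have hc0 : 0 < c := by
    rw [hcdef, Finset.lt_inf'_iff]
    intro i _
    by_cases h0 : xh i = 0
    · rw [if_pos h0]; norm_num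
    · rw [if_neg h0]
      have hxi : 0 < xh i := lt_of_le_of_ne (hxh0 i) (Ne.symm h0)
      have hden : 0 < Kc * b i + 1 := by nlinarith [mul_nonneg hKc0 (hb0 i)]
      exact div_pos (mul_pos (by linarith) hxi) hden
  have hcle : ∀ i, xh i ≠ 0 → c * (Kc * b i + 1) ≤ (ρ' - 1) * xh i := by
    intro i hi
    have h := Finset.inf'_le (fun i => if xh i = 0 then 1
      else (ρ' - 1) * xh i / (Kc * b i + 1)) (Finset.mem_univ i)
    rw [if_neg hi] at h
    have hden : 0 < Kc * b i + 1 := by nlinarith [mul_nonneg hKc0 (hb0 i)]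
    rw [← hcdef] at h
    calc c * (Kc * b i + 1) ≤ ((ρ' - 1) * xh i / (Kc * b i + 1)) * (Kc * b i + 1) :=
          mul_le_mul_of_nonneg_right h hden.le
      _ = (ρ' - 1) * xh i := by field_simp
  -- the matrix Nc = tM + cI
  set Nc : Matrix (Fin n) (Fin n) ℝ := t • M + c • (1 : Matrix (Fin n) (Fin n) ℝ) with hNc
  have hNcoff : ∀ i j, i ≠ j → Nc i j ≤ 0 := by
    intro i j hij
    rw [hNc]
    simp only [Matrix.add_apply, Matrix.smul_apply, Matrix.one_apply_ne hij, smul_eq_mul,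
      mul_zero, add_zero]
    exact mul_nonpos_of_nonneg_of_nonpos ht.le (hMoff i j hij)
  have hNcu : ∀ i, 0 < Nc.mulVec u i := by
    intro i
    rw [hNc, Matrix.add_mulVec, Matrix.smul_mulVec, Matrix.smul_mulVec,
      Matrix.one_mulVec]
    simp only [Pi.add_apply, Pi.smul_apply, smul_eq_mul]
    exact add_pos (mul_pos ht (hMu i)) (mul_pos hc0 (hu i))
  have hNcdet := MM.zdet hNcoff hu hNcu
  have hNcinv := MM.zinv_nonneg hNcoff hu hNcu
  -- the matrix Xc = (tB - A) + cI
  set Xc : Matrix (Fin n) (Fin n) ℝ :=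
    (t • B - A) + c • (1 : Matrix (Fin n) (Fin n) ℝ) with hXc
  have hXcP : Xc = (q + c) • (1 : Matrix (Fin n) (Fin n) ℝ) - P := by
    rw [hXc, hXP]
    ext i j
    simp only [Matrix.add_apply, Matrix.sub_apply, Matrix.smul_apply, smul_eq_mul]
    ring
  have hXcoff : ∀ i j, i ≠ j → Xc i j ≤ 0 := by
    intro i j hij
    rw [hXcP]
    simp only [Matrix.sub_apply, Matrix.smul_apply, Matrix.one_apply_ne hij, smul_eq_mul,
      mul_zero, zero_sub]
    exact neg_nonpos.2 (hP i j)
  obtain ⟨v, hv0, hv⟩ := MM.exists_pos_vec hP (lt_of_le_of_lt hPq (lt_add_of_pos_right q hc0))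
  have hXcv : ∀ i, 0 < Xc.mulVec v i := by
    intro i
    rw [hXcP, Matrix.sub_mulVec, Matrix.smul_mulVec, Matrix.one_mulVec]
    simp only [Pi.sub_apply, Pi.smul_apply, smul_eq_mul]
    linarith [hv i]
  have hXcdet := MM.zdet hXcoff hv0 hXcv
  have hXcinv := MM.zinv_nonneg hXcoff hv0 hXcv
  -- the iteration matrix Hc
  set Hc : Matrix (Fin n) (Fin n) ℝ := Nc⁻¹ * ((1 - t) • A) with hHc
  have hAt : ∀ i j, 0 ≤ ((1 - t) • A) i j := by
    intro i j
    simp only [Matrix.smul_apply, smul_eq_mul]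
    exact mul_nonneg (by linarith) (hc1 i j)
  have hHcnn : ∀ i j, 0 ≤ Hc i j := MM.mul_nonneg' hNcinv hAt
  have hXcNc : Xc = Nc - (1 - t) • A := by
    rw [hXc, hXM, hNc]
    ext i j
    simp only [Matrix.add_apply, Matrix.sub_apply, Matrix.smul_apply, smul_eq_mul]
    ring
  -- Claim 1 : specRad Hc < 1 (from the M-matrix assumption)
  have claim1 : specRad Hc < 1 := by
    by_contra hge
    push_neg at hge
    obtain ⟨x, hx0, hxne, hxP⟩ := MM.weakPerron hn hHcnn
    have hx1 : ∀ i, x i ≤ Hc.mulVec x i := fun i =>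
      le_trans (le_mul_of_one_le_left (hx0 i) hge) (hxP i)
    have hNcXc : Nc⁻¹ * Xc = 1 - Hc := by
      rw [hXcNc, Matrix.mul_sub, Matrix.nonsing_inv_mul _ hNcdet, hHc]
    have hw : ∀ i, Nc⁻¹.mulVec (Xc.mulVec x) i ≤ 0 := by
      intro i
      rw [Matrix.mulVec_mulVec, hNcXc, Matrix.sub_mulVec, Matrix.one_mulVec]
      simp only [Pi.sub_apply]
      linarith [hx1 i]
    have hXN2 : Xc⁻¹ * Nc = 1 + Xc⁻¹ * ((1-t) • A) := by
      have : Nc = Xc + (1-t) • A := by rw [hXcNc, sub_add_cancel]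
      rw [this, Matrix.mul_add, Matrix.nonsing_inv_mul _ hXcdet]
    have hXN2nn : ∀ i j, 0 ≤ (Xc⁻¹ * Nc) i j := by
      intro i j
      rw [hXN2]
      have h2 := MM.mul_nonneg' hXcinv hAt i j
      rcases eq_or_ne i j with rfl | hij
      · simp only [Matrix.add_apply, Matrix.one_apply_eq]
        linarith
      · simp only [Matrix.add_apply, Matrix.one_apply_ne hij]
        linarith
    have hxle : ∀ i, x i ≤ 0 := by
      have hE : ((Xc⁻¹ * Nc) * Nc⁻¹) * Xc = 1 := by
        rw [Matrix.mul_assoc Xc⁻¹ Nc Nc⁻¹, Matrix.mul_nonsing_inv _ hNcdet,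
          Matrix.mul_one, Matrix.nonsing_inv_mul _ hXcdet]
      have hxeq : x = (Xc⁻¹ * Nc).mulVec (Nc⁻¹.mulVec (Xc.mulVec x)) := by
        rw [Matrix.mulVec_mulVec, Matrix.mulVec_mulVec, hE, Matrix.one_mulVec]
      intro i
      rw [hxeq]
      exact MM.mulVec_nonpos hXN2nn hw i
    exact hxne (funext fun i => le_antisymm (hxle i) (hx0 i))
  -- Claim 2 : 1 ≤ specRad Hc (from t < ρ(A,B))
  have hid : t⁻¹ • M⁻¹ = Nc⁻¹ + (c/t) • (Nc⁻¹ * M⁻¹) := by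
    have h1 : Nc * (t⁻¹ • M⁻¹) = 1 + (c/t) • M⁻¹ := by
      calc Nc * (t⁻¹ • M⁻¹) = t⁻¹ • (Nc * M⁻¹) := Matrix.mul_smul Nc t⁻¹ M⁻¹
        _ = t⁻¹ • (t • (M * M⁻¹) + c • M⁻¹) := by
            rw [hNc, Matrix.add_mul, Matrix.smul_mul, Matrix.smul_mul, Matrix.one_mul]
        _ = t⁻¹ • (t • (1 : Matrix (Fin n) (Fin n) ℝ) + c • M⁻¹) := by
            rw [Matrix.mul_nonsing_inv _ hMdet]
        _ = 1 + (c/t) • M⁻¹ := by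
            rw [smul_add, smul_smul, smul_smul, inv_mul_cancel₀ ht.ne', one_smul]
            congr 1
            rw [div_eq_mul_inv, mul_comm]
    calc t⁻¹ • M⁻¹ = (Nc⁻¹ * Nc) * (t⁻¹ • M⁻¹) := by
          rw [Matrix.nonsing_inv_mul _ hNcdet, Matrix.one_mul]
      _ = Nc⁻¹ * (Nc * (t⁻¹ • M⁻¹)) := by rw [Matrix.mul_assoc]
      _ = Nc⁻¹ * (1 + (c/t) • M⁻¹) := by rw [h1]
      _ = Nc⁻¹ + (c/t) • (Nc⁻¹ * M⁻¹) := by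
          rw [Matrix.mul_add, Matrix.mul_one, Matrix.mul_smul]
  have hct0 : 0 ≤ c / t := le_of_lt (div_pos hc0 ht)
  have hNcleM : ∀ i j, Nc⁻¹ i j ≤ (t⁻¹ • M⁻¹) i j := by
    intro i j
    have h2 := congrFun (congrFun hid i) j
    simp only [Matrix.add_apply, Matrix.smul_apply, smul_eq_mul] at h2 ⊢
    have h3 : 0 ≤ (c/t) * (Nc⁻¹ * M⁻¹) i j :=
      mul_nonneg hct0 (MM.mul_nonneg' hNcinv hMinv i j)
    linarith
  have hkey : ∀ i, ρ' * xh i - c * Kc * b i ≤ Hc.mulVec xh i := by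
    intro i
    have hHx : Hc.mulVec xh i = (1-t) * (Nc⁻¹.mulVec (A.mulVec xh)) i := by
      rw [hHc, ← Matrix.mulVec_mulVec, Matrix.smul_mulVec, Matrix.mulVec_smul]
      simp only [Pi.smul_apply, smul_eq_mul]
    have hNA : Nc⁻¹.mulVec (A.mulVec xh) i
        = t⁻¹ * (C.mulVec xh) i - (c/t) * (Nc⁻¹.mulVec (C.mulVec xh)) i := by
      have h4 : Nc⁻¹ * A = t⁻¹ • C - (c/t) • (Nc⁻¹ * C) := by
        have h5 : (t⁻¹ • M⁻¹) * A = (Nc⁻¹ + (c/t) • (Nc⁻¹ * M⁻¹)) * A := by rw [hid]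
        rw [Matrix.smul_mul, Matrix.add_mul, Matrix.smul_mul, Matrix.mul_assoc] at h5
        rw [← hC] at h5
        exact eq_sub_of_add_eq h5.symm
      rw [Matrix.mulVec_mulVec, h4, Matrix.sub_mulVec, Matrix.smul_mulVec,
        Matrix.smul_mulVec, ← Matrix.mulVec_mulVec]
      simp only [Pi.sub_apply, Pi.smul_apply, smul_eq_mul]
      rw [Matrix.mulVec_mulVec xh M⁻¹ A, ← hC, Matrix.mulVec_mulVec xh Nc⁻¹ C]
    have hbnd : Nc⁻¹.mulVec (C.mulVec xh) i ≤ t⁻¹ * b i := by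
      have h6 := MM.mulVec_le_mulVec (fun i' j' => hNcleM i' j') hCx0 i
      calc Nc⁻¹.mulVec (C.mulVec xh) i
          ≤ (t⁻¹ • M⁻¹).mulVec (C.mulVec xh) i := h6
        _ = t⁻¹ * b i := by
            rw [hb, Matrix.smul_mulVec]
            simp only [Pi.smul_apply, smul_eq_mul]
    have hμx : t⁻¹ * (C.mulVec xh) i ≥ t⁻¹ * (μ * xh i) :=
      mul_le_mul_of_nonneg_left (hxhμ i) (by positivity)
    rw [hHx, hNA]
    have ht1' : 0 ≤ 1 - t := by linarith
    have step : t⁻¹ * (C.mulVec xh) i - (c/t) * (Nc⁻¹.mulVec (C.mulVec xh)) i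
        ≥ t⁻¹ * (μ * xh i) - (c/t) * (t⁻¹ * b i) := by
      have h7 : (c/t) * (Nc⁻¹.mulVec (C.mulVec xh)) i ≤ (c/t) * (t⁻¹ * b i) :=
        mul_le_mul_of_nonneg_left hbnd hct0
      linarith
    calc ρ' * xh i - c * Kc * b i
        = (1-t) * (t⁻¹ * (μ * xh i) - (c/t) * (t⁻¹ * b i)) := by
          rw [hρ', hKc]
          field_simp
      _ ≤ (1-t) * (t⁻¹ * (C.mulVec xh) i - (c/t) * (Nc⁻¹.mulVec (C.mulVec xh)) i) :=
          mul_le_mul_of_nonneg_left step ht1'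
  have hone : ∀ i, 1 * xh i ≤ Hc.mulVec xh i := by
    intro i
    rcases eq_or_ne (xh i) 0 with h0 | h0
    · rw [h0, mul_zero]
      exact MM.mulVec_nonneg hHcnn hxh0 i
    · have hxi : 0 < xh i := lt_of_le_of_ne (hxh0 i) (Ne.symm h0)
      have h2 := hcle i h0
      have h3 : c * Kc * b i ≤ c * (Kc * b i + 1) := by nlinarith [mul_nonneg hKc0 (hb0 i)]
      have := hkey i
      rw [one_mul]
      linarith
  have claim2 : (1:ℝ) ≤ specRad Hc := MM.specRad_ge hHcnn zero_le_one hxh0 hxhne hone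
  linarith
end

section
/- Let A, B be real n×n matrices satisfying: (c1) A is entrywise nonnegative and (c2) B_{ij} ≤ A_{ij} for all i ≠ j. Then for every t with 0 < t < 1, the classes of the digraph G(tB − A) coincide with the classes of the digraph G(A) ∪ G(B); that is, the communication equivalence relations of the two digraphs are equal. -/
open Matrix


/-- Edge relation of the digraph `G(X)` of a matrix `X`: edge `(j,k)` iff
`X_{jk} ≠ 0`. -/
def edgeRel {n : ℕ} (X : Matrix (Fin n) (Fin n) ℝ) (j k : Fin n) : Prop :=
  X j k ≠ 0

/-- `j` has access to `k` in the digraph with edge relation `Γ`: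
`j = k` or there is a directed path from `j` to `k`. -/
def Access {n : ℕ} (Γ : Fin n → Fin n → Prop) (j k : Fin n) : Prop :=
  Relation.ReflTransGen Γ j k

/-- `j` and `k` communicate: each has access to the other. -/
def Communicate {n : ℕ} (Γ : Fin n → Fin n → Prop) (j k : Fin n) : Prop :=
  Access Γ j k ∧ Access Γ k j

/-- `C` is a class of the digraph with edge relation `Γ`: an equivalence class
of the communication relation. -/
def IsClass {n : ℕ} (Γ : Fin n → Fin n → Prop) (C : Finset (Fin n)) : Prop :=
  ∃ v : Fin n, ∀ w, w ∈ C ↔ Communicate Γ v w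

/-- Self-loops don't matter for access: if two edge relations agree on all
pairs of distinct vertices, access in one implies access in the other. -/
lemma access_mono_offdiag {n : ℕ} {Γ Γ' : Fin n → Fin n → Prop}
    (h : ∀ a b, a ≠ b → Γ a b → Γ' a b) :
    ∀ j k, Access Γ j k → Access Γ' j k := by
  intro j k hjk
  induction hjk with
  | refl => exact Relation.ReflTransGen.refl
  | @tail b c _ hstep ih =>
    by_cases hbc : b = c
    · exact hbc ▸ ih
    · exact ih.tail (h b c hbc hstep)

/-- Under (c1) and (c2), for `0 < t < 1` the classes of `G(tB − A)` coincide
with those of `G(A) ∪ G(B)`: the communication relations are equal. -/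
theorem stmt_11 {n : ℕ} (A B : Matrix (Fin n) (Fin n) ℝ)
    (hc1 : ∀ i j, 0 ≤ A i j)
    (hc2 : ∀ i j, i ≠ j → B i j ≤ A i j) :
    ∀ t : ℝ, 0 < t → t < 1 → ∀ j k : Fin n,
      Communicate (edgeRel (t • B - A)) j k ↔
      Communicate (fun a b => edgeRel A a b ∨ edgeRel B a b) j k := by
  intro t ht ht1 j k
  have key : ∀ a b : Fin n, a ≠ b →
      ((t • B - A) a b ≠ 0 ↔ (A a b ≠ 0 ∨ B a b ≠ 0)) := by
    intro a b hab
    have hent : (t • B - A) a b = t * B a b - A a b := by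
      simp [Matrix.sub_apply, Matrix.smul_apply, smul_eq_mul]
    rw [hent]
    constructor
    · intro h
      by_contra hcon
      push_neg at hcon
      rw [hcon.1, hcon.2] at h
      simp at h
    · intro h hzero
      have hA0 : 0 ≤ A a b := hc1 a b
      have hBA : B a b ≤ A a b := hc2 a b hab
      -- A a b = t * B a b ≤ t * A a b ⇒ A a b (1 - t) ≤ 0 ⇒ A a b = 0
      have hAeq : A a b = t * B a b := by linarith
      have hAz : A a b = 0 := by nlinarith
      have hBz : B a b = 0 := by
        have : t * B a b = 0 := by linarith
        rcases mul_eq_zero.mp this with h' | h'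
        · exact absurd h' (ne_of_gt ht)
        · exact h'
      rcases h with h | h
      · exact h hAz
      · exact h hBz
  constructor
  · rintro ⟨h1, h2⟩
    exact ⟨access_mono_offdiag (fun a b hab hΓ => (key a b hab).mp hΓ) j k h1,
           access_mono_offdiag (fun a b hab hΓ => (key a b hab).mp hΓ) k j h2⟩
  · rintro ⟨h1, h2⟩
    exact ⟨access_mono_offdiag (fun a b hab hΓ => (key a b hab).mpr hΓ) j k h1,
           access_mono_offdiag (fun a b hab hΓ => (key a b hab).mpr hΓ) k j h2⟩
end
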